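/- arXiv:0803.3335 — 3 statements merged into one kernel-verified Lean document; each statement's English description precedes it below -/
import Mathlib

section
/- A domino tableau T of rank r is somewhat special (i.e., all its non-core open cycles are boxed) if and only if all corners of T are empty; in particular, being somewhat special depends only on the shape of T. -/
/-- A standard domino tableau of rank `r` with `n` dominoes (1-indexed squares
`S_{i,j}`, `i,j ≥ 1`): the staircase core `{S_{i,j} : i+j < r+2}` is labeled `0`,
each label `1, …, n` occupies exactly two adjacent squares, labels increase
weakly along rows and columns, and the underlying shape is a Young diagram. -/
structure SDT (r n : ℕ) where
  cells : Finset (ℕ × ℕ)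
  lab : ℕ × ℕ → ℕ
  lab_outside : ∀ c, c ∉ cells → lab c = 0
  pos_cells : ∀ c ∈ cells, 1 ≤ c.1 ∧ 1 ≤ c.2
  young_row : ∀ i j : ℕ, (i, j + 1) ∈ cells → 1 ≤ j → (i, j) ∈ cells
  young_col : ∀ i j : ℕ, (i + 1, j) ∈ cells → 1 ≤ i → (i, j) ∈ cells
  core_mem : ∀ i j : ℕ, 1 ≤ i → 1 ≤ j → i + j < r + 2 → (i, j) ∈ cells
  core_zero : ∀ c ∈ cells, (lab c = 0 ↔ c.1 + c.2 < r + 2)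
  lab_le : ∀ c ∈ cells, lab c ≤ n
  domino : ∀ k : ℕ, 1 ≤ k → k ≤ n → ∃ a b : ℕ × ℕ, a ∈ cells ∧ b ∈ cells ∧
    (b = (a.1 + 1, a.2) ∨ b = (a.1, a.2 + 1)) ∧ lab a = k ∧ lab b = k ∧
    ∀ c ∈ cells, lab c = k → c = a ∨ c = b
  row_mono : ∀ i j : ℕ, (i, j) ∈ cells → (i, j + 1) ∈ cells →
    lab (i, j) ≤ lab (i, j + 1)
  col_mono : ∀ i j : ℕ, (i, j) ∈ cells → (i + 1, j) ∈ cells →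
    lab (i, j) ≤ lab (i + 1, j)

/-- The support of the domino labeled `k` in `T`. -/
def SDT.supp {r n : ℕ} (T : SDT r n) (k : ℕ) : Finset (ℕ × ℕ) :=
  T.cells.filter (fun c => T.lab c = k)

/-- A square `S_{i,j}` is fixed if `i + j` has the opposite parity to `r`. -/
def FixedSq (r : ℕ) (c : ℕ × ℕ) : Prop := (c.1 + c.2) % 2 ≠ r % 2

/-- A square is variable if it is not fixed, i.e. `i + j ≡ r (mod 2)`. -/
def VariableSq (r : ℕ) (c : ℕ × ℕ) : Prop := (c.1 + c.2) % 2 = r % 2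

/-- A variable square in an odd row is of type `X`. -/
def TypeX (r : ℕ) (c : ℕ × ℕ) : Prop := VariableSq r c ∧ c.1 % 2 = 1

/-- Extended label: `0` on squares with a vanishing coordinate (i.e. `i ≤ 0` or
`j ≤ 0`), `∞` on positive squares outside `T`, and the label of `T` otherwise. -/
def SDT.labE {r n : ℕ} (T : SDT r n) (c : ℕ × ℕ) : ℕ∞ :=
  if c.1 = 0 ∨ c.2 = 0 then 0 else if c ∈ T.cells then (T.lab c : ℕ∞) else ⊤

/-- Garfinkle's `D'(k,T)`: `s` is the support of the image of the domino labeled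
`k` under moving through, defined by the case analysis on the position of the
fixed square of the domino. -/
def IsSuppD' {r n : ℕ} (T : SDT r n) (k : ℕ) (s : Finset (ℕ × ℕ)) : Prop :=
  ∃ i j : ℕ, FixedSq r (i, j) ∧
    (((T.supp k = {(i, j), (i + 1, j)} ∨ T.supp k = {(i, j - 1), (i, j)}) ∧
        (((k : ℕ∞) < T.labE (i - 1, j + 1) ∧ s = {(i, j), (i - 1, j)}) ∨
         (T.labE (i - 1, j + 1) < (k : ℕ∞) ∧ s = {(i, j), (i, j + 1)}))) ∨
     ((T.supp k = {(i, j), (i - 1, j)} ∨ T.supp k = {(i, j + 1), (i, j)}) ∧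
        (((k : ℕ∞) < T.labE (i + 1, j - 1) ∧ s = {(i, j), (i, j - 1)}) ∨
         (T.labE (i + 1, j - 1) < (k : ℕ∞) ∧ s = {(i, j), (i + 1, j)}))))

open Classical in
/-- The support of `D'(k,T)`. -/
noncomputable def suppD' {r n : ℕ} (T : SDT r n) (k : ℕ) : Finset (ℕ × ℕ) :=
  if h : ∃ s, IsSuppD' T k s then h.choose else ∅

/-- One step of the relation generating the cycle: `l` and `m` interact if
`supp D(l) ∩ supp D'(m) ≠ ∅` or `supp D'(l) ∩ supp D(m) ≠ ∅`. -/
noncomputable def cycStep {r n : ℕ} (T : SDT r n) (m l : ℕ) : Prop :=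
  (T.supp l ∩ suppD' T m).Nonempty ∨ (suppD' T l ∩ T.supp m).Nonempty

/-- The cycle `c(k,T)` through `k`: all labels of `T` reachable from `k` by the
interaction relation. -/
noncomputable def cyc {r n : ℕ} (T : SDT r n) (k : ℕ) : Set ℕ :=
  {l | 1 ≤ l ∧ l ≤ n ∧ Relation.ReflTransGen (cycStep T) k l}

/-- `T'` is obtained from `T` by moving through the set of labels `c`: dominoes
in `c` move to their `D'` positions, all others stay. -/
noncomputable def IsMT {r n : ℕ} (T T' : SDT r n) (c : Set ℕ) : Prop :=
  (∀ l ∈ c, T'.supp l = suppD' T l) ∧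
  ∀ l : ℕ, 1 ≤ l → l ≤ n → l ∉ c → T'.supp l = T.supp l

/-- `c` is a cycle of `T`. -/
noncomputable def IsCycle {r n : ℕ} (T : SDT r n) (c : Set ℕ) : Prop :=
  ∃ k : ℕ, 1 ≤ k ∧ k ≤ n ∧ c = cyc T k

/-- `c` is a non-core open cycle of `T`: moving through it yields a rank-`r`
tableau (so the core is unchanged) of a different shape. -/
noncomputable def NonCoreOpen {r n : ℕ} (T : SDT r n) (c : Set ℕ) : Prop :=
  IsCycle T c ∧ ∃ T' : SDT r n, IsMT T T' c ∧ T'.cells ≠ T.cells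

/-- A set of squares is boxed if it is contained in a block
`{S_{i,j}, S_{i+1,j}, S_{i,j+1}, S_{i+1,j+1}}` with `S_{i,j}` of type `X`. -/
def BoxedSet (r : ℕ) (s : Finset (ℕ × ℕ)) : Prop :=
  ∃ i j : ℕ, TypeX r (i, j) ∧
    ↑s ⊆ ({(i, j), (i + 1, j), (i, j + 1), (i + 1, j + 1)} : Set (ℕ × ℕ))

/-- A domino tableau is somewhat special if all its non-core open cycles are
boxed. -/
noncomputable def SomewhatSpecial {r n : ℕ} (T : SDT r n) : Prop :=
  ∀ c, NonCoreOpen T c → ∀ l ∈ c, BoxedSet r (T.supp l)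

/-- A corner of `T`: a square `S_{i,j}` of type `X` with neither `S_{i,j+1}` nor
`S_{i+1,j}` in `T`, and either both `S_{i-1,j}` and `S_{i,j-1}` in `T`, or
`S_{i-1,j} ∈ T` and `j = 1`, or `S_{i,j-1} ∈ T` and `i = 1`. -/
def IsTabCorner {r n : ℕ} (T : SDT r n) (i j : ℕ) : Prop :=
  1 ≤ i ∧ 1 ≤ j ∧ TypeX r (i, j) ∧
    (i, j + 1) ∉ T.cells ∧ (i + 1, j) ∉ T.cells ∧
    (((i - 1, j) ∈ T.cells ∧ (i, j - 1) ∈ T.cells) ∨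
     ((i - 1, j) ∈ T.cells ∧ j = 1) ∨ ((i, j - 1) ∈ T.cells ∧ i = 1))

open Classical

namespace SDT

variable {r n : ℕ} (T : SDT r n)

instance (r : ℕ) (c : ℕ × ℕ) : Decidable (FixedSq r c) :=
  decidable_of_iff ((c.1 + c.2) % 2 ≠ r % 2) Iff.rfl

lemma not_fixed_iff (c : ℕ × ℕ) : ¬ FixedSq r c ↔ VariableSq r c := by
  unfold FixedSq VariableSq; tauto

lemma not_var_of_fixed {c : ℕ × ℕ} (h : FixedSq r c) : ¬ VariableSq r c := by
  unfold FixedSq VariableSq at *; tauto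

/-- The spec of the pair of squares of domino `k`. -/
def dominoSpec (k : ℕ) (p : (ℕ × ℕ) × (ℕ × ℕ)) : Prop :=
  p.1 ∈ T.cells ∧ p.2 ∈ T.cells ∧
    (p.2 = (p.1.1 + 1, p.1.2) ∨ p.2 = (p.1.1, p.1.2 + 1)) ∧
    T.lab p.1 = k ∧ T.lab p.2 = k ∧
    ∀ c ∈ T.cells, T.lab c = k → c = p.1 ∨ c = p.2

noncomputable def dpair (k : ℕ) : (ℕ × ℕ) × (ℕ × ℕ) :=
  if h : ∃ p, T.dominoSpec k p then h.choose else ((0,0),(0,0))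

lemma dpair_spec {k : ℕ} (h1 : 1 ≤ k) (h2 : k ≤ n) : T.dominoSpec k (T.dpair k) := by
  obtain ⟨a, b, ha, hb, hadj, hla, hlb, hu⟩ := T.domino k h1 h2
  have h : ∃ p, T.dominoSpec k p := ⟨(a, b), ha, hb, hadj, hla, hlb, hu⟩
  rw [dpair, dif_pos h]
  exact h.choose_spec

/-- The fixed square of domino `k`. -/
noncomputable def Fsq (k : ℕ) : ℕ × ℕ :=
  if FixedSq r (T.dpair k).1 then (T.dpair k).1 else (T.dpair k).2

/-- The variable square of domino `k`. -/
noncomputable def Vsq (k : ℕ) : ℕ × ℕ :=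
  if FixedSq r (T.dpair k).1 then (T.dpair k).2 else (T.dpair k).1

/-- adjacency of V to F : V below F, V right of F, V above F, V left of F -/
def adjFV (k : ℕ) : Prop :=
  T.Vsq k = ((T.Fsq k).1 + 1, (T.Fsq k).2) ∨ T.Vsq k = ((T.Fsq k).1, (T.Fsq k).2 + 1) ∨
  T.Fsq k = ((T.Vsq k).1 + 1, (T.Vsq k).2) ∨ T.Fsq k = ((T.Vsq k).1, (T.Vsq k).2 + 1)

lemma FV_spec {k : ℕ} (h1 : 1 ≤ k) (h2 : k ≤ n) :
    T.Fsq k ∈ T.cells ∧ T.Vsq k ∈ T.cells ∧ T.lab (T.Fsq k) = k ∧ T.lab (T.Vsq k) = k ∧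
    FixedSq r (T.Fsq k) ∧ VariableSq r (T.Vsq k) ∧ T.adjFV k ∧
    (∀ c ∈ T.cells, T.lab c = k → c = T.Fsq k ∨ c = T.Vsq k) := by
  obtain ⟨ha, hb, hadj, hla, hlb, hu⟩ := T.dpair_spec h1 h2
  have hsum : (T.dpair k).2.1 + (T.dpair k).2.2 = (T.dpair k).1.1 + (T.dpair k).1.2 + 1 := by
    rcases hadj with h | h <;> rw [h] <;> simp <;> omega
  by_cases hf : FixedSq r (T.dpair k).1
  · have hF : T.Fsq k = (T.dpair k).1 := by unfold Fsq; rw [if_pos hf]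
    have hV : T.Vsq k = (T.dpair k).2 := by unfold Vsq; rw [if_pos hf]
    have hvar : VariableSq r (T.dpair k).2 := by
      unfold FixedSq at hf; unfold VariableSq; omega
    refine ⟨hF ▸ ha, hV ▸ hb, hF ▸ hla, hV ▸ hlb, hF ▸ hf, hV ▸ hvar, ?_, ?_⟩
    · unfold adjFV; rw [hF, hV]; tauto
    · intro c hc hlc; rcases hu c hc hlc with h | h
      · exact Or.inl (by rw [hF, h])
      · exact Or.inr (by rw [hV, h])
  · have hF : T.Fsq k = (T.dpair k).2 := by unfold Fsq; rw [if_neg hf]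
    have hV : T.Vsq k = (T.dpair k).1 := by unfold Vsq; rw [if_neg hf]
    rw [not_fixed_iff] at hf
    have hfix : FixedSq r (T.dpair k).2 := by
      unfold VariableSq at hf; unfold FixedSq; omega
    refine ⟨hF ▸ hb, hV ▸ ha, hF ▸ hlb, hV ▸ hla, hF ▸ hfix, hV ▸ hf, ?_, ?_⟩
    · unfold adjFV; rw [hF, hV]; tauto
    · intro c hc hlc; rcases hu c hc hlc with h | h
      · exact Or.inr (by rw [hV, h])
      · exact Or.inl (by rw [hF, h])

lemma F_ne_V {k : ℕ} (h1 : 1 ≤ k) (h2 : k ≤ n) : T.Fsq k ≠ T.Vsq k := by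
  obtain ⟨-, -, -, -, hF, hV, -, -⟩ := T.FV_spec h1 h2
  intro h; rw [h] at hF; exact not_var_of_fixed hF hV

lemma supp_eq {k : ℕ} (h1 : 1 ≤ k) (h2 : k ≤ n) :
    T.supp k = {T.Fsq k, T.Vsq k} := by
  obtain ⟨hF, hV, hlF, hlV, -, -, -, hu⟩ := T.FV_spec h1 h2
  ext z
  simp only [supp, Finset.mem_filter, Finset.mem_insert, Finset.mem_singleton]
  constructor
  · rintro ⟨hz, hlz⟩; exact hu z hz hlz
  · rintro (rfl | rfl)
    · exact ⟨hF, hlF⟩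
    · exact ⟨hV, hlV⟩

lemma eq_V_of_var {k : ℕ} (h1 : 1 ≤ k) (h2 : k ≤ n) {z : ℕ × ℕ}
    (hz : z ∈ T.cells) (hlz : T.lab z = k) (hvar : VariableSq r z) : z = T.Vsq k := by
  obtain ⟨-, -, -, -, hF, -, -, hu⟩ := T.FV_spec h1 h2
  rcases hu z hz hlz with h | h
  · exact absurd hvar (h ▸ not_var_of_fixed hF)
  · exact h

lemma labE_eq_lab {z : ℕ × ℕ} (hz : z ∈ T.cells) : T.labE z = (T.lab z : ℕ∞) := by
  obtain ⟨h1, h2⟩ := T.pos_cells z hz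
  rw [labE, if_neg (by omega), if_pos hz]

lemma labE_lt_top {z : ℕ × ℕ} (h : T.labE z ≠ ⊤) :
    z.1 = 0 ∨ z.2 = 0 ∨ z ∈ T.cells := by
  rw [labE] at h
  by_cases h0 : z.1 = 0 ∨ z.2 = 0
  · tauto
  · rw [if_neg h0] at h
    by_cases hz : z ∈ T.cells
    · tauto
    · rw [if_neg hz] at h; exact absurd rfl h

lemma labE_zero_left (j : ℕ) : T.labE (0, j) = 0 := by rw [labE, if_pos]; left; rfl

lemma labE_zero_right (i : ℕ) : T.labE (i, 0) = 0 := by rw [labE, if_pos]; right; rfl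

lemma labE_row_mono (i j : ℕ) : T.labE (i, j) ≤ T.labE (i, j + 1) := by
  by_cases h0 : i = 0 ∨ j = 0
  · rw [labE, if_pos h0]; exact zero_le
  · push_neg at h0
    by_cases hz : (i, j) ∈ T.cells
    · rw [T.labE_eq_lab hz]
      by_cases hz' : (i, j + 1) ∈ T.cells
      · rw [T.labE_eq_lab hz']
        exact_mod_cast T.row_mono i j hz hz'
      · rw [labE, if_neg (by omega), if_neg hz']; exact le_top
    · have hz' : (i, j + 1) ∉ T.cells := fun h => hz (T.young_row i j h (by omega))
      rw [labE, if_neg (show ¬(i = 0 ∨ j = 0) by omega), if_neg hz]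
      rw [labE, if_neg (show ¬(i = 0 ∨ j + 1 = 0) by omega), if_neg hz']

lemma labE_col_mono (i j : ℕ) : T.labE (i, j) ≤ T.labE (i + 1, j) := by
  by_cases h0 : i = 0 ∨ j = 0
  · rw [labE, if_pos h0]; exact zero_le
  · push_neg at h0
    by_cases hz : (i, j) ∈ T.cells
    · rw [T.labE_eq_lab hz]
      by_cases hz' : (i + 1, j) ∈ T.cells
      · rw [T.labE_eq_lab hz']
        exact_mod_cast T.col_mono i j hz hz'
      · rw [labE, if_neg (by omega), if_neg hz']; exact le_top
    · have hz' : (i + 1, j) ∉ T.cells := fun h => hz (T.young_col i j h (by omega))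
      rw [labE, if_neg (show ¬(i = 0 ∨ j = 0) by omega), if_neg hz]
      rw [labE, if_neg (show ¬(i + 1 = 0 ∨ j = 0) by omega), if_neg hz']

lemma noncore_of_lab_pos {z : ℕ × ℕ} (hz : z ∈ T.cells) (h : T.lab z ≠ 0) :
    r + 2 ≤ z.1 + z.2 := by
  have := T.core_zero z hz
  omega

end SDT
namespace SDT

variable {r n : ℕ} (T : SDT r n)

lemma labE_ne_coe {k : ℕ} (h1 : 1 ≤ k) (h2 : k ≤ n) {z : ℕ × ℕ}
    (hz1 : z ≠ T.Fsq k) (hz2 : z ≠ T.Vsq k) : T.labE z ≠ (k : ℕ∞) := by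
  intro h
  rw [labE] at h
  by_cases h0 : z.1 = 0 ∨ z.2 = 0
  · rw [if_pos h0] at h
    have : (0:ℕ) = k := by exact_mod_cast h
    omega
  · rw [if_neg h0] at h
    by_cases hz : z ∈ T.cells
    · rw [if_pos hz] at h
      have hlz : T.lab z = k := by exact_mod_cast h
      obtain ⟨-, -, -, -, -, -, -, hu⟩ := T.FV_spec h1 h2
      rcases hu z hz hlz with h' | h' <;> tauto
    · rw [if_neg hz] at h
      exact (ENat.top_ne_coe k) h

/-- branch 1: the variable square is below or to the left of the fixed square. -/
def branch1 (k : ℕ) : Prop :=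
  T.Vsq k = ((T.Fsq k).1 + 1, (T.Fsq k).2) ∨ T.Fsq k = ((T.Vsq k).1, (T.Vsq k).2 + 1)

/-- branch 2: the variable square is above or to the right of the fixed square. -/
def branch2 (k : ℕ) : Prop :=
  T.Fsq k = ((T.Vsq k).1 + 1, (T.Vsq k).2) ∨ T.Vsq k = ((T.Fsq k).1, (T.Fsq k).2 + 1)

/-- The possible positions of the new variable square, with their conditions. -/
def moveCases (k : ℕ) (x : ℕ × ℕ) : Prop :=
  (T.branch1 k ∧ 2 ≤ (T.Fsq k).1 ∧ x = ((T.Fsq k).1 - 1, (T.Fsq k).2) ∧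
      (k:ℕ∞) < T.labE ((T.Fsq k).1 - 1, (T.Fsq k).2 + 1)) ∨
  (T.branch1 k ∧ x = ((T.Fsq k).1, (T.Fsq k).2 + 1) ∧
      T.labE ((T.Fsq k).1 - 1, (T.Fsq k).2 + 1) < (k:ℕ∞)) ∨
  (T.branch2 k ∧ 2 ≤ (T.Fsq k).2 ∧ x = ((T.Fsq k).1, (T.Fsq k).2 - 1) ∧
      (k:ℕ∞) < T.labE ((T.Fsq k).1 + 1, (T.Fsq k).2 - 1)) ∨
  (T.branch2 k ∧ x = ((T.Fsq k).1 + 1, (T.Fsq k).2) ∧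
      T.labE ((T.Fsq k).1 + 1, (T.Fsq k).2 - 1) < (k:ℕ∞))

lemma isSuppD'_analysis {k : ℕ} (h1 : 1 ≤ k) (h2 : k ≤ n) {s : Finset (ℕ × ℕ)}
    (hs : IsSuppD' T k s) : ∃ x, s = {T.Fsq k, x} ∧ T.moveCases k x := by
  obtain ⟨hFc, hVc, hlF, hlV, hfixF, hvarV, -, -⟩ := T.FV_spec h1 h2
  have hFV := T.F_ne_V h1 h2
  have hsupp := T.supp_eq h1 h2
  obtain ⟨i, j, hfix, hcase⟩ := hs
  have hijF : ∀ pat : Finset (ℕ × ℕ), T.supp k = pat → (i, j) ∈ pat → (i, j) = T.Fsq k := by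
    intro pat hpat hmem
    rw [← hpat, hsupp] at hmem
    simp only [Finset.mem_insert, Finset.mem_singleton] at hmem
    rcases hmem with h | h
    · exact h
    · exfalso; rw [h] at hfix; exact not_var_of_fixed hfix hvarV
  have hVmem : ∀ pat : Finset (ℕ × ℕ), T.supp k = pat → T.Vsq k ∈ pat := by
    intro pat hpat
    rw [← hpat, hsupp]
    simp
  rcases hcase with ⟨hpat, hcmp⟩ | ⟨hpat, hcmp⟩
  · -- branch 1
    have hb1 : T.branch1 k ∧ (i, j) = T.Fsq k := by
      rcases hpat with hpat | hpat
      · have hF := hijF _ hpat (by simp)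
        have hV := hVmem _ hpat
        simp only [Finset.mem_insert, Finset.mem_singleton] at hV
        rcases hV with hV | hV
        · exact absurd (hF ▸ hV.symm) hFV
        · exact ⟨Or.inl (by rw [hV, ← hF]), hF⟩
      · have hF := hijF _ hpat (by simp)
        have hV := hVmem _ hpat
        simp only [Finset.mem_insert, Finset.mem_singleton] at hV
        rcases hV with hV | hV
        · have hj : 2 ≤ j := by
            have := T.pos_cells _ (hV ▸ hVc)
            simp at this; omega
          refine ⟨Or.inr ?_, hF⟩
          rw [hV, ← hF]
          simp; omega
        · exact absurd (hF ▸ hV.symm) hFV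
    obtain ⟨hb1, hF⟩ := hb1
    rcases hcmp with ⟨hlt, hseq⟩ | ⟨hgt, hseq⟩
    · have hi2 : 2 ≤ i := by
        rcases Nat.lt_or_ge i 2 with h | h
        · exfalso
          have hi1 : 1 ≤ i := by
            have := T.pos_cells _ (hF ▸ hFc); simpa using this.1
          have : i = 1 := by omega
          rw [this] at hlt; simp at hlt
          rw [T.labE_zero_left] at hlt
          exact not_lt_of_ge zero_le hlt
        · exact h
      exact ⟨(i - 1, j), by rw [hseq, ← hF], Or.inl ⟨hb1, by rw [← hF]; exact hi2,
        by rw [← hF], by rw [← hF]; exact hlt⟩⟩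
    · exact ⟨(i, j + 1), by rw [hseq, ← hF], Or.inr (Or.inl ⟨hb1, by rw [← hF],
        by rw [← hF]; exact hgt⟩)⟩
  · -- branch 2
    have hb2 : T.branch2 k ∧ (i, j) = T.Fsq k := by
      rcases hpat with hpat | hpat
      · have hF := hijF _ hpat (by simp)
        have hV := hVmem _ hpat
        simp only [Finset.mem_insert, Finset.mem_singleton] at hV
        rcases hV with hV | hV
        · exact absurd (hF ▸ hV.symm) hFV
        · have hi : 1 ≤ i := by
            have := T.pos_cells _ (hF ▸ hFc); simpa using this.1
          refine ⟨Or.inl ?_, hF⟩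
          rw [hV, ← hF]
          simp; omega
      · have hF := hijF _ hpat (by simp)
        have hV := hVmem _ hpat
        simp only [Finset.mem_insert, Finset.mem_singleton] at hV
        rcases hV with hV | hV
        · exact ⟨Or.inr (by rw [hV, ← hF]), hF⟩
        · exact absurd (hF ▸ hV.symm) hFV
    obtain ⟨hb2, hF⟩ := hb2
    rcases hcmp with ⟨hlt, hseq⟩ | ⟨hgt, hseq⟩
    · have hj2 : 2 ≤ j := by
        rcases Nat.lt_or_ge j 2 with h | h
        · exfalso
          have hj1 : 1 ≤ j := by
            have := T.pos_cells _ (hF ▸ hFc); simpa using this.2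
          have : j = 1 := by omega
          rw [this] at hlt; simp at hlt
          rw [T.labE_zero_right] at hlt
          exact not_lt_of_ge zero_le hlt
        · exact h
      exact ⟨(i, j - 1), by rw [hseq, ← hF], Or.inr (Or.inr (Or.inl ⟨hb2,
        by rw [← hF]; exact hj2, by rw [← hF], by rw [← hF]; exact hlt⟩))⟩
    · exact ⟨(i + 1, j), by rw [hseq, ← hF], Or.inr (Or.inr (Or.inr ⟨hb2, by rw [← hF],
        by rw [← hF]; exact hgt⟩))⟩

lemma exists_isSuppD' {k : ℕ} (h1 : 1 ≤ k) (h2 : k ≤ n) : ∃ s, IsSuppD' T k s := by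
  obtain ⟨hFc, hVc, hlF, hlV, hfixF, hvarV, hadj, -⟩ := T.FV_spec h1 h2
  have hsupp := T.supp_eq h1 h2
  obtain ⟨hi1, hj1⟩ := T.pos_cells _ hFc
  obtain ⟨hvi1, hvj1⟩ := T.pos_cells _ hVc
  rcases hadj with hV | hV | hV | hV
  · -- V below F : pattern {(i,j),(i+1,j)}
    have hpat : T.supp k = {((T.Fsq k).1, (T.Fsq k).2), ((T.Fsq k).1 + 1, (T.Fsq k).2)} := by
      rw [hsupp, hV]
    have hne := T.labE_ne_coe h1 h2 (z := ((T.Fsq k).1 - 1, (T.Fsq k).2 + 1))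
      (by intro h; rw [Prod.ext_iff] at h; simp at h <;> omega)
      (by rw [hV]; intro h; rw [Prod.ext_iff] at h; simp at h <;> omega)
    rcases lt_or_gt_of_ne hne with hlt | hgt
    · exact ⟨_, (T.Fsq k).1, (T.Fsq k).2, by simpa using hfixF,
        Or.inl ⟨Or.inl hpat, Or.inr ⟨hlt, rfl⟩⟩⟩
    · exact ⟨_, (T.Fsq k).1, (T.Fsq k).2, by simpa using hfixF,
        Or.inl ⟨Or.inl hpat, Or.inl ⟨hgt, rfl⟩⟩⟩
  · -- V right of F : pattern {(i,j+1),(i,j)}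
    have hpat : T.supp k = {((T.Fsq k).1, (T.Fsq k).2 + 1), ((T.Fsq k).1, (T.Fsq k).2)} := by
      rw [hsupp, hV, Finset.pair_comm]
    have hne := T.labE_ne_coe h1 h2 (z := ((T.Fsq k).1 + 1, (T.Fsq k).2 - 1))
      (by intro h; rw [Prod.ext_iff] at h; simp at h <;> omega)
      (by rw [hV]; intro h; rw [Prod.ext_iff] at h; simp at h <;> omega)
    rcases lt_or_gt_of_ne hne with hlt | hgt
    · exact ⟨_, (T.Fsq k).1, (T.Fsq k).2, by simpa using hfixF,
        Or.inr ⟨Or.inr hpat, Or.inr ⟨hlt, rfl⟩⟩⟩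
    · exact ⟨_, (T.Fsq k).1, (T.Fsq k).2, by simpa using hfixF,
        Or.inr ⟨Or.inr hpat, Or.inl ⟨hgt, rfl⟩⟩⟩
  · -- V above F : pattern {(i,j),(i-1,j)}
    have hpat : T.supp k = {((T.Fsq k).1, (T.Fsq k).2), ((T.Fsq k).1 - 1, (T.Fsq k).2)} := by
      rw [hsupp, hV]
      have : (T.Vsq k).1 + 1 - 1 = (T.Vsq k).1 := by omega
      rw [this]
    have hne := T.labE_ne_coe h1 h2 (z := ((T.Fsq k).1 + 1, (T.Fsq k).2 - 1))
      (by intro h; rw [Prod.ext_iff] at h; simp at h <;> omega)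
      (by rw [hV]; intro h; rw [Prod.ext_iff] at h; simp at h <;> omega)
    rcases lt_or_gt_of_ne hne with hlt | hgt
    · exact ⟨_, (T.Fsq k).1, (T.Fsq k).2, by simpa using hfixF,
        Or.inr ⟨Or.inl hpat, Or.inr ⟨hlt, rfl⟩⟩⟩
    · exact ⟨_, (T.Fsq k).1, (T.Fsq k).2, by simpa using hfixF,
        Or.inr ⟨Or.inl hpat, Or.inl ⟨hgt, rfl⟩⟩⟩
  · -- V left of F : pattern {(i,j-1),(i,j)}
    have hpat : T.supp k = {((T.Fsq k).1, (T.Fsq k).2 - 1), ((T.Fsq k).1, (T.Fsq k).2)} := by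
      rw [hsupp, hV, Finset.pair_comm]
      have : (T.Vsq k).2 + 1 - 1 = (T.Vsq k).2 := by omega
      rw [this]
    have hne := T.labE_ne_coe h1 h2 (z := ((T.Fsq k).1 - 1, (T.Fsq k).2 + 1))
      (by intro h; rw [Prod.ext_iff] at h; simp at h <;> omega)
      (by rw [hV]; intro h; rw [Prod.ext_iff] at h; simp at h <;> omega)
    rcases lt_or_gt_of_ne hne with hlt | hgt
    · exact ⟨_, (T.Fsq k).1, (T.Fsq k).2, by simpa using hfixF,
        Or.inl ⟨Or.inr hpat, Or.inr ⟨hlt, rfl⟩⟩⟩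
    · exact ⟨_, (T.Fsq k).1, (T.Fsq k).2, by simpa using hfixF,
        Or.inl ⟨Or.inr hpat, Or.inl ⟨hgt, rfl⟩⟩⟩

lemma suppD'_isSuppD' {k : ℕ} (h1 : 1 ≤ k) (h2 : k ≤ n) : IsSuppD' T k (suppD' T k) := by
  have hex := T.exists_isSuppD' h1 h2
  rw [suppD', dif_pos hex]
  exact hex.choose_spec

/-- The new variable square of domino `k` after moving through. -/
noncomputable def Xsq (k : ℕ) : ℕ × ℕ :=
  if h : ∃ x, suppD' T k = {T.Fsq k, x} ∧ T.moveCases k x then h.choose else (0, 0)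

lemma move_spec {k : ℕ} (h1 : 1 ≤ k) (h2 : k ≤ n) :
    suppD' T k = {T.Fsq k, T.Xsq k} ∧ T.moveCases k (T.Xsq k) := by
  have hex : ∃ x, suppD' T k = {T.Fsq k, x} ∧ T.moveCases k x :=
    T.isSuppD'_analysis h1 h2 (T.suppD'_isSuppD' h1 h2)
  rw [Xsq, dif_pos hex]
  exact hex.choose_spec

end SDT
set_option linter.unreachableTactic false
set_option linter.unnecessarySeqFocus false
set_option linter.unusedTactic false
set_option maxHeartbeats 1000000

namespace SDT

variable {r n : ℕ} (T : SDT r n)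

lemma labE_F {k : ℕ} (h1 : 1 ≤ k) (h2 : k ≤ n) : T.labE (T.Fsq k) = (k : ℕ∞) := by
  obtain ⟨hFc, -, hlF, -⟩ := T.FV_spec h1 h2
  rw [T.labE_eq_lab hFc, hlF]

lemma labE_V {k : ℕ} (h1 : 1 ≤ k) (h2 : k ≤ n) : T.labE (T.Vsq k) = (k : ℕ∞) := by
  obtain ⟨-, hVc, -, hlV, -⟩ := T.FV_spec h1 h2
  rw [T.labE_eq_lab hVc, hlV]

/-- Claim A: position and label bounds for the target square `Xsq k`. -/
lemma X_bounds {k : ℕ} (h1 : 1 ≤ k) (h2 : k ≤ n) :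
    1 ≤ (T.Xsq k).1 ∧ 1 ≤ (T.Xsq k).2 ∧ VariableSq r (T.Xsq k) ∧
    r + 2 ≤ (T.Xsq k).1 + (T.Xsq k).2 ∧ T.Xsq k ≠ T.Vsq k ∧
    T.labE ((T.Xsq k).1 - 1, (T.Xsq k).2) ≤ (k:ℕ∞) ∧
    T.labE ((T.Xsq k).1, (T.Xsq k).2 - 1) ≤ (k:ℕ∞) ∧
    (k:ℕ∞) ≤ T.labE ((T.Xsq k).1 + 1, (T.Xsq k).2) ∧
    (k:ℕ∞) ≤ T.labE ((T.Xsq k).1, (T.Xsq k).2 + 1) := by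
  obtain ⟨hFc, hVc, hlF, hlV, hfixF, hvarV, -, -⟩ := T.FV_spec h1 h2
  obtain ⟨hi1, hj1⟩ := T.pos_cells _ hFc
  obtain ⟨hvi1, hvj1⟩ := T.pos_cells _ hVc
  have hnc : r + 2 ≤ (T.Fsq k).1 + (T.Fsq k).2 :=
    T.noncore_of_lab_pos hFc (by omega)
  have hFlab := T.labE_F h1 h2
  have hfix' : ((T.Fsq k).1 + (T.Fsq k).2) % 2 ≠ r % 2 := hfixF
  obtain ⟨-, hmv⟩ := T.move_spec h1 h2
  have hFlab2 : T.labE ((T.Fsq k).1, (T.Fsq k).2) = (k:ℕ∞) := by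
    rw [Prod.mk.eta]; exact hFlab
  rcases hmv with ⟨hb, hi2, hxeq, hlt⟩ | ⟨hb, hxeq, hgt⟩ | ⟨hb, hj2, hxeq, hlt⟩ | ⟨hb, hxeq, hgt⟩
  all_goals rw [hxeq]; dsimp only
  · -- x = ((T.Fsq k).1 - 1, (T.Fsq k).2), k < labE ((T.Fsq k).1-1, (T.Fsq k).2+1)
    refine ⟨by omega, by omega, ?_, by omega, ?_, ?_, ?_, ?_, ?_⟩
    · show ((T.Fsq k).1 - 1 + (T.Fsq k).2) % 2 = r % 2; omega
    · rcases hb with hV | hV <;>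
        (intro h; rw [Prod.ext_iff] at h hV; simp at h hV <;> omega)
    · -- up: labE ((T.Fsq k).1-2, (T.Fsq k).2) ≤ k
      have m1 := T.labE_col_mono ((T.Fsq k).1 - 2) (T.Fsq k).2
      have m2 := T.labE_col_mono ((T.Fsq k).1 - 1) (T.Fsq k).2
      rw [show (T.Fsq k).1 - 2 + 1 = (T.Fsq k).1 - 1 by omega] at m1
      rw [show (T.Fsq k).1 - 1 + 1 = (T.Fsq k).1 by omega] at m2
      rw [show (T.Fsq k).1 - 1 - 1 = (T.Fsq k).1 - 2 by omega]
      calc T.labE ((T.Fsq k).1-2, (T.Fsq k).2) ≤ T.labE ((T.Fsq k).1-1, (T.Fsq k).2) := m1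
        _ ≤ T.labE ((T.Fsq k).1, (T.Fsq k).2) := m2
        _ = (k:ℕ∞) := hFlab2
    · -- left: labE ((T.Fsq k).1-1, (T.Fsq k).2-1) ≤ k
      have m1 := T.labE_row_mono ((T.Fsq k).1 - 1) ((T.Fsq k).2 - 1)
      have m2 := T.labE_col_mono ((T.Fsq k).1 - 1) (T.Fsq k).2
      rw [show (T.Fsq k).2 - 1 + 1 = (T.Fsq k).2 by omega] at m1
      rw [show (T.Fsq k).1 - 1 + 1 = (T.Fsq k).1 by omega] at m2
      calc T.labE ((T.Fsq k).1-1, (T.Fsq k).2-1) ≤ T.labE ((T.Fsq k).1-1, (T.Fsq k).2) := m1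
        _ ≤ T.labE ((T.Fsq k).1, (T.Fsq k).2) := m2
        _ = (k:ℕ∞) := hFlab2
    · -- down
      rw [show (T.Fsq k).1 - 1 + 1 = (T.Fsq k).1 by omega]; exact ge_of_eq hFlab2
    · -- right
      exact hlt.le
  · -- x = ((T.Fsq k).1, (T.Fsq k).2+1), labE ((T.Fsq k).1-1, (T.Fsq k).2+1) < k
    refine ⟨by omega, by omega, ?_, by omega, ?_, ?_, ?_, ?_, ?_⟩
    · show ((T.Fsq k).1 + ((T.Fsq k).2 + 1)) % 2 = r % 2; omega
    · rcases hb with hV | hV <;>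
        (intro h; rw [Prod.ext_iff] at h hV; simp at h hV <;> omega)
    · exact hgt.le
    · rw [show (T.Fsq k).2 + 1 - 1 = (T.Fsq k).2 by omega]; exact le_of_eq hFlab2
    · have m1 := T.labE_col_mono (T.Fsq k).1 (T.Fsq k).2
      have m2 := T.labE_row_mono ((T.Fsq k).1 + 1) (T.Fsq k).2
      calc (k:ℕ∞) = T.labE ((T.Fsq k).1, (T.Fsq k).2) := hFlab2.symm
        _ ≤ T.labE ((T.Fsq k).1 + 1, (T.Fsq k).2) := m1
        _ ≤ T.labE ((T.Fsq k).1 + 1, (T.Fsq k).2 + 1) := m2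
    · have m1 := T.labE_row_mono (T.Fsq k).1 (T.Fsq k).2
      have m2 := T.labE_row_mono (T.Fsq k).1 ((T.Fsq k).2 + 1)
      calc (k:ℕ∞) = T.labE ((T.Fsq k).1, (T.Fsq k).2) := hFlab2.symm
        _ ≤ T.labE ((T.Fsq k).1, (T.Fsq k).2 + 1) := m1
        _ ≤ T.labE ((T.Fsq k).1, (T.Fsq k).2 + 1 + 1) := m2
  · -- x = ((T.Fsq k).1, (T.Fsq k).2 - 1), k < labE ((T.Fsq k).1+1, (T.Fsq k).2-1)
    refine ⟨by omega, by omega, ?_, by omega, ?_, ?_, ?_, ?_, ?_⟩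
    · show ((T.Fsq k).1 + ((T.Fsq k).2 - 1)) % 2 = r % 2; omega
    · rcases hb with hV | hV <;>
        (intro h; rw [Prod.ext_iff] at h hV; simp at h hV <;> omega)
    · -- up: labE ((T.Fsq k).1-1, (T.Fsq k).2-1) ≤ k
      by_cases hF1 : (T.Fsq k).1 = 1
      · rw [show (T.Fsq k).1 - 1 = 0 by omega, T.labE_zero_left]
        exact zero_le
      · have m1 := T.labE_row_mono ((T.Fsq k).1 - 1) ((T.Fsq k).2 - 1)
        have m2 := T.labE_col_mono ((T.Fsq k).1 - 1) (T.Fsq k).2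
        rw [show (T.Fsq k).2 - 1 + 1 = (T.Fsq k).2 by omega] at m1
        rw [show (T.Fsq k).1 - 1 + 1 = (T.Fsq k).1 by omega] at m2
        calc T.labE ((T.Fsq k).1 - 1, (T.Fsq k).2 - 1) ≤ T.labE ((T.Fsq k).1 - 1, (T.Fsq k).2) := m1
          _ ≤ T.labE ((T.Fsq k).1, (T.Fsq k).2) := m2
          _ = (k:ℕ∞) := hFlab2
    · -- left: labE ((T.Fsq k).1, (T.Fsq k).2-2) ≤ k
      have m1 := T.labE_row_mono (T.Fsq k).1 ((T.Fsq k).2 - 2)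
      have m2 := T.labE_row_mono (T.Fsq k).1 ((T.Fsq k).2 - 1)
      rw [show (T.Fsq k).2 - 2 + 1 = (T.Fsq k).2 - 1 by omega] at m1
      rw [show (T.Fsq k).2 - 1 + 1 = (T.Fsq k).2 by omega] at m2
      rw [show (T.Fsq k).2 - 1 - 1 = (T.Fsq k).2 - 2 by omega]
      calc T.labE ((T.Fsq k).1, (T.Fsq k).2 - 2) ≤ T.labE ((T.Fsq k).1, (T.Fsq k).2 - 1) := m1
        _ ≤ T.labE ((T.Fsq k).1, (T.Fsq k).2) := m2
        _ = (k:ℕ∞) := hFlab2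
    · exact hlt.le
    · rw [show (T.Fsq k).2 - 1 + 1 = (T.Fsq k).2 by omega]; exact ge_of_eq hFlab2
  · -- x = ((T.Fsq k).1+1, (T.Fsq k).2), labE ((T.Fsq k).1+1, (T.Fsq k).2-1) < k
    refine ⟨by omega, by omega, ?_, by omega, ?_, ?_, ?_, ?_, ?_⟩
    · show ((T.Fsq k).1 + 1 + (T.Fsq k).2) % 2 = r % 2; omega
    · rcases hb with hV | hV <;>
        (intro h; rw [Prod.ext_iff] at h hV; simp at h hV <;> omega)
    · rw [show (T.Fsq k).1 + 1 - 1 = (T.Fsq k).1 by omega]; exact le_of_eq hFlab2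
    · exact hgt.le
    · have m1 := T.labE_col_mono (T.Fsq k).1 (T.Fsq k).2
      have m2 := T.labE_col_mono ((T.Fsq k).1 + 1) (T.Fsq k).2
      calc (k:ℕ∞) = T.labE ((T.Fsq k).1, (T.Fsq k).2) := hFlab2.symm
        _ ≤ T.labE ((T.Fsq k).1 + 1, (T.Fsq k).2) := m1
        _ ≤ T.labE ((T.Fsq k).1 + 1 + 1, (T.Fsq k).2) := m2
    · have m1 := T.labE_row_mono (T.Fsq k).1 (T.Fsq k).2
      have m2 := T.labE_col_mono (T.Fsq k).1 ((T.Fsq k).2 + 1)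
      calc (k:ℕ∞) = T.labE ((T.Fsq k).1, (T.Fsq k).2) := hFlab2.symm
        _ ≤ T.labE ((T.Fsq k).1, (T.Fsq k).2 + 1) := m1
        _ ≤ T.labE ((T.Fsq k).1 + 1, (T.Fsq k).2 + 1) := m2

end SDT
namespace SDT

variable {r n : ℕ} (T : SDT r n)

/-- Boxedness when the fixed square is above or to the left of the variable square. -/
lemma boxed_iff_FV {k : ℕ} (h1 : 1 ≤ k) (h2 : k ≤ n)
    (hadj : T.Vsq k = ((T.Fsq k).1 + 1, (T.Fsq k).2) ∨
      T.Vsq k = ((T.Fsq k).1, (T.Fsq k).2 + 1)) :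
    BoxedSet r (T.supp k) ↔ (T.Vsq k).1 % 2 = 0 := by
  obtain ⟨hFc, hVc, -, -, hfixF, hvarV, -, -⟩ := T.FV_spec h1 h2
  obtain ⟨hi1, hj1⟩ := T.pos_cells _ hFc
  have hpF : ((T.Fsq k).1 + (T.Fsq k).2) % 2 ≠ r % 2 := hfixF
  have hpV : ((T.Vsq k).1 + (T.Vsq k).2) % 2 = r % 2 := hvarV
  rw [T.supp_eq h1 h2]
  constructor
  · rintro ⟨a, b, ⟨hXv, hXo⟩, hsub⟩
    have hpX : (a + b) % 2 = r % 2 := hXv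
    have hFm : T.Fsq k ∈ ({(a, b), (a + 1, b), (a, b + 1), (a + 1, b + 1)} : Set (ℕ × ℕ)) :=
      hsub (by simp)
    have hVm : T.Vsq k ∈ ({(a, b), (a + 1, b), (a, b + 1), (a + 1, b + 1)} : Set (ℕ × ℕ)) :=
      hsub (by simp)
    simp only [Set.mem_insert_iff, Set.mem_singleton_iff, Prod.ext_iff] at hFm hVm
    rcases hadj with hV | hV <;> rw [Prod.ext_iff] at hV <;> simp at hV <;>
      rcases hFm with h | h | h | h <;> rcases hVm with h' | h' | h' | h' <;>
      (try simp at h h') <;> omega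
  · intro hpar
    rcases hadj with hV | hV
    · -- V below F; witness (F.1, F.2 - 1)
      refine ⟨(T.Fsq k).1, (T.Fsq k).2 - 1, ⟨?_, ?_⟩, ?_⟩
      · show ((T.Fsq k).1 + ((T.Fsq k).2 - 1)) % 2 = r % 2
        rw [Prod.ext_iff] at hV; simp at hV; omega
      · show (T.Fsq k).1 % 2 = 1
        rw [Prod.ext_iff] at hV; simp at hV; omega
      · intro z hz
        simp only [Finset.coe_insert, Finset.coe_singleton, Set.mem_insert_iff,
          Set.mem_singleton_iff] at hz
        rcases hz with rfl | rfl <;>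
          [skip; rw [hV]] <;>
          simp [Prod.ext_iff] <;> omega
    · -- V right of F; witness (F.1 - 1, F.2)
      refine ⟨(T.Fsq k).1 - 1, (T.Fsq k).2, ⟨?_, ?_⟩, ?_⟩
      · show ((T.Fsq k).1 - 1 + (T.Fsq k).2) % 2 = r % 2
        rw [Prod.ext_iff] at hV; simp at hV; omega
      · show ((T.Fsq k).1 - 1) % 2 = 1
        rw [Prod.ext_iff] at hV; simp at hV; omega
      · intro z hz
        simp only [Finset.coe_insert, Finset.coe_singleton, Set.mem_insert_iff,
          Set.mem_singleton_iff] at hz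
        rw [Prod.ext_iff] at hV; simp at hV
        rcases hz with rfl | rfl <;> simp [Prod.ext_iff] <;> omega

/-- Boxedness when the fixed square is below or to the right of the variable square. -/
lemma boxed_iff_VF {k : ℕ} (h1 : 1 ≤ k) (h2 : k ≤ n)
    (hadj : T.Fsq k = ((T.Vsq k).1 + 1, (T.Vsq k).2) ∨
      T.Fsq k = ((T.Vsq k).1, (T.Vsq k).2 + 1)) :
    BoxedSet r (T.supp k) ↔ (T.Vsq k).1 % 2 = 1 := by
  obtain ⟨hFc, hVc, -, -, hfixF, hvarV, -, -⟩ := T.FV_spec h1 h2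
  obtain ⟨hi1, hj1⟩ := T.pos_cells _ hVc
  have hpF : ((T.Fsq k).1 + (T.Fsq k).2) % 2 ≠ r % 2 := hfixF
  have hpV : ((T.Vsq k).1 + (T.Vsq k).2) % 2 = r % 2 := hvarV
  rw [T.supp_eq h1 h2]
  constructor
  · rintro ⟨a, b, ⟨hXv, hXo⟩, hsub⟩
    have hpX : (a + b) % 2 = r % 2 := hXv
    have hFm : T.Fsq k ∈ ({(a, b), (a + 1, b), (a, b + 1), (a + 1, b + 1)} : Set (ℕ × ℕ)) :=
      hsub (by simp)
    have hVm : T.Vsq k ∈ ({(a, b), (a + 1, b), (a, b + 1), (a + 1, b + 1)} : Set (ℕ × ℕ)) :=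
      hsub (by simp)
    simp only [Set.mem_insert_iff, Set.mem_singleton_iff, Prod.ext_iff] at hFm hVm
    rcases hadj with hV | hV <;> rw [Prod.ext_iff] at hV <;> simp at hV <;>
      rcases hFm with h | h | h | h <;> rcases hVm with h' | h' | h' | h' <;>
      (try simp at h h') <;> omega
  · intro hpar
    refine ⟨(T.Vsq k).1, (T.Vsq k).2, ⟨hvarV, hpar⟩, ?_⟩
    intro z hz
    simp only [Finset.coe_insert, Finset.coe_singleton, Set.mem_insert_iff,
      Set.mem_singleton_iff] at hz
    rcases hadj with hV | hV <;>
      rcases hz with rfl | rfl <;>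
      simp [Prod.ext_iff, hV] <;> omega

/-- Canonical form of the move cases, relative to the target square, including
the boxedness criterion.  The four cases are: fixed square below, left of,
right of, above the target square. -/
lemma moveCases_pos {k : ℕ} (h1 : 1 ≤ k) (h2 : k ≤ n) :
    (T.Fsq k = ((T.Xsq k).1 + 1, (T.Xsq k).2) ∧
      (k:ℕ∞) < T.labE ((T.Xsq k).1, (T.Xsq k).2 + 1) ∧
      (BoxedSet r (T.supp k) ↔ (T.Xsq k).1 % 2 = 0)) ∨
    (T.Fsq k = ((T.Xsq k).1, (T.Xsq k).2 - 1) ∧ 2 ≤ (T.Xsq k).2 ∧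
      T.labE ((T.Xsq k).1 - 1, (T.Xsq k).2) < (k:ℕ∞) ∧
      (BoxedSet r (T.supp k) ↔ (T.Xsq k).1 % 2 = 1)) ∨
    (T.Fsq k = ((T.Xsq k).1, (T.Xsq k).2 + 1) ∧
      (k:ℕ∞) < T.labE ((T.Xsq k).1 + 1, (T.Xsq k).2) ∧
      (BoxedSet r (T.supp k) ↔ (T.Xsq k).1 % 2 = 0)) ∨
    (T.Fsq k = ((T.Xsq k).1 - 1, (T.Xsq k).2) ∧ 2 ≤ (T.Xsq k).1 ∧
      T.labE ((T.Xsq k).1, (T.Xsq k).2 - 1) < (k:ℕ∞) ∧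
      (BoxedSet r (T.supp k) ↔ (T.Xsq k).1 % 2 = 1)) := by
  obtain ⟨hFc, hVc, -, -, hfixF, hvarV, -, -⟩ := T.FV_spec h1 h2
  obtain ⟨hi1, hj1⟩ := T.pos_cells _ hFc
  obtain ⟨-, hmv⟩ := T.move_spec h1 h2
  rcases hmv with ⟨hb, hi2, hxeq, hlt⟩ | ⟨hb, hxeq, hgt⟩ | ⟨hb, hj2, hxeq, hlt⟩ | ⟨hb, hxeq, hgt⟩
  · -- X = (F.1 - 1, F.2) : F below X
    have hbox : BoxedSet r (T.supp k) ↔ ((T.Fsq k).1 % 2 = 1) := by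
      rcases hb with hV | hV
      · rw [T.boxed_iff_FV h1 h2 (Or.inl hV), hV]; simp; omega
      · rw [T.boxed_iff_VF h1 h2 (Or.inr hV)]
        rw [Prod.ext_iff] at hV; simp at hV; omega
    refine Or.inl ⟨?_, ?_, ?_⟩
    · rw [hxeq, Prod.ext_iff]; simp; omega
    · rw [hxeq]; exact hlt
    · rw [hxeq]; simp; rw [hbox]; constructor <;> omega
  · -- X = (F.1, F.2 + 1) : F left of X
    have hbox : BoxedSet r (T.supp k) ↔ ((T.Fsq k).1 % 2 = 1) := by
      rcases hb with hV | hV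
      · rw [T.boxed_iff_FV h1 h2 (Or.inl hV), hV]; simp; omega
      · rw [T.boxed_iff_VF h1 h2 (Or.inr hV)]
        rw [Prod.ext_iff] at hV; simp at hV; omega
    refine Or.inr (Or.inl ⟨?_, ?_, ?_, ?_⟩)
    · rw [hxeq, Prod.ext_iff]; simp
    · rw [hxeq]; simp; omega
    · rw [hxeq]; simp; exact hgt
    · rw [hxeq]; simp; exact hbox
  · -- X = (F.1, F.2 - 1) : F right of X
    have hbox : BoxedSet r (T.supp k) ↔ ((T.Fsq k).1 % 2 = 0) := by
      rcases hb with hV | hV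
      · rw [T.boxed_iff_VF h1 h2 (Or.inl hV)]
        rw [Prod.ext_iff] at hV; simp at hV; omega
      · rw [T.boxed_iff_FV h1 h2 (Or.inr hV), hV]; try simp
    refine Or.inr (Or.inr (Or.inl ⟨?_, ?_, ?_⟩))
    · rw [hxeq, Prod.ext_iff]; simp; omega
    · rw [hxeq]; simp; exact hlt
    · rw [hxeq]; simp; exact hbox
  · -- X = (F.1 + 1, F.2) : F above X
    have hbox : BoxedSet r (T.supp k) ↔ ((T.Fsq k).1 % 2 = 0) := by
      rcases hb with hV | hV
      · rw [T.boxed_iff_VF h1 h2 (Or.inl hV)]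
        rw [Prod.ext_iff] at hV; simp at hV; omega
      · rw [T.boxed_iff_FV h1 h2 (Or.inr hV), hV]; try simp
    refine Or.inr (Or.inr (Or.inr ⟨?_, ?_, ?_, ?_⟩))
    · rw [hxeq, Prod.ext_iff]; simp
    · rw [hxeq]; simp; omega
    · rw [hxeq]; simp; exact hgt
    · rw [hxeq]; simp; rw [hbox]; constructor <;> omega

end SDT
namespace SDT

variable {r n : ℕ} (T : SDT r n)

lemma V_inj {k l : ℕ} (hk1 : 1 ≤ k) (hk2 : k ≤ n) (hl1 : 1 ≤ l) (hl2 : l ≤ n)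
    (h : T.Vsq k = T.Vsq l) : k = l := by
  obtain ⟨-, hVc, -, hlV, -⟩ := T.FV_spec hk1 hk2
  obtain ⟨-, -, -, hlV', -⟩ := T.FV_spec hl1 hl2
  rw [← hlV, h, hlV']

lemma occ_V {z : ℕ × ℕ} (hz : z ∈ T.cells) (hvar : VariableSq r z)
    (hnc : r + 2 ≤ z.1 + z.2) :
    1 ≤ T.lab z ∧ T.lab z ≤ n ∧ T.Vsq (T.lab z) = z := by
  have h0 : T.lab z ≠ 0 := by
    intro h
    have := (T.core_zero z hz).1 h
    omega
  refine ⟨by omega, T.lab_le z hz, ?_⟩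
  exact (T.eq_V_of_var (by omega) (T.lab_le z hz) hz rfl hvar).symm

lemma supp_empty_of_gt {m : ℕ} (hm : n < m) : T.supp m = ∅ := by
  ext z
  simp only [supp, Finset.mem_filter, Finset.notMem_empty, iff_false]
  rintro ⟨hz, hlz⟩
  have := T.lab_le z hz
  omega

lemma suppD'_junk {m : ℕ} (hm : m = 0 ∨ n < m) : suppD' T m = ∅ := by
  have hno : ¬ ∃ s, IsSuppD' T m s := by
    rintro ⟨s, i, j, hfix, hcase⟩
    rcases hm with rfl | hm
    · -- supp 0 is the core; it cannot consist of two squares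
      have hmem : ∀ w : ℕ × ℕ, w ∈ T.supp 0 ↔
          (1 ≤ w.1 ∧ 1 ≤ w.2 ∧ w.1 + w.2 < r + 2) := by
        intro w
        simp only [supp, Finset.mem_filter]
        constructor
        · rintro ⟨hw, hlw⟩
          obtain ⟨a1, a2⟩ := T.pos_cells w hw
          exact ⟨a1, a2, (T.core_zero w hw).1 hlw⟩
        · rintro ⟨a1, a2, a3⟩
          have hw : w ∈ T.cells := by
            have := T.core_mem w.1 w.2 a1 a2 a3
            simpa using this
          exact ⟨hw, (T.core_zero w hw).2 a3⟩
      have hfin : ∀ u v : ℕ × ℕ, T.supp 0 = {u, v} → 2 ≤ r → False := by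
        intro u v hp hr
        have h11 : ((1:ℕ), (1:ℕ)) ∈ T.supp 0 := by rw [hmem]; simp; omega
        have h12 : ((1:ℕ), (2:ℕ)) ∈ T.supp 0 := by rw [hmem]; simp; omega
        have h21 : ((2:ℕ), (1:ℕ)) ∈ T.supp 0 := by rw [hmem]; simp; omega
        rw [hp] at h11 h12 h21
        simp only [Finset.mem_insert, Finset.mem_singleton] at h11 h12 h21
        rcases h11 with h11 | h11 <;> rcases h12 with h12 | h12 <;>
          rcases h21 with h21 | h21 <;>
          (rw [Prod.ext_iff] at h11 h12 h21; simp at h11 h12 h21 <;> omega)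
      rcases hcase with ⟨hp | hp, -⟩ | ⟨hp | hp, -⟩
      · have hu : ((i:ℕ), j) ∈ T.supp 0 := by rw [hp]; simp
        have hv : ((i+1:ℕ), j) ∈ T.supp 0 := by rw [hp]; simp
        rw [hmem] at hu hv
        exact hfin _ _ hp (by simp at hu hv; omega)
      · have hu : ((i:ℕ), j-1) ∈ T.supp 0 := by rw [hp]; simp
        have hv : ((i:ℕ), j) ∈ T.supp 0 := by rw [hp]; simp
        rw [hmem] at hu hv
        exact hfin _ _ hp (by simp at hu hv; omega)
      · have hu : ((i:ℕ), j) ∈ T.supp 0 := by rw [hp]; simp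
        have hv : ((i-1:ℕ), j) ∈ T.supp 0 := by rw [hp]; simp
        rw [hmem] at hu hv
        exact hfin _ _ hp (by simp at hu hv; omega)
      · have hu : ((i:ℕ), j+1) ∈ T.supp 0 := by rw [hp]; simp
        have hv : ((i:ℕ), j) ∈ T.supp 0 := by rw [hp]; simp
        rw [hmem] at hu hv
        exact hfin _ _ hp (by simp at hu hv; omega)
    · have hij : (i, j) ∈ T.supp m := by
        rcases hcase with ⟨hp | hp, -⟩ | ⟨hp | hp, -⟩ <;> rw [hp] <;> simp
      rw [T.supp_empty_of_gt hm] at hij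
      simp at hij
  rw [suppD', dif_neg hno]

lemma cycStep_mem {a b : ℕ} (ha1 : 1 ≤ a) (ha2 : a ≤ n) (h : cycStep T a b) :
    1 ≤ b ∧ b ≤ n := by
  by_contra hb
  have hb' : b = 0 ∨ n < b := by omega
  rcases h with ⟨z, hz⟩ | ⟨z, hz⟩
  · rw [Finset.mem_inter] at hz
    obtain ⟨hz1, hz2⟩ := hz
    rcases hb' with rfl | hbgt
    · -- b = 0 : z ∈ supp 0 means z is a core cell, but z ∈ suppD' a = {F a, X a}
      rw [(T.move_spec ha1 ha2).1] at hz2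
      simp only [Finset.mem_insert, Finset.mem_singleton] at hz2
      simp only [supp, Finset.mem_filter] at hz1
      obtain ⟨hzc, hzl⟩ := hz1
      have hcore := (T.core_zero z hzc).1 hzl
      rcases hz2 with rfl | rfl
      · obtain ⟨-, -, hlF, -⟩ := T.FV_spec ha1 ha2
        omega
      · obtain ⟨-, -, -, hnc, -⟩ := T.X_bounds ha1 ha2
        omega
    · rw [T.supp_empty_of_gt hbgt] at hz1
      simp at hz1
  · rw [Finset.mem_inter] at hz
    rw [T.suppD'_junk hb'] at hz
    simp at hz

lemma cycStep_symm {a b : ℕ} (h : cycStep T a b) : cycStep T b a := by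
  rcases h with h | h
  · right; rwa [Finset.inter_comm]
  · left; rwa [Finset.inter_comm]

lemma cycStep_cases {a b : ℕ} (ha1 : 1 ≤ a) (ha2 : a ≤ n) (hb1 : 1 ≤ b) (hb2 : b ≤ n)
    (hab : a ≠ b) (h : cycStep T a b) : T.Xsq a = T.Vsq b ∨ T.Xsq b = T.Vsq a := by
  obtain ⟨hFa, hVa, hlFa, hlVa, hfixa, hvara, -, -⟩ := T.FV_spec ha1 ha2
  obtain ⟨hFb, hVb, hlFb, hlVb, hfixb, hvarb, -, -⟩ := T.FV_spec hb1 hb2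
  obtain ⟨-, -, hvarXa, -, -⟩ := T.X_bounds ha1 ha2
  obtain ⟨-, -, hvarXb, -, -⟩ := T.X_bounds hb1 hb2
  rcases h with ⟨z, hz⟩ | ⟨z, hz⟩
  · rw [Finset.mem_inter, (T.move_spec ha1 ha2).1, T.supp_eq hb1 hb2] at hz
    simp only [Finset.mem_insert, Finset.mem_singleton] at hz
    obtain ⟨hz1, hz2⟩ := hz
    rcases hz1 with rfl | rfl <;> rcases hz2 with h' | h'
    · exact absurd (by rw [← hlFa, ← h']; exact hlFb : a = b) hab
    · rw [h'] at hfixb; exact absurd hfixb ((not_fixed_iff _).2 hvarXa)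
    · rw [h'] at hvarb; exact absurd hfixa ((not_fixed_iff _).2 hvarb)
    · exact Or.inl h'.symm
  · rw [Finset.mem_inter, (T.move_spec hb1 hb2).1, T.supp_eq ha1 ha2] at hz
    simp only [Finset.mem_insert, Finset.mem_singleton] at hz
    obtain ⟨hz1, hz2⟩ := hz
    rcases hz1 with rfl | rfl <;> rcases hz2 with h' | h'
    · exact absurd (by rw [← hlFb, h']; exact hlFa : b = a) (Ne.symm hab)
    · rw [← h'] at hvara; exact absurd hfixb ((not_fixed_iff _).2 hvara)
    · rw [← h'] at hfixa; exact absurd hfixa ((not_fixed_iff _).2 hvarXb)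
    · exact Or.inr h'

lemma cycStep_of_XV {a b : ℕ} (ha1 : 1 ≤ a) (ha2 : a ≤ n) (hb1 : 1 ≤ b) (hb2 : b ≤ n)
    (h : T.Xsq a = T.Vsq b) : cycStep T a b := by
  left
  refine ⟨T.Vsq b, Finset.mem_inter.2 ⟨?_, ?_⟩⟩
  · rw [T.supp_eq hb1 hb2]; simp
  · rw [(T.move_spec ha1 ha2).1, ← h]; simp

end SDT
namespace SDT

variable {r n : ℕ} (T : SDT r n)

lemma nbhd_mono (p q : ℕ) (hp : 1 ≤ p) (hq : 1 ≤ q) :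
    T.labE (p - 1, q) ≤ T.labE (p, q) ∧ T.labE (p, q - 1) ≤ T.labE (p, q) ∧
    T.labE (p, q) ≤ T.labE (p + 1, q) ∧ T.labE (p, q) ≤ T.labE (p, q + 1) := by
  have m1 := T.labE_col_mono (p - 1) q
  have m2 := T.labE_row_mono p (q - 1)
  rw [show p - 1 + 1 = p by omega] at m1
  rw [show q - 1 + 1 = q by omega] at m2
  exact ⟨m1, m2, T.labE_col_mono p q, T.labE_row_mono p q⟩

/-- The occupant `μ` of an occupied, non-core variable square `(p,q)`: its fixed
square is one of the four neighbours, carrying extended label `μ`. -/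
lemma occ_F_pos {p q : ℕ} (hpq : (p, q) ∈ T.cells) (hvar : VariableSq r (p, q))
    (hnc : r + 2 ≤ p + q) :
    1 ≤ T.lab (p, q) ∧ T.lab (p, q) ≤ n ∧ T.Vsq (T.lab (p, q)) = (p, q) ∧
    (T.labE (p - 1, q) = (T.lab (p, q) : ℕ∞) ∨
     T.labE (p, q - 1) = (T.lab (p, q) : ℕ∞) ∨
     T.labE (p + 1, q) = (T.lab (p, q) : ℕ∞) ∨
     T.labE (p, q + 1) = (T.lab (p, q) : ℕ∞)) := by
  obtain ⟨hμ1, hμ2, hμV⟩ := T.occ_V hpq hvar (by simpa using hnc)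
  refine ⟨hμ1, hμ2, hμV, ?_⟩
  obtain ⟨hFμc, -, -, -, -, -, hadjμ, -⟩ := T.FV_spec hμ1 hμ2
  obtain ⟨hf1, hf2⟩ := T.pos_cells _ hFμc
  have hlE := T.labE_F hμ1 hμ2
  rcases hadjμ with hμa | hμa | hμa | hμa <;> rw [hμV] at hμa
  · left
    rw [Prod.ext_iff] at hμa; simp at hμa
    rw [show ((p - 1 : ℕ), q) = T.Fsq (T.lab (p, q)) from by rw [Prod.ext_iff]; simp; omega]
    exact hlE
  · right; left
    rw [Prod.ext_iff] at hμa; simp at hμa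
    rw [show ((p : ℕ), q - 1) = T.Fsq (T.lab (p, q)) from by rw [Prod.ext_iff]; simp; omega]
    exact hlE
  · right; right; left
    rw [show ((p + 1 : ℕ), q) = T.Fsq (T.lab (p, q)) from by rw [hμa]]
    exact hlE
  · right; right; right
    rw [show ((p : ℕ), q + 1) = T.Fsq (T.lab (p, q)) from by rw [hμa]]
    exact hlE

/-- Distinct dominoes have distinct targets. -/
lemma X_inj {k l : ℕ} (hk1 : 1 ≤ k) (hk2 : k ≤ n) (hl1 : 1 ≤ l) (hl2 : l ≤ n)
    (heq : T.Xsq k = T.Xsq l) : k = l := by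
  by_contra hne
  obtain ⟨hFkc, hVkc, hlFk, hlVk, hfixk, hvark, -, -⟩ := T.FV_spec hk1 hk2
  obtain ⟨hFlc, hVlc, hlFl, hlVl, hfixl, hvarl, -, -⟩ := T.FV_spec hl1 hl2
  obtain ⟨hx1, hx2, hxvar, hxnc, hxneV, -, -, -, -⟩ := T.X_bounds hk1 hk2
  obtain ⟨-, -, -, -, hxneVl, -, -, -, -⟩ := T.X_bounds hl1 hl2
  have hmk := T.moveCases_pos hk1 hk2
  have hml := T.moveCases_pos hl1 hl2
  rw [← heq] at hml hxneVl
  rcases hxk : T.Xsq k with ⟨p, q⟩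
  rw [hxk] at hmk hml hx1 hx2 hxvar hxnc hxneV hxneVl
  dsimp only at hmk hml hx1 hx2 hxvar hxnc
  obtain ⟨mU, mL, mD, mR⟩ := T.nbhd_mono p q hx1 hx2
  have hEk := T.labE_F hk1 hk2
  have hEl := T.labE_F hl1 hl2
  -- abbreviation for the occupant argument
  have occ : (p, q) ∈ T.cells → False → True := fun _ _ => trivial
  rcases hmk with ⟨hFk, hck, -⟩ | ⟨hFk, hq2, hck, -⟩ | ⟨hFk, hck, -⟩ | ⟨hFk, hp2, hck, -⟩ <;>
    rcases hml with ⟨hFl, hcl, -⟩ | ⟨hFl, hq2', hcl, -⟩ | ⟨hFl, hcl, -⟩ | ⟨hFl, hp2', hcl, -⟩ <;>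
    rw [hFk] at hEk <;> rw [hFl] at hEl
  -- In each goal: hEk : labE (pos of F k) = k, hEl likewise, hck hcl the conditions.
  · -- (B,B)
    exact hne (by exact_mod_cast hEk.symm.trans hEl)
  · -- (B,L) : Fk = (p+1,q), Fl = (p,q-1)
    have hxc : (p, q) ∈ T.cells := T.young_col p q (by rw [← hFk]; exact hFkc) hx1
    obtain ⟨hμ1, hμ2, hμV, hocc⟩ := T.occ_F_pos hxc hxvar hxnc
    have hlabx : T.labE (p, q) = (T.lab (p, q) : ℕ∞) := T.labE_eq_lab hxc
    rcases hocc with hE | hE | hE | hE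
    · rw [hE] at hcl
      rw [hEl] at mL; rw [hlabx] at mL
      exact absurd (lt_of_le_of_lt mL hcl) (lt_irrefl _)
    · have : T.lab (p, q) = l := by exact_mod_cast hE.symm.trans hEl
      rw [this] at hμV; exact hxneVl hμV.symm
    · have : T.lab (p, q) = k := by exact_mod_cast hE.symm.trans hEk
      rw [this] at hμV; exact hxneV hμV.symm
    · rw [hE] at hck
      rw [hEk] at mD; rw [hlabx] at mD
      exact absurd (lt_of_le_of_lt mD hck) (lt_irrefl _)
  · -- (B,R) : direct
    rw [hEl] at hck; rw [hEk] at hcl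
    exact absurd (lt_trans hck hcl) (lt_irrefl _)
  · -- (B,A) : Fk = (p+1,q), Fl = (p-1,q)
    have hxc : (p, q) ∈ T.cells := T.young_col p q (by rw [← hFk]; exact hFkc) hx1
    obtain ⟨hμ1, hμ2, hμV, hocc⟩ := T.occ_F_pos hxc hxvar hxnc
    have hlabx : T.labE (p, q) = (T.lab (p, q) : ℕ∞) := T.labE_eq_lab hxc
    rcases hocc with hE | hE | hE | hE
    · have : T.lab (p, q) = l := by exact_mod_cast hE.symm.trans hEl
      rw [this] at hμV; exact hxneVl hμV.symm
    · rw [hE] at hcl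
      rw [hEl] at mU; rw [hlabx] at mU
      exact absurd (lt_of_le_of_lt mU hcl) (lt_irrefl _)
    · have : T.lab (p, q) = k := by exact_mod_cast hE.symm.trans hEk
      rw [this] at hμV; exact hxneV hμV.symm
    · rw [hE] at hck
      rw [hEk] at mD; rw [hlabx] at mD
      exact absurd (lt_of_le_of_lt mD hck) (lt_irrefl _)
  · -- (L,B) : Fk = (p,q-1), Fl = (p+1,q)
    have hxc : (p, q) ∈ T.cells := T.young_col p q (by rw [← hFl]; exact hFlc) hx1
    obtain ⟨hμ1, hμ2, hμV, hocc⟩ := T.occ_F_pos hxc hxvar hxnc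
    have hlabx : T.labE (p, q) = (T.lab (p, q) : ℕ∞) := T.labE_eq_lab hxc
    rcases hocc with hE | hE | hE | hE
    · rw [hE] at hck
      rw [hEk] at mL; rw [hlabx] at mL
      exact absurd (lt_of_le_of_lt mL hck) (lt_irrefl _)
    · have : T.lab (p, q) = k := by exact_mod_cast hE.symm.trans hEk
      rw [this] at hμV; exact hxneV hμV.symm
    · have : T.lab (p, q) = l := by exact_mod_cast hE.symm.trans hEl
      rw [this] at hμV; exact hxneVl hμV.symm
    · rw [hE] at hcl
      rw [hEl] at mD; rw [hlabx] at mD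
      exact absurd (lt_of_le_of_lt mD hcl) (lt_irrefl _)
  · -- (L,L)
    exact hne (by exact_mod_cast hEk.symm.trans hEl)
  · -- (L,R) : Fk = (p,q-1), Fl = (p,q+1)
    have hxc : (p, q) ∈ T.cells := T.young_row p q (by rw [← hFl]; exact hFlc) hx2
    obtain ⟨hμ1, hμ2, hμV, hocc⟩ := T.occ_F_pos hxc hxvar hxnc
    have hlabx : T.labE (p, q) = (T.lab (p, q) : ℕ∞) := T.labE_eq_lab hxc
    rcases hocc with hE | hE | hE | hE
    · rw [hE] at hck
      rw [hEk] at mL; rw [hlabx] at mL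
      exact absurd (lt_of_le_of_lt mL hck) (lt_irrefl _)
    · have : T.lab (p, q) = k := by exact_mod_cast hE.symm.trans hEk
      rw [this] at hμV; exact hxneV hμV.symm
    · rw [hE] at hcl
      rw [hEl] at mR; rw [hlabx] at mR
      exact absurd (lt_of_le_of_lt mR hcl) (lt_irrefl _)
    · have : T.lab (p, q) = l := by exact_mod_cast hE.symm.trans hEl
      rw [this] at hμV; exact hxneVl hμV.symm
  · -- (L,A) : direct
    rw [hEl] at hck; rw [hEk] at hcl
    exact absurd (lt_trans hck hcl) (lt_irrefl _)
  · -- (R,B) : direct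
    rw [hEl] at hck; rw [hEk] at hcl
    exact absurd (lt_trans hck hcl) (lt_irrefl _)
  · -- (R,L) : Fk = (p,q+1), Fl = (p,q-1)
    have hxc : (p, q) ∈ T.cells := T.young_row p q (by rw [← hFk]; exact hFkc) hx2
    obtain ⟨hμ1, hμ2, hμV, hocc⟩ := T.occ_F_pos hxc hxvar hxnc
    have hlabx : T.labE (p, q) = (T.lab (p, q) : ℕ∞) := T.labE_eq_lab hxc
    rcases hocc with hE | hE | hE | hE
    · rw [hE] at hcl
      rw [hEl] at mL; rw [hlabx] at mL
      exact absurd (lt_of_le_of_lt mL hcl) (lt_irrefl _)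
    · have : T.lab (p, q) = l := by exact_mod_cast hE.symm.trans hEl
      rw [this] at hμV; exact hxneVl hμV.symm
    · rw [hE] at hck
      rw [hEk] at mR; rw [hlabx] at mR
      exact absurd (lt_of_le_of_lt mR hck) (lt_irrefl _)
    · have : T.lab (p, q) = k := by exact_mod_cast hE.symm.trans hEk
      rw [this] at hμV; exact hxneV hμV.symm
  · -- (R,R)
    exact hne (by exact_mod_cast hEk.symm.trans hEl)
  · -- (R,A) : Fk = (p,q+1), Fl = (p-1,q)
    have hxc : (p, q) ∈ T.cells := T.young_row p q (by rw [← hFk]; exact hFkc) hx2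
    obtain ⟨hμ1, hμ2, hμV, hocc⟩ := T.occ_F_pos hxc hxvar hxnc
    have hlabx : T.labE (p, q) = (T.lab (p, q) : ℕ∞) := T.labE_eq_lab hxc
    rcases hocc with hE | hE | hE | hE
    · have : T.lab (p, q) = l := by exact_mod_cast hE.symm.trans hEl
      rw [this] at hμV; exact hxneVl hμV.symm
    · rw [hE] at hcl
      rw [hEl] at mU; rw [hlabx] at mU
      exact absurd (lt_of_le_of_lt mU hcl) (lt_irrefl _)
    · rw [hE] at hck
      rw [hEk] at mR; rw [hlabx] at mR
      exact absurd (lt_of_le_of_lt mR hck) (lt_irrefl _)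
    · have : T.lab (p, q) = k := by exact_mod_cast hE.symm.trans hEk
      rw [this] at hμV; exact hxneV hμV.symm
  · -- (A,B) : Fk = (p-1,q), Fl = (p+1,q)
    have hxc : (p, q) ∈ T.cells := T.young_col p q (by rw [← hFl]; exact hFlc) hx1
    obtain ⟨hμ1, hμ2, hμV, hocc⟩ := T.occ_F_pos hxc hxvar hxnc
    have hlabx : T.labE (p, q) = (T.lab (p, q) : ℕ∞) := T.labE_eq_lab hxc
    rcases hocc with hE | hE | hE | hE
    · have : T.lab (p, q) = k := by exact_mod_cast hE.symm.trans hEk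
      rw [this] at hμV; exact hxneV hμV.symm
    · rw [hE] at hck
      rw [hEk] at mU; rw [hlabx] at mU
      exact absurd (lt_of_le_of_lt mU hck) (lt_irrefl _)
    · have : T.lab (p, q) = l := by exact_mod_cast hE.symm.trans hEl
      rw [this] at hμV; exact hxneVl hμV.symm
    · rw [hE] at hcl
      rw [hEl] at mD; rw [hlabx] at mD
      exact absurd (lt_of_le_of_lt mD hcl) (lt_irrefl _)
  · -- (A,L) : direct
    rw [hEl] at hck; rw [hEk] at hcl
    exact absurd (lt_trans hck hcl) (lt_irrefl _)
  · -- (A,R) : Fk = (p-1,q), Fl = (p,q+1)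
    have hxc : (p, q) ∈ T.cells := T.young_row p q (by rw [← hFl]; exact hFlc) hx2
    obtain ⟨hμ1, hμ2, hμV, hocc⟩ := T.occ_F_pos hxc hxvar hxnc
    have hlabx : T.labE (p, q) = (T.lab (p, q) : ℕ∞) := T.labE_eq_lab hxc
    rcases hocc with hE | hE | hE | hE
    · have : T.lab (p, q) = k := by exact_mod_cast hE.symm.trans hEk
      rw [this] at hμV; exact hxneV hμV.symm
    · rw [hE] at hck
      rw [hEk] at mU; rw [hlabx] at mU
      exact absurd (lt_of_le_of_lt mU hck) (lt_irrefl _)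
    · rw [hE] at hcl
      rw [hEl] at mR; rw [hlabx] at mR
      exact absurd (lt_of_le_of_lt mR hcl) (lt_irrefl _)
    · have : T.lab (p, q) = l := by exact_mod_cast hE.symm.trans hEl
      rw [this] at hμV; exact hxneVl hμV.symm
  · -- (A,A)
    exact hne (by exact_mod_cast hEk.symm.trans hEl)

end SDT
namespace SDT

variable {r n : ℕ} (T : SDT r n)

/-- Homogeneity of boxedness across an interaction edge. -/
lemma hom_edge {k l : ℕ} (hk1 : 1 ≤ k) (hk2 : k ≤ n) (hl1 : 1 ≤ l) (hl2 : l ≤ n)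
    (hXV : T.Xsq k = T.Vsq l) :
    (BoxedSet r (T.supp k) ↔ BoxedSet r (T.supp l)) := by
  by_cases hkl : k = l
  · subst hkl; exact Iff.rfl
  obtain ⟨hFlc, hVlc, hlFl, hlVl, hfixl, hvarl, hadjl, -⟩ := T.FV_spec hl1 hl2
  obtain ⟨hx1, hx2, -, -, -, -, -, -, -⟩ := T.X_bounds hk1 hk2
  have hmk := T.moveCases_pos hk1 hk2
  have hEk0 := T.labE_F hk1 hk2
  rcases hxk : T.Xsq k with ⟨p, q⟩
  rw [hxk] at hXV hmk hx1 hx2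
  dsimp only at hmk
  have hVl : T.Vsq l = (p, q) := hXV.symm
  rw [hVl] at hVlc hlVl
  have hlabx : T.labE (p, q) = (l : ℕ∞) := by rw [T.labE_eq_lab hVlc, hlVl]
  obtain ⟨mU, mL, mD, mR⟩ := T.nbhd_mono p q hx1 hx2
  have hEl0 := T.labE_F hl1 hl2
  -- l's boxedness and fixed-square position, by adjacency case
  have hlside :
      (T.Fsq l = (p - 1, q) ∧ 2 ≤ p ∧ (BoxedSet r (T.supp l) ↔ p % 2 = 0)) ∨
      (T.Fsq l = (p, q - 1) ∧ 2 ≤ q ∧ (BoxedSet r (T.supp l) ↔ p % 2 = 0)) ∨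
      (T.Fsq l = (p + 1, q) ∧ (BoxedSet r (T.supp l) ↔ p % 2 = 1)) ∨
      (T.Fsq l = (p, q + 1) ∧ (BoxedSet r (T.supp l) ↔ p % 2 = 1)) := by
    obtain ⟨hf1, hf2⟩ := T.pos_cells _ hFlc
    rcases hadjl with hμa | hμa | hμa | hμa
    · left
      have hbl := T.boxed_iff_FV hl1 hl2 (Or.inl hμa)
      rw [hVl] at hμa hbl
      rw [Prod.ext_iff] at hμa; simp at hμa
      refine ⟨by rw [Prod.ext_iff]; simp; omega, by omega, ?_⟩
      exact hbl
    · right; left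
      have hbl := T.boxed_iff_FV hl1 hl2 (Or.inr hμa)
      rw [hVl] at hμa hbl
      rw [Prod.ext_iff] at hμa; simp at hμa
      refine ⟨by rw [Prod.ext_iff]; simp; omega, by omega, ?_⟩
      exact hbl
    · right; right; left
      have hbl := T.boxed_iff_VF hl1 hl2 (Or.inl hμa)
      rw [hVl] at hμa hbl
      exact ⟨hμa, hbl⟩
    · right; right; right
      have hbl := T.boxed_iff_VF hl1 hl2 (Or.inr hμa)
      rw [hVl] at hμa hbl
      exact ⟨hμa, hbl⟩
  rcases hmk with ⟨hFk, hck, hbk⟩ | ⟨hFk, hq2, hck, hbk⟩ | ⟨hFk, hck, hbk⟩ | ⟨hFk, hp2, hck, hbk⟩ <;>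
    rw [hFk] at hEk0 <;>
    rcases hlside with ⟨hFl, hp2', hbl⟩ | ⟨hFl, hq2', hbl⟩ | ⟨hFl, hbl⟩ | ⟨hFl, hbl⟩
  · -- (B, l-above) match (even/even)
    rw [hbk, hbl]
  · -- (B, l-left) match
    rw [hbk, hbl]
  · -- (B, l-below) : F l = F k : k = l, contra
    have hEl : T.labE (p + 1, q) = (l:ℕ∞) := by rw [← hFl]; exact hEl0
    exact absurd (by exact_mod_cast hEk0.symm.trans hEl) hkl
  · -- (B, l-right) : contra : k < labE(p,q+1) = l and l = labE x ≤ labE D = k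
    have hEl : T.labE (p, q + 1) = (l:ℕ∞) := by rw [← hFl]; exact hEl0
    rw [hEl] at hck
    rw [hEk0] at mD; rw [hlabx] at mD
    exact absurd (lt_of_le_of_lt mD hck) (lt_irrefl _)
  · -- (L, l-above) : contra : labE (p-1,q) = l < k and k = labE L ≤ labE x = l
    have hEl : T.labE (p - 1, q) = (l:ℕ∞) := by rw [← hFl]; exact hEl0
    rw [hEl] at hck
    rw [hEk0] at mL; rw [hlabx] at mL
    exact absurd (lt_of_le_of_lt mL hck) (lt_irrefl _)
  · -- (L, l-left) : F l = F k : contra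
    have hEl : T.labE (p, q - 1) = (l:ℕ∞) := by rw [← hFl]; exact hEl0
    exact absurd (by exact_mod_cast hEk0.symm.trans hEl) hkl
  · -- (L, l-below) match (odd/odd)
    rw [hbk, hbl]
  · -- (L, l-right) match
    rw [hbk, hbl]
  · -- (R, l-above) match (even/even)
    rw [hbk, hbl]
  · -- (R, l-left) match
    rw [hbk, hbl]
  · -- (R, l-below) : contra : k < labE (p+1,q) = l and l = labE x ≤ labE R = k
    have hEl : T.labE (p + 1, q) = (l:ℕ∞) := by rw [← hFl]; exact hEl0
    rw [hEl] at hck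
    rw [hEk0] at mR; rw [hlabx] at mR
    exact absurd (lt_of_le_of_lt mR hck) (lt_irrefl _)
  · -- (R, l-right) : F l = F k : contra
    have hEl : T.labE (p, q + 1) = (l:ℕ∞) := by rw [← hFl]; exact hEl0
    exact absurd (by exact_mod_cast hEk0.symm.trans hEl) hkl
  · -- (A, l-above) : F l = F k : contra
    have hEl : T.labE (p - 1, q) = (l:ℕ∞) := by rw [← hFl]; exact hEl0
    exact absurd (by exact_mod_cast hEk0.symm.trans hEl) hkl
  · -- (A, l-left) : contra : labE (p,q-1) = l < k and k = labE U ≤ labE x = l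
    have hEl : T.labE (p, q - 1) = (l:ℕ∞) := by rw [← hFl]; exact hEl0
    rw [hEl] at hck
    rw [hEk0] at mU; rw [hlabx] at mU
    exact absurd (lt_of_le_of_lt mU hck) (lt_irrefl _)
  · -- (A, l-below) match (odd/odd)
    rw [hbk, hbl]
  · -- (A, l-right) match
    rw [hbk, hbl]

lemma reach_mem {a b : ℕ} (h : Relation.ReflTransGen (cycStep T) a b)
    (ha1 : 1 ≤ a) (ha2 : a ≤ n) : 1 ≤ b ∧ b ≤ n := by
  induction h with
  | refl => exact ⟨ha1, ha2⟩
  | tail h1 h2 ih => exact T.cycStep_mem ih.1 ih.2 h2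

lemma reach_boxed {a b : ℕ} (h : Relation.ReflTransGen (cycStep T) a b)
    (ha1 : 1 ≤ a) (ha2 : a ≤ n) :
    (BoxedSet r (T.supp a) ↔ BoxedSet r (T.supp b)) := by
  induction h with
  | refl => exact Iff.rfl
  | @tail b c h1 h2 ih =>
    obtain ⟨hb1, hb2⟩ := T.reach_mem h1 ha1 ha2
    obtain ⟨hc1, hc2⟩ := T.cycStep_mem hb1 hb2 h2
    rw [ih]
    by_cases hbc : b = c
    · subst hbc; exact Iff.rfl
    rcases T.cycStep_cases hb1 hb2 hc1 hc2 hbc h2 with h' | h'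
    · exact T.hom_edge hb1 hb2 hc1 hc2 h'
    · exact (T.hom_edge hc1 hc2 hb1 hb2 h').symm

end SDT
namespace SDT

variable {r n : ℕ} (T : SDT r n)

lemma supp_zero_char (w : ℕ × ℕ) :
    w ∈ T.supp 0 ↔ (1 ≤ w.1 ∧ 1 ≤ w.2 ∧ w.1 + w.2 < r + 2) := by
  simp only [supp, Finset.mem_filter]
  constructor
  · rintro ⟨hw, hlw⟩
    obtain ⟨a1, a2⟩ := T.pos_cells w hw
    exact ⟨a1, a2, (T.core_zero w hw).1 hlw⟩
  · rintro ⟨a1, a2, a3⟩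
    have hw : w ∈ T.cells := by
      have := T.core_mem w.1 w.2 a1 a2 a3
      simpa using this
    exact ⟨hw, (T.core_zero w hw).2 a3⟩

lemma supp_card {k : ℕ} (h1 : 1 ≤ k) (h2 : k ≤ n) : (T.supp k).card = 2 := by
  rw [T.supp_eq h1 h2]
  rw [Finset.card_insert_of_notMem (by simp [T.F_ne_V h1 h2])]
  simp

lemma cells_eq_biUnion : T.cells = (Finset.range (n + 1)).biUnion T.supp := by
  ext z
  simp only [Finset.mem_biUnion, Finset.mem_range, supp, Finset.mem_filter]
  constructor
  · intro hz
    exact ⟨T.lab z, by have := T.lab_le z hz; omega, hz, rfl⟩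
  · rintro ⟨m, -, hz, -⟩
    exact hz

lemma cells_card_eq (T' : SDT r n) : T.cells.card = T'.cells.card := by
  rw [T.cells_eq_biUnion, T'.cells_eq_biUnion]
  rw [Finset.card_biUnion, Finset.card_biUnion]
  · apply Finset.sum_congr rfl
    intro m hm
    simp only [Finset.mem_range] at hm
    rcases Nat.eq_zero_or_pos m with rfl | hm1
    · congr 1
      ext w
      rw [T.supp_zero_char, T'.supp_zero_char]
    · rw [T.supp_card hm1 (by omega), T'.supp_card hm1 (by omega)]
  · intro a _ b _ hab
    simp only [Finset.disjoint_left, supp, Finset.mem_filter]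
    rintro z ⟨-, h1⟩ ⟨-, h2⟩
    exact hab (h1 ▸ h2.symm ▸ rfl)
  · intro a _ b _ hab
    simp only [Finset.disjoint_left, supp, Finset.mem_filter]
    rintro z ⟨-, h1⟩ ⟨-, h2⟩
    exact hab (h1 ▸ h2.symm ▸ rfl)

/-- Direction A: an unboxed member of a non-core open cycle forces a full corner. -/
lemma corner_of_nonboxed {c : Set ℕ} (hnco : NonCoreOpen T c) {l' : ℕ} (hl' : l' ∈ c)
    (hnb : ¬ BoxedSet r (T.supp l')) :
    ∃ i j : ℕ, IsTabCorner T i j ∧ (i, j) ∈ T.cells := by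
  obtain ⟨⟨k, hk1, hk2, rfl⟩, T', ⟨hMT1, hMT2⟩, hTne⟩ := hnco
  obtain ⟨hl'1, hl'2, hl'reach⟩ := hl'
  -- the difference is nonempty
  have hcard := T.cells_card_eq T'
  have hD : (T.cells \ T'.cells).Nonempty := by
    rw [Finset.sdiff_nonempty]
    intro hsub
    exact hTne (Finset.eq_of_subset_of_card_le hsub (le_of_eq hcard.symm)).symm
  obtain ⟨s, hsD, hmax⟩ := Finset.exists_max_image (T.cells \ T'.cells)
    (fun z => z.1 + z.2) hD
  obtain ⟨p, q⟩ := s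
  rw [Finset.mem_sdiff] at hsD
  obtain ⟨hsT, hsT'⟩ := hsD
  obtain ⟨hp1, hq1⟩ := T.pos_cells _ hsT
  dsimp only at hp1 hq1 hmax
  -- right and below neighbours are outside T
  have hR : (p, q + 1) ∉ T.cells := by
    intro h
    have h' : (p, q + 1) ∉ T'.cells := by
      intro h'
      exact hsT' (T'.young_row p q h' hq1)
    have := hmax (p, q + 1) (Finset.mem_sdiff.2 ⟨h, h'⟩)
    simp at this
  have hDn : (p + 1, q) ∉ T.cells := by
    intro h
    have h' : (p + 1, q) ∉ T'.cells := by
      intro h'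
      exact hsT' (T'.young_col p q h' hp1)
    have := hmax (p + 1, q) (Finset.mem_sdiff.2 ⟨h, h'⟩)
    simp at this
  -- the vacated square is non-core, with occupant m in the cycle
  have hnc : r + 2 ≤ p + q := by
    by_contra h
    exact hsT' (T'.core_mem p q hp1 hq1 (by omega))
  have hm0 : T.lab (p, q) ≠ 0 := by
    intro h
    have := (T.core_zero _ hsT).1 h
    omega
  set m := T.lab (p, q) with hmdef
  have hm1 : 1 ≤ m := by omega
  have hm2 : m ≤ n := T.lab_le _ hsT
  have hmc : m ∈ cyc T k := by
    by_contra hnotin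
    have := hMT2 m hm1 hm2 hnotin
    have hmem : (p, q) ∈ T'.supp m := by
      rw [this]
      simp only [supp, Finset.mem_filter]
      exact ⟨hsT, by first | rfl | trivial⟩
    exact hsT' (Finset.filter_subset _ _ hmem)
  obtain ⟨-, -, hmreach⟩ := hmc
  -- (p,q) is the variable square of m
  obtain ⟨hFmc, hVmc, hlFm, hlVm, hfixm, hvarm, hadjm, humem⟩ := T.FV_spec hm1 hm2
  have hVm : T.Vsq m = (p, q) := by
    rcases humem (p, q) hsT rfl with h | h
    · exfalso
      have hFin : T.Fsq m ∈ T'.cells := by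
        have h1 : T.Fsq m ∈ suppD' T m := by
          rw [(T.move_spec hm1 hm2).1]; simp
        rw [← hMT1 m ⟨hm1, hm2, hmreach⟩] at h1
        exact Finset.filter_subset _ _ h1
      rw [← h] at hFin
      exact hsT' hFin
    · exact h.symm
  -- boxedness of m is determined; homogeneity transfers non-boxedness from l'
  have hnbm : ¬ BoxedSet r (T.supp m) := by
    intro hb
    exact hnb (((T.reach_boxed hl'reach hk1 hk2).symm.trans
      (T.reach_boxed hmreach hk1 hk2)).2 hb)
  -- F m is above or to the left of (p,q)
  rcases hadjm with ha | ha | ha | ha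
  · -- F above
    have hbox := T.boxed_iff_FV hm1 hm2 (Or.inl ha)
    rw [hVm] at ha
    rw [hVm] at hbox
    have hodd : p % 2 = 1 := by
      rcases Nat.mod_two_eq_zero_or_one p with h | h
      · exact absurd (hbox.2 h) hnbm
      · exact h
    rw [Prod.ext_iff] at ha; simp at ha
    have hFpos : ((p - 1 : ℕ), q) ∈ T.cells := by
      rw [show ((p - 1 : ℕ), q) = T.Fsq m from by rw [Prod.ext_iff]; simp; omega]
      exact hFmc
    refine ⟨p, q, ⟨hp1, hq1, ⟨?_, hodd⟩, hR, hDn, ?_⟩, hsT⟩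
    · rw [hVm] at hvarm; exact hvarm
    · rcases Nat.lt_or_ge q 2 with hq | hq
      · exact Or.inr (Or.inl ⟨hFpos, by omega⟩)
      · refine Or.inl ⟨hFpos, ?_⟩
        have := T.young_row p (q - 1) (by rw [show q - 1 + 1 = q by omega]; exact hsT)
          (by omega)
        exact this
  · -- F left
    have hbox := T.boxed_iff_FV hm1 hm2 (Or.inr ha)
    rw [hVm] at ha
    rw [hVm] at hbox
    have hodd : p % 2 = 1 := by
      rcases Nat.mod_two_eq_zero_or_one p with h | h
      · exact absurd (hbox.2 h) hnbm
      · exact h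
    rw [Prod.ext_iff] at ha; simp at ha
    have hFpos : ((p : ℕ), q - 1) ∈ T.cells := by
      rw [show ((p : ℕ), q - 1) = T.Fsq m from by rw [Prod.ext_iff]; simp; omega]
      exact hFmc
    refine ⟨p, q, ⟨hp1, hq1, ⟨?_, hodd⟩, hR, hDn, ?_⟩, hsT⟩
    · rw [hVm] at hvarm; exact hvarm
    · rcases Nat.lt_or_ge p 2 with hp | hp
      · exact Or.inr (Or.inr ⟨hFpos, by omega⟩)
      · refine Or.inl ⟨?_, hFpos⟩
        have := T.young_col (p - 1) q (by rw [show p - 1 + 1 = p by omega]; exact hsT)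
          (by omega)
        exact this
  · -- F below : impossible
    rw [hVm] at ha
    exact absurd (by rw [← ha]; exact hFmc) hDn
  · -- F right : impossible
    rw [hVm] at ha
    exact absurd (by rw [← ha]; exact hFmc) hR

end SDT
namespace SDT

variable {r n : ℕ} (T : SDT r n)

lemma corner_noncore {p q : ℕ} (hcorn : IsTabCorner T p q) : r + 2 ≤ p + q := by
  obtain ⟨hp1, hq1, ⟨hvar, hodd⟩, hR, hD, -⟩ := hcorn
  have hpar : (p + q) % 2 = r % 2 := hvar
  by_contra h
  exact hR (T.core_mem p (q + 1) hp1 (by omega) (by omega))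

lemma corner_occ {p q : ℕ} (hcorn : IsTabCorner T p q) (hfull : (p, q) ∈ T.cells) :
    1 ≤ T.lab (p, q) ∧ T.lab (p, q) ≤ n ∧ T.Vsq (T.lab (p, q)) = (p, q) ∧
    (T.Fsq (T.lab (p, q)) = (p - 1, q) ∨ T.Fsq (T.lab (p, q)) = (p, q - 1)) ∧
    ¬ BoxedSet r (T.supp (T.lab (p, q))) := by
  have hnc := T.corner_noncore hcorn
  obtain ⟨hp1, hq1, ⟨hvar, hodd⟩, hR, hD, -⟩ := hcorn
  obtain ⟨hk1, hk2, hVk⟩ := T.occ_V hfull hvar (by simpa using hnc)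
  obtain ⟨hFc, -, -, -, -, -, hadj, -⟩ := T.FV_spec hk1 hk2
  obtain ⟨hf1, hf2⟩ := T.pos_cells _ hFc
  refine ⟨hk1, hk2, hVk, ?_⟩
  rcases hadj with ha | ha | ha | ha
  · have hbox := T.boxed_iff_FV hk1 hk2 (Or.inl ha)
    rw [hVk] at ha hbox
    rw [Prod.ext_iff] at ha; simp at ha
    refine ⟨Or.inl (by rw [Prod.ext_iff]; simp; omega), ?_⟩
    rw [hbox]; simp; omega
  · have hbox := T.boxed_iff_FV hk1 hk2 (Or.inr ha)
    rw [hVk] at ha hbox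
    rw [Prod.ext_iff] at ha; simp at ha
    refine ⟨Or.inr (by rw [Prod.ext_iff]; simp; omega), ?_⟩
    rw [hbox]; simp; omega
  · rw [hVk] at ha
    exact absurd (by rw [← ha]; exact hFc) hD
  · rw [hVk] at ha
    exact absurd (by rw [← ha]; exact hFc) hR

lemma corner_no_target {p q : ℕ} (hcorn : IsTabCorner T p q) (hfull : (p, q) ∈ T.cells) :
    ∀ l : ℕ, 1 ≤ l → l ≤ n → T.Xsq l ≠ (p, q) := by
  have hnc := T.corner_noncore hcorn
  obtain ⟨hk1, hk2, hVk, hFk, -⟩ := T.corner_occ hcorn hfull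
  obtain ⟨hp1, hq1, ⟨hvar, hodd⟩, hR, hD, -⟩ := hcorn
  have hlabx : T.labE (p, q) = (T.lab (p, q) : ℕ∞) := T.labE_eq_lab hfull
  have hEk0 := T.labE_F hk1 hk2
  obtain ⟨mU, mL, mD, mR⟩ := T.nbhd_mono p q hp1 hq1
  intro l hl1 hl2 hXl
  obtain ⟨-, -, -, -, hxneVl, -, -, -, -⟩ := T.X_bounds hl1 hl2
  rw [hXl] at hxneVl
  have hml := T.moveCases_pos hl1 hl2
  rw [hXl] at hml
  dsimp only at hml
  have hEl0 := T.labE_F hl1 hl2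
  rcases hml with ⟨hFl, -, -⟩ | ⟨hFl, -, hcl, -⟩ | ⟨hFl, -, -⟩ | ⟨hFl, -, hcl, -⟩
  · exact hD (by rw [← hFl]; exact (T.FV_spec hl1 hl2).1)
  · -- F l = (p, q-1), condition labE (p-1,q) < l
    rcases hFk with hFk | hFk
    · -- F k₀ = (p-1,q) : labE (p-1,q) = k₀ < l, but l = labE (p,q-1) ≤ labE (p,q) = k₀
      rw [hFk] at hEk0
      rw [hEk0] at hcl
      rw [hFl] at hEl0
      rw [hEl0, hlabx] at mL
      exact absurd (lt_of_le_of_lt mL hcl) (lt_irrefl _)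
    · -- F k₀ = F l : k₀ = l, so X l = V l, contradiction
      rw [hFk] at hEk0
      rw [hFl] at hEl0
      have : T.lab (p, q) = l := by exact_mod_cast hEk0.symm.trans hEl0
      rw [this] at hVk
      exact hxneVl hVk.symm
  · exact hR (by rw [← hFl]; exact (T.FV_spec hl1 hl2).1)
  · -- F l = (p-1, q), condition labE (p,q-1) < l
    rcases hFk with hFk | hFk
    · rw [hFk] at hEk0
      rw [hFl] at hEl0
      have : T.lab (p, q) = l := by exact_mod_cast hEk0.symm.trans hEl0
      rw [this] at hVk
      exact hxneVl hVk.symm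
    · rw [hFk] at hEk0
      rw [hEk0] at hcl
      rw [hFl] at hEl0
      rw [hEl0, hlabx] at mU
      exact absurd (lt_of_le_of_lt mU hcl) (lt_irrefl _)

lemma cyc_closure {k m l : ℕ} (hm : m ∈ cyc T k) (hl1 : 1 ≤ l) (hl2 : l ≤ n)
    (h : T.Xsq m = T.Vsq l ∨ T.Xsq l = T.Vsq m) : l ∈ cyc T k := by
  obtain ⟨hm1, hm2, hre⟩ := hm
  refine ⟨hl1, hl2, hre.tail ?_⟩
  rcases h with h | h
  · exact T.cycStep_of_XV hm1 hm2 hl1 hl2 h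
  · exact T.cycStep_symm (T.cycStep_of_XV hl1 hl2 hm1 hm2 h)

/-- every member of the corner cycle other than the corner domino has a parent
in the cycle which refills its variable square. -/
lemma corner_parent {p q : ℕ} (hcorn : IsTabCorner T p q) (hfull : (p, q) ∈ T.cells)
    {m : ℕ} (hm : m ∈ cyc T (T.lab (p, q))) (hmne : m ≠ T.lab (p, q)) :
    ∃ l, l ∈ cyc T (T.lab (p, q)) ∧ T.Xsq l = T.Vsq m := by
  obtain ⟨hk1, hk2, hVk, -, -⟩ := T.corner_occ hcorn hfull
  have hnt := T.corner_no_target hcorn hfull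
  set k₀ := T.lab (p, q) with hk₀
  -- the directed refill relation
  set E : ℕ → ℕ → Prop := fun a b =>
    (1 ≤ a ∧ a ≤ n) ∧ (1 ≤ b ∧ b ≤ n) ∧ T.Xsq a = T.Vsq b with hE
  have hEstep : ∀ a b, E a b → cycStep T a b := by
    rintro a b ⟨⟨ha1, ha2⟩, ⟨hb1, hb2⟩, hab⟩
    exact T.cycStep_of_XV ha1 ha2 hb1 hb2 hab
  have claim1 : ∀ m', Relation.ReflTransGen (cycStep T) k₀ m' → 1 ≤ m' → m' ≤ n →
      Relation.ReflTransGen E k₀ m' := by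
    intro m' h
    induction h with
    | refl => intro _ _; exact Relation.ReflTransGen.refl
    | @tail b c h1 h2 ih =>
      intro hc1 hc2
      obtain ⟨hb1, hb2⟩ := T.reach_mem h1 hk1 hk2
      have hDR := ih hb1 hb2
      by_cases hbc : b = c
      · exact hbc ▸ hDR
      rcases T.cycStep_cases hb1 hb2 hc1 hc2 hbc h2 with h' | h'
      · exact hDR.tail ⟨⟨hb1, hb2⟩, ⟨hc1, hc2⟩, h'⟩
      · -- X c = V b : c is the parent of b; b ≠ k₀, so b has a parent w = c
        have hbk₀ : b ≠ k₀ := by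
          intro hb
          rw [hb, hVk] at h'
          exact hnt c hc1 hc2 h'
        rcases hDR.cases_tail with hb | ⟨w, hw, hEwb⟩
        · exact absurd hb hbk₀
        · obtain ⟨⟨hw1, hw2⟩, -, hXw⟩ := hEwb
          have : w = c := T.X_inj hw1 hw2 hc1 hc2 (by rw [hXw, h'])
          exact this ▸ hw
  obtain ⟨hm1, hm2, hre⟩ := hm
  have hDR := claim1 m hre hm1 hm2
  rcases hDR.cases_tail with hb | ⟨w, hw, hEwb⟩
  · exact absurd hb hmne
  · obtain ⟨⟨hw1, hw2⟩, -, hXw⟩ := hEwb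
    refine ⟨w, ⟨hw1, hw2, ?_⟩, hXw⟩
    exact Relation.ReflTransGen.mono hEstep _ _ hw

end SDT
namespace SDT

variable {r n : ℕ} (T : SDT r n)

lemma fixed_ne_var {a b : ℕ × ℕ} (ha : FixedSq r a) (hb : VariableSq r b) : a ≠ b := by
  rintro rfl; exact not_var_of_fixed ha hb

/-- Direction B: a full corner gives a witness that `T` is not somewhat special. -/
lemma corner_not_ss {p q : ℕ} (hcorn : IsTabCorner T p q) (hfull : (p, q) ∈ T.cells) :
    ¬ SomewhatSpecial T := by
  classical
  obtain ⟨hk1, hk2, hVk, hFkpos, hnbox⟩ := T.corner_occ hcorn hfull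
  have hnt := T.corner_no_target hcorn hfull
  have hncq := T.corner_noncore hcorn
  obtain ⟨hp1, hq1, ⟨hvarpq, hodd⟩, hR, hDn, -⟩ := id hcorn
  have hk₀c : T.lab (p, q) ∈ cyc T (T.lab (p, q)) := ⟨hk1, hk2, Relation.ReflTransGen.refl⟩
  have hXdata : ∀ m ∈ cyc T (T.lab (p, q)), 1 ≤ (T.Xsq m).1 ∧ 1 ≤ (T.Xsq m).2 ∧
      VariableSq r (T.Xsq m) ∧ r + 2 ≤ (T.Xsq m).1 + (T.Xsq m).2 := by
    intro m hm
    obtain ⟨h1, h2, h3, h4, -⟩ := T.X_bounds hm.1 hm.2.1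
    exact ⟨h1, h2, h3, h4⟩
  set XS : Finset (ℕ × ℕ) :=
    ((Finset.Icc 1 n).filter (fun m => m ∈ cyc T (T.lab (p, q)))).image T.Xsq with hXSdef
  have hmemXS : ∀ z, z ∈ XS ↔ ∃ m ∈ cyc T (T.lab (p, q)), T.Xsq m = z := by
    intro z
    simp only [hXSdef, Finset.mem_image, Finset.mem_filter, Finset.mem_Icc]
    constructor
    · rintro ⟨m, ⟨-, hm⟩, hx⟩; exact ⟨m, hm, hx⟩
    · rintro ⟨m, hm, hx⟩; exact ⟨m, ⟨⟨hm.1, hm.2.1⟩, hm⟩, hx⟩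
  have hcornXS : (p, q) ∉ XS := by
    rw [hmemXS]
    rintro ⟨m, hm, hx⟩
    exact hnt m hm.1 hm.2.1 hx
  set cells' : Finset (ℕ × ℕ) := (T.cells.erase (p, q)) ∪ XS with hcells'def
  have hmemcells' : ∀ z, z ∈ cells' ↔ ((z ∈ T.cells ∧ z ≠ (p, q)) ∨ z ∈ XS) := by
    intro z
    simp only [hcells'def, Finset.mem_union, Finset.mem_erase]
    tauto
  set lab' : ℕ × ℕ → ℕ := fun z =>
    if h : ∃ m, m ∈ cyc T (T.lab (p, q)) ∧ T.Xsq m = z then h.choose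
    else if z = (p, q) then 0 else T.lab z with hlab'def
  have hlab'X : ∀ m ∈ cyc T (T.lab (p, q)), ∀ z, T.Xsq m = z → lab' z = m := by
    intro m hm z hz
    have h : ∃ m', m' ∈ cyc T (T.lab (p, q)) ∧ T.Xsq m' = z := ⟨m, hm, hz⟩
    rw [hlab'def]
    simp only [dif_pos h]
    obtain ⟨hc, hx⟩ := h.choose_spec
    exact T.X_inj hc.1 hc.2.1 hm.1 hm.2.1 (by rw [hx, ← hz])
  have hlab'old : ∀ z, z ∉ XS → z ≠ (p, q) → lab' z = T.lab z := by
    intro z hz hzc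
    rw [hlab'def]
    have h : ¬ ∃ m, m ∈ cyc T (T.lab (p, q)) ∧ T.Xsq m = z := by
      rintro ⟨m, hm, hx⟩
      exact hz ((hmemXS z).2 ⟨m, hm, hx⟩)
    simp only [dif_neg h, if_neg hzc]
  have hlab'corner : lab' (p, q) = 0 := by
    rw [hlab'def]
    have h : ¬ ∃ m, m ∈ cyc T (T.lab (p, q)) ∧ T.Xsq m = (p, q) := by
      rintro ⟨m, hm, hx⟩
      exact hnt m hm.1 hm.2.1 hx
    simp only [dif_neg h]
    simp
  have hVrefill : ∀ m ∈ cyc T (T.lab (p, q)), m ≠ T.lab (p, q) → T.Vsq m ∈ XS := by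
    intro m hm hne
    obtain ⟨l, hl, hx⟩ := T.corner_parent hcorn hfull hm hne
    exact (hmemXS _).2 ⟨l, hl, hx⟩
  have hXSvar : ∀ z ∈ XS, VariableSq r z ∧ 1 ≤ z.1 ∧ 1 ≤ z.2 ∧ r + 2 ≤ z.1 + z.2 := by
    intro z hz
    obtain ⟨m, hm, hx⟩ := (hmemXS z).1 hz
    obtain ⟨h1, h2, h3, h4⟩ := hXdata m hm
    rw [hx] at h1 h2 h3 h4
    exact ⟨h3, h1, h2, h4⟩
  -- the two filter characterizations
  have hfilt_in : ∀ m ∈ cyc T (T.lab (p, q)), ∀ z,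
      (z ∈ cells' ∧ lab' z = m) ↔ (z = T.Fsq m ∨ z = T.Xsq m) := by
    intro m hm z
    have hm1 := hm.1
    have hm2 := hm.2.1
    obtain ⟨hFc, hVc, hlF, hlV, hfix, hvar, -, humem⟩ := T.FV_spec hm1 hm2
    have hFne : T.Fsq m ≠ (p, q) := fixed_ne_var hfix hvarpq
    have hFXS : T.Fsq m ∉ XS := by
      intro h
      exact fixed_ne_var hfix ((hXSvar _ h).1) rfl
    constructor
    · rintro ⟨hz, hlz⟩
      by_cases hzXS : z ∈ XS
      · obtain ⟨m', hm', hx⟩ := (hmemXS z).1 hzXS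
        rw [hlab'X m' hm' z hx] at hlz
        right; rw [← hx, hlz]
      · rcases (hmemcells' z).1 hz with ⟨hzT, hzc⟩ | h
        · rw [hlab'old z hzXS hzc] at hlz
          rcases humem z hzT hlz with h | h
          · exact Or.inl h
          · exfalso
            by_cases hmk : m = T.lab (p, q)
            · rw [hmk] at h
              rw [hVk] at h
              exact hzc h
            · exact hzXS (h ▸ hVrefill m hm hmk)
        · exact absurd h hzXS
    · rintro (rfl | rfl)
      · refine ⟨(hmemcells' _).2 (Or.inl ⟨hFc, hFne⟩), ?_⟩
        rw [hlab'old _ hFXS hFne]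
        exact hlF
      · refine ⟨(hmemcells' _).2 (Or.inr ((hmemXS _).2 ⟨m, hm, rfl⟩)), ?_⟩
        exact hlab'X m hm _ rfl
  have hfilt_out : ∀ m, 1 ≤ m → m ≤ n → m ∉ cyc T (T.lab (p, q)) → ∀ z,
      (z ∈ cells' ∧ lab' z = m) ↔ (z = T.Fsq m ∨ z = T.Vsq m) := by
    intro m hm1 hm2 hmnc z
    obtain ⟨hFc, hVc, hlF, hlV, hfix, hvar, -, humem⟩ := T.FV_spec hm1 hm2
    have hFne : T.Fsq m ≠ (p, q) := fixed_ne_var hfix hvarpq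
    have hFXS : T.Fsq m ∉ XS := by
      intro h
      exact fixed_ne_var hfix ((hXSvar _ h).1) rfl
    have hVne : T.Vsq m ≠ (p, q) := by
      intro h
      apply hmnc
      have : m = T.lab (p, q) := by rw [← hlV, h]
      rw [this]; exact hk₀c
    have hVXS : T.Vsq m ∉ XS := by
      intro h
      obtain ⟨m', hm', hx⟩ := (hmemXS _).1 h
      exact hmnc (T.cyc_closure hm' hm1 hm2 (Or.inl hx))
    constructor
    · rintro ⟨hz, hlz⟩
      by_cases hzXS : z ∈ XS
      · obtain ⟨m', hm', hx⟩ := (hmemXS z).1 hzXS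
        rw [hlab'X m' hm' z hx] at hlz
        exact absurd (hlz ▸ hm') hmnc
      · rcases (hmemcells' z).1 hz with ⟨hzT, hzc⟩ | h
        · rw [hlab'old z hzXS hzc] at hlz
          exact humem z hzT hlz
        · exact absurd h hzXS
    · rintro (rfl | rfl)
      · refine ⟨(hmemcells' _).2 (Or.inl ⟨hFc, hFne⟩), ?_⟩
        rw [hlab'old _ hFXS hFne]; exact hlF
      · refine ⟨(hmemcells' _).2 (Or.inl ⟨hVc, hVne⟩), ?_⟩
        rw [hlab'old _ hVXS hVne]; exact hlV
  -- now build the moved tableau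
  have hyoung_row : ∀ i j : ℕ, (i, j + 1) ∈ cells' → 1 ≤ j → (i, j) ∈ cells' := by
    intro i j hz hj
    rcases (hmemcells' _).1 hz with ⟨hzT, hzc⟩ | hzXS
    · have hij : (i, j) ∈ T.cells := T.young_row i j hzT hj
      refine (hmemcells' _).2 (Or.inl ⟨hij, ?_⟩)
      intro h
      rw [Prod.ext_iff] at h; simp at h
      rw [h.1, h.2] at hzT
      exact hR hzT
    · obtain ⟨m, hm, hx⟩ := (hmemXS _).1 hzXS
      obtain ⟨-, -, -, -, -, -, hleft, -, -⟩ := T.X_bounds hm.1 hm.2.1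
      rw [hx] at hleft
      dsimp only at hleft
      rw [show (j + 1 - 1 : ℕ) = j by omega] at hleft
      have hne : T.labE (i, j) ≠ ⊤ := by
        intro h
        rw [h] at hleft
        exact absurd (top_le_iff.1 hleft) (ENat.coe_ne_top m)
      obtain ⟨h1, h2, h3, -⟩ := hXdata m hm
      rw [hx] at h1 h3
      dsimp only at h1 h3
      rcases T.labE_lt_top hne with h | h | h
      · omega
      · simp at h; omega
      · refine (hmemcells' _).2 (Or.inl ⟨h, ?_⟩)
        intro hpq
        rw [Prod.ext_iff] at hpq; simp at hpq
        have : (p + q) % 2 = r % 2 := hvarpq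
        have : (i + (j + 1)) % 2 = r % 2 := h3
        omega
  have hyoung_col : ∀ i j : ℕ, (i + 1, j) ∈ cells' → 1 ≤ i → (i, j) ∈ cells' := by
    intro i j hz hi
    rcases (hmemcells' _).1 hz with ⟨hzT, hzc⟩ | hzXS
    · have hij : (i, j) ∈ T.cells := T.young_col i j hzT hi
      refine (hmemcells' _).2 (Or.inl ⟨hij, ?_⟩)
      intro h
      rw [Prod.ext_iff] at h; simp at h
      rw [h.1, h.2] at hzT
      exact hDn hzT
    · obtain ⟨m, hm, hx⟩ := (hmemXS _).1 hzXS
      obtain ⟨-, -, -, -, -, hup, -, -, -⟩ := T.X_bounds hm.1 hm.2.1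
      rw [hx] at hup
      dsimp only at hup
      rw [show (i + 1 - 1 : ℕ) = i by omega] at hup
      have hne : T.labE (i, j) ≠ ⊤ := by
        intro h
        rw [h] at hup
        exact absurd (top_le_iff.1 hup) (ENat.coe_ne_top m)
      obtain ⟨h1, h2, h3, -⟩ := hXdata m hm
      rw [hx] at h2 h3
      dsimp only at h2 h3
      rcases T.labE_lt_top hne with h | h | h
      · simp at h; omega
      · omega
      · refine (hmemcells' _).2 (Or.inl ⟨h, ?_⟩)
        intro hpq
        rw [Prod.ext_iff] at hpq; simp at hpq
        have : (p + q) % 2 = r % 2 := hvarpq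
        have : ((i + 1) + j) % 2 = r % 2 := h3
        omega
  set T' : SDT r n :=
    { cells := cells'
      lab := lab'
      lab_outside := by
        intro z hz
        have hzXS : z ∉ XS := fun h => hz ((hmemcells' z).2 (Or.inr h))
        by_cases hzc : z = (p, q)
        · rw [hzc]; exact hlab'corner
        · rw [hlab'old z hzXS hzc]
          apply T.lab_outside
          intro hzT
          exact hz ((hmemcells' z).2 (Or.inl ⟨hzT, hzc⟩))
      pos_cells := by
        intro z hz
        rcases (hmemcells' z).1 hz with ⟨hzT, -⟩ | hzXS
        · exact T.pos_cells z hzT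
        · obtain ⟨-, h1, h2, -⟩ := hXSvar z hzXS
          exact ⟨h1, h2⟩
      young_row := hyoung_row
      young_col := hyoung_col
      core_mem := by
        intro i j hi hj hij
        refine (hmemcells' _).2 (Or.inl ⟨T.core_mem i j hi hj hij, ?_⟩)
        intro h
        rw [Prod.ext_iff] at h; simp at h
        omega
      core_zero := by
        intro z hz
        by_cases hzXS : z ∈ XS
        · obtain ⟨m, hm, hx⟩ := (hmemXS z).1 hzXS
          rw [hlab'X m hm z hx]
          obtain ⟨-, -, -, hnc⟩ := hXSvar z hzXS
          have hm1 := hm.1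
          constructor
          · intro h; omega
          · intro h; omega
        · rcases (hmemcells' z).1 hz with ⟨hzT, hzc⟩ | h
          · rw [hlab'old z hzXS hzc]
            exact T.core_zero z hzT
          · exact absurd h hzXS
      lab_le := by
        intro z hz
        by_cases hzXS : z ∈ XS
        · obtain ⟨m, hm, hx⟩ := (hmemXS z).1 hzXS
          rw [hlab'X m hm z hx]
          exact hm.2.1
        · rcases (hmemcells' z).1 hz with ⟨hzT, hzc⟩ | h
          · rw [hlab'old z hzXS hzc]
            exact T.lab_le z hzT
          · exact absurd h hzXS
      domino := by
        intro k hkk1 hkk2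
        by_cases hkc : k ∈ cyc T (T.lab (p, q))
        · have hin := hfilt_in k hkc
          have hFmem : T.Fsq k ∈ cells' ∧ lab' (T.Fsq k) = k := (hin _).2 (Or.inl rfl)
          have hXmem : T.Xsq k ∈ cells' ∧ lab' (T.Xsq k) = k := (hin _).2 (Or.inr rfl)
          have huniq : ∀ z ∈ cells', lab' z = k → z = T.Fsq k ∨ z = T.Xsq k :=
            fun z hz hlz => (hin z).1 ⟨hz, hlz⟩
          rcases T.moveCases_pos hkc.1 hkc.2.1 with ⟨hF, -⟩ | ⟨hF, h2, -⟩ | ⟨hF, -⟩ | ⟨hF, h2, -⟩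
          · refine ⟨T.Xsq k, T.Fsq k, hXmem.1, hFmem.1, ?_, hXmem.2, hFmem.2, ?_⟩
            · left; rw [hF]
            · intro z hz hlz
              rcases huniq z hz hlz with h | h
              · exact Or.inr h
              · exact Or.inl h
          · refine ⟨T.Fsq k, T.Xsq k, hFmem.1, hXmem.1, ?_, hFmem.2, hXmem.2, ?_⟩
            · right
              rw [hF, Prod.ext_iff]; simp; omega
            · intro z hz hlz
              exact huniq z hz hlz
          · refine ⟨T.Xsq k, T.Fsq k, hXmem.1, hFmem.1, ?_, hXmem.2, hFmem.2, ?_⟩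
            · right; rw [hF]
            · intro z hz hlz
              rcases huniq z hz hlz with h | h
              · exact Or.inr h
              · exact Or.inl h
          · refine ⟨T.Fsq k, T.Xsq k, hFmem.1, hXmem.1, ?_, hFmem.2, hXmem.2, ?_⟩
            · left
              rw [hF, Prod.ext_iff]; simp; omega
            · intro z hz hlz
              exact huniq z hz hlz
        · have hout := hfilt_out k hkk1 hkk2 hkc
          have hFmem : T.Fsq k ∈ cells' ∧ lab' (T.Fsq k) = k := (hout _).2 (Or.inl rfl)
          have hVmem : T.Vsq k ∈ cells' ∧ lab' (T.Vsq k) = k := (hout _).2 (Or.inr rfl)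
          have huniq : ∀ z ∈ cells', lab' z = k → z = T.Fsq k ∨ z = T.Vsq k :=
            fun z hz hlz => (hout z).1 ⟨hz, hlz⟩
          obtain ⟨-, -, -, -, -, -, hadj, -⟩ := T.FV_spec hkk1 hkk2
          rcases hadj with ha | ha | ha | ha
          · exact ⟨T.Fsq k, T.Vsq k, hFmem.1, hVmem.1, Or.inl ha, hFmem.2, hVmem.2,
              fun z hz hlz => huniq z hz hlz⟩
          · exact ⟨T.Fsq k, T.Vsq k, hFmem.1, hVmem.1, Or.inr ha, hFmem.2, hVmem.2,
              fun z hz hlz => huniq z hz hlz⟩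
          · refine ⟨T.Vsq k, T.Fsq k, hVmem.1, hFmem.1, Or.inl ha, hVmem.2, hFmem.2, ?_⟩
            intro z hz hlz
            rcases huniq z hz hlz with h | h
            · exact Or.inr h
            · exact Or.inl h
          · refine ⟨T.Vsq k, T.Fsq k, hVmem.1, hFmem.1, Or.inr ha, hVmem.2, hFmem.2, ?_⟩
            intro z hz hlz
            rcases huniq z hz hlz with h | h
            · exact Or.inr h
            · exact Or.inl h
      row_mono := by
        intro i j hz hz'
        by_cases h1 : (i, j) ∈ XS <;> by_cases h2 : (i, j + 1) ∈ XS
        · exfalso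
          have := (hXSvar _ h1).1
          have := (hXSvar _ h2).1
          unfold VariableSq at *
          omega
        · obtain ⟨m, hm, hx⟩ := (hmemXS _).1 h1
          rw [hlab'X m hm _ hx]
          obtain ⟨-, -, -, -, -, -, -, -, hright⟩ := T.X_bounds hm.1 hm.2.1
          rw [hx] at hright
          dsimp only at hright
          rcases (hmemcells' _).1 hz' with ⟨hzT, hzc⟩ | h
          · rw [hlab'old _ h2 hzc]
            rw [T.labE_eq_lab hzT] at hright
            exact_mod_cast hright
          · exact absurd h h2
        · obtain ⟨m, hm, hx⟩ := (hmemXS _).1 h2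
          rw [hlab'X m hm _ hx]
          obtain ⟨-, -, -, -, -, -, hleft, -, -⟩ := T.X_bounds hm.1 hm.2.1
          rw [hx] at hleft
          dsimp only at hleft
          rw [show (j + 1 - 1 : ℕ) = j by omega] at hleft
          rcases (hmemcells' _).1 hz with ⟨hzT, hzc⟩ | h
          · rw [hlab'old _ h1 hzc]
            rw [T.labE_eq_lab hzT] at hleft
            exact_mod_cast hleft
          · exact absurd h h1
        · rcases (hmemcells' _).1 hz with ⟨hzT, hzc⟩ | h
          · rcases (hmemcells' _).1 hz' with ⟨hzT', hzc'⟩ | h'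
            · rw [hlab'old _ h1 hzc, hlab'old _ h2 hzc']
              exact T.row_mono i j hzT hzT'
            · exact absurd h' h2
          · exact absurd h h1
      col_mono := by
        intro i j hz hz'
        by_cases h1 : (i, j) ∈ XS <;> by_cases h2 : (i + 1, j) ∈ XS
        · exfalso
          have := (hXSvar _ h1).1
          have := (hXSvar _ h2).1
          unfold VariableSq at *
          omega
        · obtain ⟨m, hm, hx⟩ := (hmemXS _).1 h1
          rw [hlab'X m hm _ hx]
          obtain ⟨-, -, -, -, -, -, -, hdown, -⟩ := T.X_bounds hm.1 hm.2.1
          rw [hx] at hdown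
          dsimp only at hdown
          rcases (hmemcells' _).1 hz' with ⟨hzT, hzc⟩ | h
          · rw [hlab'old _ h2 hzc]
            rw [T.labE_eq_lab hzT] at hdown
            exact_mod_cast hdown
          · exact absurd h h2
        · obtain ⟨m, hm, hx⟩ := (hmemXS _).1 h2
          rw [hlab'X m hm _ hx]
          obtain ⟨-, -, -, -, -, hup, -, -, -⟩ := T.X_bounds hm.1 hm.2.1
          rw [hx] at hup
          dsimp only at hup
          rw [show (i + 1 - 1 : ℕ) = i by omega] at hup
          rcases (hmemcells' _).1 hz with ⟨hzT, hzc⟩ | h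
          · rw [hlab'old _ h1 hzc]
            rw [T.labE_eq_lab hzT] at hup
            exact_mod_cast hup
          · exact absurd h h1
        · rcases (hmemcells' _).1 hz with ⟨hzT, hzc⟩ | h
          · rcases (hmemcells' _).1 hz' with ⟨hzT', hzc'⟩ | h'
            · rw [hlab'old _ h1 hzc, hlab'old _ h2 hzc']
              exact T.col_mono i j hzT hzT'
            · exact absurd h' h2
          · exact absurd h h1 } with hT'def
  -- T' realizes moving through the cycle
  have hsupp_in : ∀ l ∈ cyc T (T.lab (p, q)), T'.supp l = suppD' T l := by
    intro l hl
    rw [(T.move_spec hl.1 hl.2.1).1]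
    ext z
    simp only [supp, Finset.mem_filter, Finset.mem_insert, Finset.mem_singleton]
    exact hfilt_in l hl z
  have hsupp_out : ∀ l, 1 ≤ l → l ≤ n → l ∉ cyc T (T.lab (p, q)) → T'.supp l = T.supp l := by
    intro l h1 h2 hnc
    rw [T.supp_eq h1 h2]
    ext z
    simp only [supp, Finset.mem_filter, Finset.mem_insert, Finset.mem_singleton]
    exact hfilt_out l h1 h2 hnc z
  have hcellsne : T'.cells ≠ T.cells := by
    intro h
    have : (p, q) ∈ T'.cells := h ▸ hfull
    rcases (hmemcells' _).1 this with ⟨-, hc⟩ | hc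
    · exact hc rfl
    · exact hcornXS hc
  intro hSS
  have hNCO : NonCoreOpen T (cyc T (T.lab (p, q))) :=
    ⟨⟨T.lab (p, q), hk1, hk2, rfl⟩, T', ⟨hsupp_in, hsupp_out⟩, hcellsne⟩
  exact hnbox (hSS _ hNCO _ hk₀c)

end SDT
namespace SDT

variable {r n : ℕ}

lemma main_iff (T : SDT r n) :
    SomewhatSpecial T ↔ ∀ i j : ℕ, IsTabCorner T i j → (i, j) ∉ T.cells := by
  constructor
  · intro hSS i j hcorn hmem
    exact T.corner_not_ss hcorn hmem hSS
  · intro hcorners c hNCO l hl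
    by_contra hnb
    obtain ⟨i, j, hcorn, hmem⟩ := T.corner_of_nonboxed hNCO hl hnb
    exact hcorners i j hcorn hmem

end SDT

/-- `T` is somewhat special iff all of its corners are empty; in particular,
being somewhat special depends only on the shape of `T`. -/
theorem somewhatSpecial_iff_corners_empty (r n : ℕ) (T : SDT r n) :
    (SomewhatSpecial T ↔ ∀ i j : ℕ, IsTabCorner T i j → (i, j) ∉ T.cells) ∧
    (∀ T' : SDT r n, T'.cells = T.cells →
      (SomewhatSpecial T' ↔ SomewhatSpecial T)) := by
  refine ⟨T.main_iff, ?_⟩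
  intro T' hcells
  rw [T.main_iff, T'.main_iff]
  have hiff : ∀ i j : ℕ, IsTabCorner T' i j ↔ IsTabCorner T i j := by
    intro i j
    unfold IsTabCorner
    rw [hcells]
  constructor
  · intro h i j hc
    have := h i j ((hiff i j).2 hc)
    rwa [hcells] at this
  · intro h i j hc
    have := h i j ((hiff i j).1 hc)
    rwa [← hcells] at this
end

section
/- In a standard domino tableau, moving through a cycle c changes the boxing of every domino in c: if the dominoes of c are boxed in T, they are unboxed in MT(T,c), and vice versa; moreover all dominoes in a single cycle have the same boxing. -/
/-! ### Auxiliary lemmas -/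

lemma mem_supp {r n : ℕ} {T : SDT r n} {k : ℕ} {c : ℕ × ℕ} :
    c ∈ T.supp k ↔ c ∈ T.cells ∧ T.lab c = k := Finset.mem_filter

lemma supp_pos {r n : ℕ} (T : SDT r n) (k : ℕ) :
    ∀ c ∈ T.supp k, 1 ≤ c.1 ∧ 1 ≤ c.2 :=
  fun c hc => T.pos_cells c (Finset.filter_subset _ _ hc)

lemma labE_mem {r n : ℕ} {T : SDT r n} {c : ℕ × ℕ} (hc : c ∈ T.cells) :
    T.labE c = (T.lab c : ℕ∞) := by
  have hp := T.pos_cells c hc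
  unfold SDT.labE
  rw [if_neg (by omega), if_pos hc]

lemma boxedV (r i j : ℕ) (hj : 1 ≤ j) :
    (BoxedSet r {(i, j), (i + 1, j)} ↔ i % 2 = 1) := by
  unfold BoxedSet TypeX VariableSq
  constructor
  · rintro ⟨p, q, ⟨hpq, hp⟩, hsub⟩
    have h1 := hsub (show ((i, j) : ℕ × ℕ) ∈ _ by simp)
    have h2 := hsub (show ((i + 1, j) : ℕ × ℕ) ∈ _ by simp)
    simp only [Set.mem_insert_iff, Set.mem_singleton_iff, Prod.mk.injEq] at h1 h2
    omega
  · intro hi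
    by_cases hpar : (i + j) % 2 = r % 2
    · refine ⟨i, j, ⟨hpar, hi⟩, ?_⟩
      rintro ⟨x1, x2⟩ hx
      simp only [Finset.coe_insert, Finset.coe_singleton, Set.mem_insert_iff,
        Set.mem_singleton_iff, Prod.mk.injEq] at hx ⊢
      omega
    · refine ⟨i, j - 1, ⟨by omega, hi⟩, ?_⟩
      rintro ⟨x1, x2⟩ hx
      simp only [Finset.coe_insert, Finset.coe_singleton, Set.mem_insert_iff,
        Set.mem_singleton_iff, Prod.mk.injEq] at hx ⊢
      omega

lemma boxedH (r i j : ℕ) (hi : 1 ≤ i) :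
    (BoxedSet r {(i, j), (i, j + 1)} ↔
      ((i % 2 = 1 ∧ (i + j) % 2 = r % 2) ∨ (i % 2 = 0 ∧ (i + j) % 2 ≠ r % 2))) := by
  unfold BoxedSet TypeX VariableSq
  constructor
  · rintro ⟨p, q, ⟨hpq, hp⟩, hsub⟩
    have h1 := hsub (show ((i, j) : ℕ × ℕ) ∈ _ by simp)
    have h2 := hsub (show ((i, j + 1) : ℕ × ℕ) ∈ _ by simp)
    simp only [Set.mem_insert_iff, Set.mem_singleton_iff, Prod.mk.injEq] at h1 h2
    omega
  · intro hcase
    rcases hcase with ⟨h1, h2⟩ | ⟨h1, h2⟩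
    · refine ⟨i, j, ⟨h2, h1⟩, ?_⟩
      rintro ⟨x1, x2⟩ hx
      simp only [Finset.coe_insert, Finset.coe_singleton, Set.mem_insert_iff,
        Set.mem_singleton_iff, Prod.mk.injEq] at hx ⊢
      omega
    · refine ⟨i - 1, j, ⟨by omega, by omega⟩, ?_⟩
      rintro ⟨x1, x2⟩ hx
      simp only [Finset.coe_insert, Finset.coe_singleton, Set.mem_insert_iff,
        Set.mem_singleton_iff, Prod.mk.injEq] at hx ⊢
      omega

lemma boxedHL {r i j : ℕ} (hi : 1 ≤ i) (hj : 1 ≤ j) (hfix : (i + j) % 2 ≠ r % 2) :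
    (BoxedSet r {(i, j - 1), (i, j)} ↔ i % 2 = 1) := by
  obtain ⟨j', rfl⟩ : ∃ j', j = j' + 1 := ⟨j - 1, by omega⟩
  simp only [Nat.add_sub_cancel]
  rw [boxedH r i j' hi]
  omega

lemma boxedVU {r i j : ℕ} (hi : 1 ≤ i) (hj : 1 ≤ j) :
    (BoxedSet r {(i - 1, j), (i, j)} ↔ i % 2 = 0) := by
  obtain ⟨i', rfl⟩ : ∃ i', i = i' + 1 := ⟨i - 1, by omega⟩
  simp only [Nat.add_sub_cancel]
  rw [boxedV r i' j hj]
  omega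

/-- "type A" dominoes (variable square below or to the left of the fixed square
`(i,j)`) are boxed iff `i` is odd. -/
lemma boxedA {r : ℕ} {s : Finset (ℕ × ℕ)} {i j : ℕ}
    (hfix : (i + j) % 2 ≠ r % 2)
    (hpos : ∀ c ∈ s, 1 ≤ c.1 ∧ 1 ≤ c.2)
    (hs : s = {(i, j), (i + 1, j)} ∨ s = {(i, j - 1), (i, j)} ∨ s = {(i, j), (i, j - 1)}) :
    (BoxedSet r s ↔ i % 2 = 1) := by
  have hij : 1 ≤ i ∧ 1 ≤ j := by
    have := hpos (i, j) (by rcases hs with h | h | h <;> simp [h])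
    exact this
  rcases hs with h | h | h
  · rw [h, boxedV r i j hij.2]
  · rw [h, boxedHL hij.1 hij.2 hfix]
  · rw [h, Finset.pair_comm, boxedHL hij.1 hij.2 hfix]

/-- "type B" dominoes (variable square above or to the right of the fixed square
`(i,j)`) are boxed iff `i` is even. -/
lemma boxedB {r : ℕ} {s : Finset (ℕ × ℕ)} {i j : ℕ}
    (hfix : (i + j) % 2 ≠ r % 2)
    (hpos : ∀ c ∈ s, 1 ≤ c.1 ∧ 1 ≤ c.2)
    (hs : s = {(i, j), (i - 1, j)} ∨ s = {(i, j + 1), (i, j)} ∨ s = {(i, j), (i, j + 1)}) :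
    (BoxedSet r s ↔ i % 2 = 0) := by
  have hij : 1 ≤ i ∧ 1 ≤ j := by
    have := hpos (i, j) (by rcases hs with h | h | h <;> simp [h])
    exact this
  rcases hs with h | h | h
  · rw [h, Finset.pair_comm, boxedVU hij.1 hij.2]
  · rw [h, Finset.pair_comm, boxedH r i j hij.1]
    omega
  · rw [h, boxedH r i j hij.1]
    omega

lemma supp_nonempty {r n : ℕ} (T : SDT r n) {k : ℕ} (h1 : 1 ≤ k) (h2 : k ≤ n) :
    (T.supp k).Nonempty := by
  obtain ⟨a, b, ha, hb, -, hla, -, -⟩ := T.domino k h1 h2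
  exact ⟨a, mem_supp.mpr ⟨ha, hla⟩⟩

lemma suppD'_spec {r n : ℕ} {T : SDT r n} {k : ℕ} (h : (suppD' T k).Nonempty) :
    IsSuppD' T k (suppD' T k) := by
  by_cases hex : ∃ s, IsSuppD' T k s
  · unfold suppD'
    rw [dif_pos hex]
    exact hex.choose_spec
  · unfold suppD' at h
    rw [dif_neg hex] at h
    simp at h

lemma mt_spec {r n : ℕ} {T T' : SDT r n} {k : ℕ} (h : IsMT T T' (cyc T k))
    {l : ℕ} (hl : l ∈ cyc T k) : IsSuppD' T l (T'.supp l) := by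
  have he : T'.supp l = suppD' T l := h.1 l hl
  have hne : (suppD' T l).Nonempty := he ▸ supp_nonempty T' hl.1 hl.2.1
  have := suppD'_spec hne
  rwa [← he] at this

/-- The core (labels `0`) is never a domino-shaped pair. -/
lemma supp_zero {r n : ℕ} (T : SDT r n) {i j : ℕ}
    (h : T.supp 0 = {(i, j), (i + 1, j)} ∨ T.supp 0 = {(i, j - 1), (i, j)} ∨
         T.supp 0 = {(i, j), (i - 1, j)} ∨ T.supp 0 = {(i, j + 1), (i, j)}) : False := by
  have key : ∀ p q : ℕ, 1 ≤ p → 1 ≤ q → p + q < r + 2 → (p, q) ∈ T.supp 0 := by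
    intro p q h1 h2 h3
    have hm := T.core_mem p q h1 h2 h3
    exact mem_supp.mpr ⟨hm, (T.core_zero _ hm).mpr h3⟩
  have hij : (i, j) ∈ T.supp 0 := by rcases h with h | h | h | h <;> simp [h]
  obtain ⟨hij_cells, hij_lab⟩ := mem_supp.mp hij
  have hij_pos : 1 ≤ i ∧ 1 ≤ j := T.pos_cells _ hij_cells
  have hij_core : i + j < r + 2 := (T.core_zero _ hij_cells).mp hij_lab
  rcases h with h | h | h | h
  · have h2 : (i + 1, j) ∈ T.supp 0 := by simp [h]
    have h2c : i + 1 + j < r + 2 :=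
      (T.core_zero _ (mem_supp.mp h2).1).mp (mem_supp.mp h2).2
    have h3 := key i (j + 1) (by omega) (by omega) (by omega)
    rw [h] at h3
    simp only [Finset.mem_insert, Finset.mem_singleton, Prod.mk.injEq] at h3
    omega
  · have h2 : (i, j - 1) ∈ T.supp 0 := by simp [h]
    have h2p : 1 ≤ j - 1 := (T.pos_cells _ (mem_supp.mp h2).1).2
    have h3 := key (i + 1) (j - 1) (by omega) (by omega) (by omega)
    rw [h] at h3
    simp only [Finset.mem_insert, Finset.mem_singleton, Prod.mk.injEq] at h3
    omega
  · have h2 : (i - 1, j) ∈ T.supp 0 := by simp [h]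
    have h2p : 1 ≤ i - 1 := (T.pos_cells _ (mem_supp.mp h2).1).1
    have h3 := key (i - 1) (j + 1) (by omega) (by omega) (by omega)
    rw [h] at h3
    simp only [Finset.mem_insert, Finset.mem_singleton, Prod.mk.injEq] at h3
    omega
  · have h2 : (i, j + 1) ∈ T.supp 0 := by simp [h]
    have h2c : i + (j + 1) < r + 2 :=
      (T.core_zero _ (mem_supp.mp h2).1).mp (mem_supp.mp h2).2
    have h3 := key (i + 1) j (by omega) (by omega) (by omega)
    rw [h] at h3
    simp only [Finset.mem_insert, Finset.mem_singleton, Prod.mk.injEq] at h3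
    omega

lemma bounds_of_inter {r n : ℕ} {T : SDT r n} {a b : ℕ}
    (hab : (T.supp b ∩ suppD' T a).Nonempty) :
    1 ≤ a ∧ a ≤ n ∧ 1 ≤ b ∧ b ≤ n := by
  obtain ⟨c, hc⟩ := hab
  obtain ⟨c1, c2⟩ := c
  rw [Finset.mem_inter] at hc
  obtain ⟨hcb, hca⟩ := hc
  obtain ⟨hc_cells, hc_lab⟩ := mem_supp.mp hcb
  have hc_pos : 1 ≤ c1 ∧ 1 ≤ c2 := T.pos_cells _ hc_cells
  have hne : (suppD' T a).Nonempty := ⟨(c1, c2), hca⟩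
  obtain ⟨i, j, hfix, hcase⟩ := suppD'_spec hne
  have hfix2 : (i + j) % 2 ≠ r % 2 := hfix
  have hsupp4 : T.supp a = {(i, j), (i + 1, j)} ∨ T.supp a = {(i, j - 1), (i, j)} ∨
      T.supp a = {(i, j), (i - 1, j)} ∨ T.supp a = {(i, j + 1), (i, j)} := by
    rcases hcase with ⟨hs, -⟩ | ⟨hs, -⟩ <;> tauto
  have hS4 : suppD' T a = {(i, j), (i - 1, j)} ∨ suppD' T a = {(i, j), (i, j + 1)} ∨
      suppD' T a = {(i, j), (i, j - 1)} ∨ suppD' T a = {(i, j), (i + 1, j)} := by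
    rcases hcase with ⟨-, ⟨-, hs⟩ | ⟨-, hs⟩⟩ | ⟨-, ⟨-, hs⟩ | ⟨-, hs⟩⟩ <;> tauto
  have hfa : (i, j) ∈ T.supp a := by rcases hsupp4 with h | h | h | h <;> simp [h]
  obtain ⟨hfa_cells, hfa_lab⟩ := mem_supp.mp hfa
  have hfa_pos : 1 ≤ i ∧ 1 ≤ j := T.pos_cells _ hfa_cells
  have ha1 : 1 ≤ a := by
    by_contra ha
    have ha0 : a = 0 := by omega
    subst ha0
    exact supp_zero T hsupp4
  have han : a ≤ n := by rw [← hfa_lab]; exact T.lab_le _ hfa_cells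
  have hbn : b ≤ n := by rw [← hc_lab]; exact T.lab_le _ hc_cells
  have hsum : r + 2 ≤ i + j := by
    by_contra hh
    have := (T.core_zero _ hfa_cells).mpr (by omega)
    omega
  have hb1 : 1 ≤ b := by
    by_contra hb
    have hb0 : T.lab (c1, c2) = 0 := by omega
    have hcore : c1 + c2 < r + 2 := (T.core_zero _ hc_cells).mp hb0
    rcases hS4 with h | h | h | h <;> rw [h] at hca <;>
      simp only [Finset.mem_insert, Finset.mem_singleton, Prod.mk.injEq] at hca <;>
      rcases hca with ⟨h1x, h2x⟩ | ⟨h1x, h2x⟩ <;> subst h1x <;> subst h2x <;> omega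
  exact ⟨ha1, han, hb1, hbn⟩
/-- Moving through flips the boxing of a single domino. -/
lemma flip_boxing {r n : ℕ} (T T' : SDT r n) (a : ℕ)
    (hsa : IsSuppD' T a (T'.supp a)) :
    (BoxedSet r (T.supp a) ↔ ¬ BoxedSet r (T'.supp a)) := by
  obtain ⟨i, j, hfix, hcase⟩ := hsa
  have hfix2 : (i + j) % 2 ≠ r % 2 := hfix
  rcases hcase with ⟨hsupp, hin⟩ | ⟨hsupp, hin⟩
  · have h1 : BoxedSet r (T.supp a) ↔ i % 2 = 1 :=
      boxedA hfix2 (supp_pos T a) (hsupp.imp id Or.inl)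
    have h2 : BoxedSet r (T'.supp a) ↔ i % 2 = 0 := by
      rcases hin with ⟨-, hS⟩ | ⟨-, hS⟩
      · exact boxedB hfix2 (supp_pos T' a) (Or.inl hS)
      · exact boxedB hfix2 (supp_pos T' a) (Or.inr (Or.inr hS))
    rw [h1, h2]
    omega
  · have h1 : BoxedSet r (T.supp a) ↔ i % 2 = 0 :=
      boxedB hfix2 (supp_pos T a) (hsupp.imp id Or.inl)
    have h2 : BoxedSet r (T'.supp a) ↔ i % 2 = 1 := by
      rcases hin with ⟨-, hS⟩ | ⟨-, hS⟩
      · exact boxedA hfix2 (supp_pos T' a) (Or.inr (Or.inr hS))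
      · exact boxedA hfix2 (supp_pos T' a) (Or.inl hS)
    rw [h1, h2]
    omega

/-- Interacting dominoes have the same boxing in `T`. -/
lemma step_boxing {r n : ℕ} (T T' : SDT r n) (a b : ℕ)
    (hsa : IsSuppD' T a (T'.supp a)) (hsb : IsSuppD' T b (T'.supp b))
    (hne : (T.supp b ∩ T'.supp a).Nonempty) :
    (BoxedSet r (T.supp a) ↔ BoxedSet r (T.supp b)) := by
  obtain ⟨c, hc⟩ := hne
  obtain ⟨c1, c2⟩ := c
  rw [Finset.mem_inter] at hc
  obtain ⟨hcb, hca⟩ := hc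
  obtain ⟨hc_cells, hc_lab⟩ := mem_supp.mp hcb
  have hc_pos : 1 ≤ c1 ∧ 1 ≤ c2 := T.pos_cells _ hc_cells
  obtain ⟨i, j, hfix, hcase⟩ := hsa
  obtain ⟨i', j', hfix', hcase'⟩ := hsb
  have hfix2 : (i + j) % 2 ≠ r % 2 := hfix
  have hfix2' : (i' + j') % 2 ≠ r % 2 := hfix'
  have hfa : (i, j) ∈ T.supp a := by
    rcases hcase with ⟨hs, -⟩ | ⟨hs, -⟩ <;> rcases hs with h | h <;> simp [h]
  obtain ⟨hfa_cells, hfa_lab⟩ := mem_supp.mp hfa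
  have hfa_pos : 1 ≤ i ∧ 1 ≤ j := T.pos_cells _ hfa_cells
  have hfb : (i', j') ∈ T.supp b := by
    rcases hcase' with ⟨hs, -⟩ | ⟨hs, -⟩ <;> rcases hs with h | h <;> simp [h]
  obtain ⟨hfb_cells, hfb_lab⟩ := mem_supp.mp hfb
  have hfb_pos : 1 ≤ i' ∧ 1 ≤ j' := T.pos_cells _ hfb_cells
  by_cases hcab : c1 = i ∧ c2 = j
  · obtain ⟨h1x, h2x⟩ := hcab
    subst h1x; subst h2x
    rw [show a = b by rw [← hfa_lab, hc_lab]]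
  · -- the meeting square is the new variable square of `D'(a)`
    have ha4 :
        ((c1 = i - 1 ∧ c2 = j) ∧ ((a : ℕ∞) < T.labE (i - 1, j + 1)) ∧
          (BoxedSet r (T.supp a) ↔ i % 2 = 1)) ∨
        ((c1 = i ∧ c2 = j + 1) ∧ (T.labE (i - 1, j + 1) < (a : ℕ∞)) ∧
          (BoxedSet r (T.supp a) ↔ i % 2 = 1)) ∨
        ((c1 = i ∧ c2 = j - 1) ∧ ((a : ℕ∞) < T.labE (i + 1, j - 1)) ∧
          (BoxedSet r (T.supp a) ↔ i % 2 = 0)) ∨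
        ((c1 = i + 1 ∧ c2 = j) ∧ (T.labE (i + 1, j - 1) < (a : ℕ∞)) ∧
          (BoxedSet r (T.supp a) ↔ i % 2 = 0)) := by
      rcases hcase with ⟨hs, ⟨hlt, hS⟩ | ⟨hlt, hS⟩⟩ | ⟨hs, ⟨hlt, hS⟩ | ⟨hlt, hS⟩⟩ <;>
        rw [hS] at hca <;>
        simp only [Finset.mem_insert, Finset.mem_singleton, Prod.mk.injEq] at hca
      · exact Or.inl ⟨hca.resolve_left hcab, hlt, boxedA hfix2 (supp_pos T a) (hs.imp id Or.inl)⟩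
      · exact Or.inr (Or.inl ⟨hca.resolve_left hcab, hlt,
          boxedA hfix2 (supp_pos T a) (hs.imp id Or.inl)⟩)
      · exact Or.inr (Or.inr (Or.inl ⟨hca.resolve_left hcab, hlt,
          boxedB hfix2 (supp_pos T a) (hs.imp id Or.inl)⟩))
      · exact Or.inr (Or.inr (Or.inr ⟨hca.resolve_left hcab, hlt,
          boxedB hfix2 (supp_pos T a) (hs.imp id Or.inl)⟩))
    by_cases hcfb : c1 = i' ∧ c2 = j'
    · -- impossible: a variable square equals a fixed square
      exfalso
      rcases ha4 with ⟨hw, -, -⟩ | ⟨hw, -, -⟩ | ⟨hw, -, -⟩ | ⟨hw, -, -⟩ <;> omega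
    · -- the meeting square is the old variable square of `D(b)`
      have hb4 :
          ((c1 = i' + 1 ∧ c2 = j') ∧ (BoxedSet r (T.supp b) ↔ i' % 2 = 1)) ∨
          ((c1 = i' ∧ c2 = j' - 1) ∧ (BoxedSet r (T.supp b) ↔ i' % 2 = 1)) ∨
          ((c1 = i' - 1 ∧ c2 = j') ∧ (BoxedSet r (T.supp b) ↔ i' % 2 = 0)) ∨
          ((c1 = i' ∧ c2 = j' + 1) ∧ (BoxedSet r (T.supp b) ↔ i' % 2 = 0)) := by
        rcases hcase' with ⟨hs, -⟩ | ⟨hs, -⟩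
        · have hbox : BoxedSet r (T.supp b) ↔ i' % 2 = 1 :=
            boxedA hfix2' (supp_pos T b) (hs.imp id Or.inl)
          rcases hs with h | h <;> rw [h] at hcb <;>
            simp only [Finset.mem_insert, Finset.mem_singleton, Prod.mk.injEq] at hcb
          · exact Or.inl ⟨hcb.resolve_left hcfb, hbox⟩
          · exact Or.inr (Or.inl ⟨hcb.resolve_right hcfb, hbox⟩)
        · have hbox : BoxedSet r (T.supp b) ↔ i' % 2 = 0 :=
            boxedB hfix2' (supp_pos T b) (hs.imp id Or.inl)
          rcases hs with h | h <;> rw [h] at hcb <;>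
            simp only [Finset.mem_insert, Finset.mem_singleton, Prod.mk.injEq] at hcb
          · exact Or.inr (Or.inr (Or.inl ⟨hcb.resolve_left hcfb, hbox⟩))
          · exact Or.inr (Or.inr (Or.inr ⟨hcb.resolve_right hcfb, hbox⟩))
      rcases ha4 with ⟨hw, hlt, hboxa⟩ | ⟨hw, hlt, hboxa⟩ | ⟨hw, hlt, hboxa⟩ |
        ⟨hw, hlt, hboxa⟩ <;>
        rcases hb4 with ⟨hv, hboxb⟩ | ⟨hv, hboxb⟩ | ⟨hv, hboxb⟩ | ⟨hv, hboxb⟩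
      -- a1 b1 : good
      · rw [hboxa, hboxb]; omega
      -- a1 b2 : contradiction via monotonicity
      · exfalso
        have hpt : ((i : ℕ) - 1, j + 1) = (i', j') := by
          simp only [Prod.mk.injEq]; omega
        rw [hpt, labE_mem hfb_cells, hfb_lab] at hlt
        have hab : a < b := by exact_mod_cast hlt
        have he : ((c1 : ℕ) + 1, c2) = (i, j) := by
          simp only [Prod.mk.injEq]; omega
        have hm := T.col_mono c1 c2 hc_cells (by rw [he]; exact hfa_cells)
        rw [he, hfa_lab, hc_lab] at hm
        omega
      -- a1 b3 : same fixed square, a = b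
      · have hfeq : ((i : ℕ), j) = (i', j') := by
          simp only [Prod.mk.injEq]; omega
        rw [show a = b by rw [← hfa_lab, hfeq, hfb_lab]]
      -- a1 b4 : good
      · rw [hboxa, hboxb]; omega
      -- a2 b1 : contradiction
      · exfalso
        have hpt : ((i : ℕ) - 1, j + 1) = (i', j') := by
          simp only [Prod.mk.injEq]; omega
        rw [hpt, labE_mem hfb_cells, hfb_lab] at hlt
        have hab : b < a := by exact_mod_cast hlt
        have he : ((i : ℕ), j + 1) = (c1, c2) := by
          simp only [Prod.mk.injEq]; omega
        have hm := T.row_mono i j hfa_cells (by rw [he]; exact hc_cells)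
        rw [he, hfa_lab, hc_lab] at hm
        omega
      -- a2 b2 : good
      · rw [hboxa, hboxb]; omega
      -- a2 b3 : good
      · rw [hboxa, hboxb]; omega
      -- a2 b4 : same fixed square
      · have hfeq : ((i : ℕ), j) = (i', j') := by
          simp only [Prod.mk.injEq]; omega
        rw [show a = b by rw [← hfa_lab, hfeq, hfb_lab]]
      -- a3 b1 : good
      · rw [hboxa, hboxb]; omega
      -- a3 b2 : same fixed square
      · have hfeq : ((i : ℕ), j) = (i', j') := by
          simp only [Prod.mk.injEq]; omega
        rw [show a = b by rw [← hfa_lab, hfeq, hfb_lab]]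
      -- a3 b3 : contradiction
      · exfalso
        have hpt : ((i : ℕ) + 1, j - 1) = (i', j') := by
          simp only [Prod.mk.injEq]; omega
        rw [hpt, labE_mem hfb_cells, hfb_lab] at hlt
        have hab : a < b := by exact_mod_cast hlt
        have he : ((c1 : ℕ), c2 + 1) = (i, j) := by
          simp only [Prod.mk.injEq]; omega
        have hm := T.row_mono c1 c2 hc_cells (by rw [he]; exact hfa_cells)
        rw [he, hfa_lab, hc_lab] at hm
        omega
      -- a3 b4 : good
      · rw [hboxa, hboxb]; omega
      -- a4 b1 : same fixed square
      · have hfeq : ((i : ℕ), j) = (i', j') := by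
          simp only [Prod.mk.injEq]; omega
        rw [show a = b by rw [← hfa_lab, hfeq, hfb_lab]]
      -- a4 b2 : good
      · rw [hboxa, hboxb]; omega
      -- a4 b3 : good
      · rw [hboxa, hboxb]; omega
      -- a4 b4 : contradiction
      · exfalso
        have hpt : ((i : ℕ) + 1, j - 1) = (i', j') := by
          simp only [Prod.mk.injEq]; omega
        rw [hpt, labE_mem hfb_cells, hfb_lab] at hlt
        have hab : b < a := by exact_mod_cast hlt
        have he : ((i : ℕ) + 1, j) = (c1, c2) := by
          simp only [Prod.mk.injEq]; omega
        have hm := T.col_mono i j hfa_cells (by rw [he]; exact hc_cells)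
        rw [he, hfa_lab, hc_lab] at hm
        omega

/-- Moving through a cycle changes the boxing of every domino in the cycle, and
all dominoes in a single cycle have the same boxing. -/
theorem movingThrough_changes_boxing (r n : ℕ) (T T' : SDT r n) (k : ℕ)
    (hk1 : 1 ≤ k) (hk2 : k ≤ n) (h : IsMT T T' (cyc T k)) :
    (∀ l ∈ cyc T k, (BoxedSet r (T.supp l) ↔ ¬ BoxedSet r (T'.supp l))) ∧
    (∀ l ∈ cyc T k, ∀ m ∈ cyc T k,
      (BoxedSet r (T.supp l) ↔ BoxedSet r (T.supp m))) := by
  have hspec : ∀ l ∈ cyc T k, IsSuppD' T l (T'.supp l) := fun l hl => mt_spec h hl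
  have key : ∀ l, Relation.ReflTransGen (cycStep T) k l →
      (BoxedSet r (T.supp l) ↔ BoxedSet r (T.supp k)) := by
    intro l hrel
    induction hrel with
    | refl => exact Iff.rfl
    | @tail b c h₁ h₂ ih =>
      have hbc : 1 ≤ b ∧ b ≤ n ∧ 1 ≤ c ∧ c ≤ n := by
        rcases h₂ with h' | h'
        · exact bounds_of_inter h'
        · rw [Finset.inter_comm] at h'
          obtain ⟨x1, x2, x3, x4⟩ := bounds_of_inter h'
          exact ⟨x3, x4, x1, x2⟩
      have hbm : b ∈ cyc T k := ⟨hbc.1, hbc.2.1, h₁⟩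
      have hcm : c ∈ cyc T k := ⟨hbc.2.2.1, hbc.2.2.2, h₁.tail h₂⟩
      have hstep : BoxedSet r (T.supp c) ↔ BoxedSet r (T.supp b) := by
        rcases h₂ with h' | h'
        · rw [← h.1 b hbm] at h'
          exact (step_boxing T T' b c (hspec b hbm) (hspec c hcm) h').symm
        · rw [← h.1 c hcm, Finset.inter_comm] at h'
          exact step_boxing T T' c b (hspec c hcm) (hspec b hbm) h'
      exact hstep.trans ih
  refine ⟨fun l hl => flip_boxing T T' l (hspec l hl), fun l hl m hm => ?_⟩
  exact (key l hl.2.2).trans (key m hm.2.2).symm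
end

section
/- Let w ∈ W_n lie in the domain of a Knuth-type operator T_{αβ} with {α,β} = {α_{j+1}, α_{j+2}} (i.e., w(j+1) is greater than both or less than both of w(j), w(j+2)). Then T_{αβ}(w), defined as the unique element of {w s_j, w s_{j+1}} lying in D_{βα}(W_n), is single-valued: exactly one of w s_j, w s_{j+1} lies in D_{βα}(W_n). -/
/-- The signed transposition `s_j` of type `B`: swaps `j ↔ j+1` and `-j ↔ -(j+1)`. -/
def sgen (j : ℕ) : Equiv.Perm ℤ :=
  Equiv.swap (j : ℤ) ((j : ℤ) + 1) * Equiv.swap (-(j : ℤ)) (-((j : ℤ) + 1))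

/-- The sign change `t_j`: swaps `j ↔ -j`, i.e. changes the sign of the `j`-th entry. -/
def tgen (j : ℕ) : Equiv.Perm ℤ := Equiv.swap (j : ℤ) (-(j : ℤ))

/-- The hyperoctahedral group `W_n`: permutations `w` of `{±1, …, ±n}` with `w(-i) = -w(i)`,
realized as permutations of `ℤ` commuting with negation and fixing `i` with `|i| > n`. -/
def Wgrp (n : ℕ) : Set (Equiv.Perm ℤ) :=
  {w | (∀ i : ℤ, w (-i) = - w i) ∧ ∀ i : ℤ, (n : ℤ) < |i| → w i = i}

/-- Coxeter length on `W_n` with respect to the simple reflections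
`s_1, …, s_{n-1}, t_1`: minimal length of a word in these generators. -/
noncomputable def lenB (n : ℕ) (w : Equiv.Perm ℤ) : ℕ :=
  sInf {k | ∃ l : List (Equiv.Perm ℤ), l.length = k ∧
    (∀ g ∈ l, (∃ j : ℕ, 1 ≤ j ∧ j < n ∧ g = sgen j) ∨ g = tgen 1) ∧ l.prod = w}

/-- `v ∈ D_{α_{j+1} α_{j+2}}(W_n)`: `α_{j+1} ∉ τ(v)` and `α_{j+2} ∈ τ(v)`. -/
noncomputable def Dab (n j : ℕ) (v : Equiv.Perm ℤ) : Prop :=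
  ¬ (lenB n (v * sgen j) < lenB n v) ∧ lenB n (v * sgen (j + 1)) < lenB n v

/-- `v ∈ D_{α_{j+2} α_{j+1}}(W_n)`: `α_{j+2} ∉ τ(v)` and `α_{j+1} ∈ τ(v)`. -/
noncomputable def Dba (n j : ℕ) (v : Equiv.Perm ℤ) : Prop :=
  ¬ (lenB n (v * sgen (j + 1)) < lenB n v) ∧ lenB n (v * sgen j) < lenB n v

namespace TabAux

lemma sgen_eval (j : ℕ) (hj : 1 ≤ j) (i : ℤ) :
    sgen j i = if i = (j:ℤ) then (j:ℤ)+1 else if i = (j:ℤ)+1 then (j:ℤ)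
      else if i = -(j:ℤ) then -((j:ℤ)+1) else if i = -((j:ℤ)+1) then -(j:ℤ) else i := by
  have hj' : (1:ℤ) ≤ (j:ℤ) := by exact_mod_cast hj
  simp only [sgen, Equiv.Perm.mul_apply, Equiv.swap_apply_def]
  split_ifs <;> first | omega | tauto

lemma tgen_eval (i : ℤ) :
    tgen 1 i = if i = 1 then -1 else if i = -1 then 1 else i := by
  simp only [tgen, Equiv.swap_apply_def, Nat.cast_one]

lemma sgen_sq (j : ℕ) (hj : 1 ≤ j) : sgen j * sgen j = 1 := by
  ext i
  simp only [Equiv.Perm.mul_apply, Equiv.Perm.one_apply, sgen_eval j hj]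
  split_ifs <;> first | omega | tauto

lemma tgen_sq : tgen 1 * tgen 1 = 1 := by
  ext i
  simp only [Equiv.Perm.mul_apply, Equiv.Perm.one_apply, tgen_eval]
  split_ifs <;> first | omega | tauto

lemma sgen_pos (j : ℕ) (i : ℤ) (hi : 0 < i) :
    sgen j i = Equiv.swap (j:ℤ) ((j:ℤ)+1) i := by
  have h0 : (0:ℤ) ≤ (j:ℤ) := Int.natCast_nonneg j
  simp only [sgen, Equiv.Perm.mul_apply]
  have h2 : Equiv.swap (-(j:ℤ)) (-((j:ℤ)+1)) i = i :=
    Equiv.swap_apply_of_ne_of_ne (by omega) (by omega)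
  rw [h2]

lemma Wgrp.zero {n : ℕ} {w : Equiv.Perm ℤ} (hw : w ∈ Wgrp n) : w 0 = 0 := by
  have := hw.1 0
  simp at this
  omega

lemma Wgrp.one_mem (n : ℕ) : (1 : Equiv.Perm ℤ) ∈ Wgrp n := by
  constructor <;> intro i <;> simp

lemma Wgrp.mul_sgen {n j : ℕ} {w : Equiv.Perm ℤ} (hw : w ∈ Wgrp n)
    (hj1 : 1 ≤ j) (hjn : j < n) : w * sgen j ∈ Wgrp n := by
  have hjn' : (j:ℤ) + 1 ≤ (n:ℤ) := by exact_mod_cast hjn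
  constructor
  · intro i
    have h : sgen j (-i) = -(sgen j i) := by
      simp only [sgen_eval j hj1]; split_ifs <;> first | omega | tauto
    simp only [Equiv.Perm.mul_apply, h, hw.1]
  · intro i hi
    rcases abs_cases i with ⟨h1, h2⟩ | ⟨h1, h2⟩ <;>
    · have h : sgen j i = i := by
        simp only [sgen_eval j hj1]; split_ifs <;> first | omega | tauto
      simp only [Equiv.Perm.mul_apply, h]; exact hw.2 i hi

lemma Wgrp.mul_tgen {n : ℕ} {w : Equiv.Perm ℤ} (hw : w ∈ Wgrp n)
    (hn : 1 ≤ n) : w * tgen 1 ∈ Wgrp n := by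
  have hn' : (1:ℤ) ≤ (n:ℤ) := by exact_mod_cast hn
  constructor
  · intro i
    have h : tgen 1 (-i) = -(tgen 1 i) := by
      simp only [tgen_eval]; split_ifs <;> first | omega | tauto
    simp only [Equiv.Perm.mul_apply, h, hw.1]
  · intro i hi
    rcases abs_cases i with ⟨h1, h2⟩ | ⟨h1, h2⟩ <;>
    · have h : tgen 1 i = i := by
        simp only [tgen_eval]; split_ifs <;> first | omega | tauto
      simp only [Equiv.Perm.mul_apply, h]; exact hw.2 i hi

lemma Wgrp.inv {n : ℕ} {w : Equiv.Perm ℤ} (hw : w ∈ Wgrp n) : w⁻¹ ∈ Wgrp n := by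
  constructor
  · intro i
    apply w.injective
    rw [Equiv.Perm.coe_inv, Equiv.apply_symm_apply, hw.1, Equiv.apply_symm_apply]
  · intro i hi
    apply w.injective
    rw [Equiv.Perm.coe_inv, Equiv.apply_symm_apply, hw.2 i hi]

noncomputable def PP (n : ℕ) : Finset ℤ := Finset.Icc 1 (n:ℤ)

lemma mem_PP {n : ℕ} {i : ℤ} : i ∈ PP n ↔ 1 ≤ i ∧ i ≤ (n:ℤ) := Finset.mem_Icc

lemma Wgrp.abs_bound {n : ℕ} {w : Equiv.Perm ℤ} (hw : w ∈ Wgrp n) {i : ℤ}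
    (hi : i ∈ PP n) : 1 ≤ |w i| ∧ |w i| ≤ (n:ℤ) := by
  rw [mem_PP] at hi
  have hne : w i ≠ 0 := by
    intro h
    have := w.injective (h.trans (Wgrp.zero hw).symm)
    omega
  constructor
  · rcases abs_cases (w i) with ⟨h1, h2⟩ | ⟨h1, h2⟩ <;> omega
  · by_contra hc
    push_neg at hc
    have h2 := w.injective (hw.2 (w i) hc)
    rcases abs_cases (w i) with ⟨h3, h4⟩ | ⟨h3, h4⟩ <;> omega

noncomputable def invB (n : ℕ) (w : Equiv.Perm ℤ) : ℕ :=
  ((PP n ×ˢ PP n).filter (fun p => p.1 < p.2 ∧ w p.2 < w p.1)).card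

noncomputable def nsum (n : ℕ) (w : Equiv.Perm ℤ) : ℕ := ∑ i ∈ PP n, (-(w i)).toNat

noncomputable def NB (n : ℕ) (w : Equiv.Perm ℤ) : ℕ := invB n w + nsum n w

lemma invB_eq_sum (n : ℕ) (w : Equiv.Perm ℤ) :
    invB n w = ∑ i ∈ PP n, ∑ k ∈ PP n, if i < k ∧ w k < w i then 1 else 0 := by
  rw [invB, Finset.card_filter, Finset.sum_product]

lemma NB_one (n : ℕ) : NB n 1 = 0 := by
  have h1 : invB n 1 = 0 := by
    rw [invB, Finset.card_eq_zero, Finset.filter_eq_empty_iff]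
    rintro ⟨i, k⟩ _
    simp only [Equiv.Perm.one_apply]
    omega
  have h2 : nsum n 1 = 0 := by
    rw [nsum]
    apply Finset.sum_eq_zero
    intro i hi
    rw [mem_PP] at hi
    simp only [Equiv.Perm.one_apply]
    omega
  rw [NB, h1, h2]

/-- key counting lemma: the number of positions with |value| < w 1 is w 1 - 1. -/
lemma card_abs_lt {n : ℕ} {w : Equiv.Perm ℤ} (hw : w ∈ Wgrp n) (hn : 1 ≤ n)
    (ha : 0 < w 1) :
    ((PP n).filter (fun k => |w k| < w 1)).card + 1 = (w 1).toNat := by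
  have h1 : (1:ℤ) ∈ PP n := by rw [mem_PP]; exact ⟨le_refl _, by exact_mod_cast hn⟩
  have hb := Wgrp.abs_bound hw h1
  have hwinv := Wgrp.inv hw
  have hodd : ∀ i : ℤ, w⁻¹ (-i) = -(w⁻¹ i) := hwinv.1
  have key : ((PP n).filter (fun k => |w k| < w 1)).card
      = (Finset.Icc (1:ℤ) (w 1 - 1)).card := by
    apply Finset.card_nbij' (fun k => |w k|) (fun m => |w⁻¹ m|)
    · intro k hk
      dsimp only
      rw [Finset.mem_coe, Finset.mem_filter] at hk
      obtain ⟨hk1, hk2⟩ := hk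
      have := Wgrp.abs_bound hw hk1
      rw [Finset.mem_coe, Finset.mem_Icc]
      omega
    · intro m hm
      dsimp only
      rw [Finset.mem_coe, Finset.mem_Icc] at hm
      have hmP : m ∈ PP n := by
        rw [mem_PP]
        rcases abs_cases (w 1) with ⟨hc1, hc2⟩ | ⟨hc1, hc2⟩ <;> omega
      have hb2 := Wgrp.abs_bound hwinv hmP
      rw [Finset.mem_coe, Finset.mem_filter]
      refine ⟨by rw [mem_PP]; omega, ?_⟩
      rcases abs_cases (w⁻¹ m) with ⟨hc1, hc2⟩ | ⟨hc1, hc2⟩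
      · rw [hc1, Equiv.Perm.coe_inv, Equiv.apply_symm_apply]
        rcases abs_cases m with ⟨hd1, _⟩ | ⟨hd1, _⟩ <;> omega
      · rw [hc1]
        have : w (-(w⁻¹ m)) = -m := by rw [hw.1, Equiv.Perm.coe_inv, Equiv.apply_symm_apply]
        rw [this]
        rcases abs_cases (-m) with ⟨hd1, _⟩ | ⟨hd1, _⟩ <;> omega
    · intro k hk
      dsimp only
      rw [Finset.mem_coe, Finset.mem_filter, mem_PP] at hk
      obtain ⟨⟨hk1, hk2⟩, hk3⟩ := hk
      rcases abs_cases (w k) with ⟨hc1, _⟩ | ⟨hc1, _⟩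
      · rw [hc1, Equiv.Perm.coe_inv, Equiv.symm_apply_apply]
        exact abs_of_pos (by omega)
      · rw [hc1]
        have h5 : w⁻¹ (-(w k)) = -k := by rw [hodd, Equiv.Perm.coe_inv, Equiv.symm_apply_apply]
        rw [h5, abs_neg]
        exact abs_of_pos (by omega)
    · intro m hm
      dsimp only
      rw [Finset.mem_coe, Finset.mem_Icc] at hm
      rcases abs_cases (w⁻¹ m) with ⟨hc1, _⟩ | ⟨hc1, _⟩
      · rw [hc1, Equiv.Perm.coe_inv, Equiv.apply_symm_apply]
        exact abs_of_pos (by omega)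
      · rw [hc1]
        have h5 : w (-(w⁻¹ m)) = -m := by rw [hw.1, Equiv.Perm.coe_inv, Equiv.apply_symm_apply]
        rw [h5, abs_neg]
        exact abs_of_pos (by omega)
  rw [key, Int.card_Icc]
  omega

lemma NB_mul_tgen_pos {n : ℕ} {w : Equiv.Perm ℤ} (hw : w ∈ Wgrp n) (hn : 1 ≤ n)
    (ha : 0 < w 1) : NB n (w * tgen 1) = NB n w + 1 := by
  have h1 : (1:ℤ) ∈ PP n := by rw [mem_PP]; exact ⟨le_refl _, by exact_mod_cast hn⟩
  have hneg1 : w (-1 : ℤ) = -(w 1) := by have := hw.1 1; simpa using this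
  have hv1 : (w * tgen 1) (1:ℤ) = -(w 1) := by
    have ht : tgen 1 (1:ℤ) = -1 := by rw [tgen_eval]; norm_num
    rw [Equiv.Perm.mul_apply, ht, hneg1]
  have hfix : ∀ i ∈ PP n \ {(1:ℤ)}, (w * tgen 1) i = w i := by
    intro i hi
    rw [Finset.mem_sdiff, mem_PP, Finset.mem_singleton] at hi
    have ht : tgen 1 i = i := by rw [tgen_eval]; split_ifs <;> omega
    rw [Equiv.Perm.mul_apply, ht]
  -- nsum part
  have hnsum : nsum n (w * tgen 1) = nsum n w + (w 1).toNat := by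
    rw [nsum, nsum, Finset.sum_eq_sum_sdiff_singleton_add h1,
      Finset.sum_eq_sum_sdiff_singleton_add h1 (fun i => (-(w i)).toNat)]
    have hs : ∑ i ∈ PP n \ {(1:ℤ)}, (-((w * tgen 1) i)).toNat
        = ∑ i ∈ PP n \ {(1:ℤ)}, (-(w i)).toNat :=
      Finset.sum_congr rfl (fun i hi => by rw [hfix i hi])
    rw [hs, hv1]
    omega
  -- the correction count
  have hcard : ((PP n).filter fun k => |w k| < w 1).card
      = ∑ k ∈ PP n, if 1 < k ∧ |w k| < w 1 then 1 else 0 := by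
    rw [Finset.card_filter]
    apply Finset.sum_congr rfl
    intro k hk
    rw [mem_PP] at hk
    rcases eq_or_ne k 1 with rfl | hk1
    · rw [abs_of_pos ha]; simp
    · simp [show (1:ℤ) < k by omega]
  -- i = 1 inner-sum identity
  have hterm : (∑ k ∈ PP n, if 1 < k ∧ (w * tgen 1) k < (w * tgen 1) 1 then 1 else 0)
      + (∑ k ∈ PP n, if 1 < k ∧ |w k| < w 1 then 1 else 0)
      = ∑ k ∈ PP n, if 1 < k ∧ w k < w 1 then 1 else 0 := by
    rw [← Finset.sum_add_distrib]
    apply Finset.sum_congr rfl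
    intro k hk
    rcases eq_or_ne k 1 with rfl | hk1
    · simp
    · have hk2 : (w * tgen 1) k = w k :=
        hfix k (by rw [Finset.mem_sdiff, Finset.mem_singleton]; exact ⟨hk, hk1⟩)
      rw [hk2, hv1]
      have hne1 : w k ≠ w 1 := fun h => hk1 (w.injective h)
      have hne2 : w k ≠ -(w 1) := by
        intro h
        have h2 : w k = w (-1 : ℤ) := by rw [h, hneg1]
        have h3 := w.injective h2
        rw [mem_PP] at hk
        omega
      rcases abs_cases (w k) with ⟨hc, _⟩ | ⟨hc, _⟩ <;> (split_ifs <;> omega)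
  -- outer sums over i ≠ 1 agree
  have houter : ∑ i ∈ PP n \ {(1:ℤ)}, (∑ k ∈ PP n, if i < k ∧ (w * tgen 1) k < (w * tgen 1) i then 1 else 0)
      = ∑ i ∈ PP n \ {(1:ℤ)}, (∑ k ∈ PP n, if i < k ∧ w k < w i then 1 else 0) := by
    apply Finset.sum_congr rfl
    intro i hi
    apply Finset.sum_congr rfl
    intro k hk
    have hi2 := hi
    rw [Finset.mem_sdiff, mem_PP, Finset.mem_singleton] at hi2
    rcases eq_or_ne k 1 with rfl | hk1
    · have hni : ¬ (i < 1) := by omega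
      simp [hni]
    · rw [hfix i hi, hfix k (by rw [Finset.mem_sdiff, Finset.mem_singleton]; exact ⟨hk, hk1⟩)]
  have e1 := Finset.sum_eq_sum_sdiff_singleton_add h1
    (fun i => ∑ k ∈ PP n, if i < k ∧ (w * tgen 1) k < (w * tgen 1) i then 1 else 0)
  have e2 := Finset.sum_eq_sum_sdiff_singleton_add h1
    (fun i => ∑ k ∈ PP n, if i < k ∧ w k < w i then 1 else 0)
  have hinv : invB n (w * tgen 1) + ((PP n).filter fun k => |w k| < w 1).card = invB n w := by
    rw [invB_eq_sum, invB_eq_sum, e1, e2, houter, hcard]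
    omega
  have hc1 := card_abs_lt hw hn ha
  rw [NB, NB]
  omega

lemma NB_mul_tgen_neg {n : ℕ} {w : Equiv.Perm ℤ} (hw : w ∈ Wgrp n) (hn : 1 ≤ n)
    (ha : w 1 < 0) : NB n (w * tgen 1) + 1 = NB n w := by
  have hv := Wgrp.mul_tgen hw hn
  have hneg1 : w (-1 : ℤ) = -(w 1) := by have := hw.1 1; simpa using this
  have hv1 : (w * tgen 1) (1:ℤ) = -(w 1) := by
    have ht : tgen 1 (1:ℤ) = -1 := by rw [tgen_eval]; norm_num
    rw [Equiv.Perm.mul_apply, ht, hneg1]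
  have := NB_mul_tgen_pos hv hn (by omega)
  rw [mul_assoc, tgen_sq, mul_one] at this
  omega

lemma NB_mul_sgen_lt {n j : ℕ} {w : Equiv.Perm ℤ} (hj1 : 1 ≤ j) (hjn : j < n)
    (h : w (j:ℤ) < w ((j:ℤ)+1)) : NB n (w * sgen j) = NB n w + 1 := by
  have hj' : (1:ℤ) ≤ (j:ℤ) := by exact_mod_cast hj1
  have hjn' : (j:ℤ) + 1 ≤ (n:ℤ) := by exact_mod_cast hjn
  set s : Equiv.Perm ℤ := Equiv.swap (j:ℤ) ((j:ℤ)+1) with hs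
  have hsP : ∀ x ∈ PP n, s x ∈ PP n := by
    intro x hx
    rw [mem_PP] at hx ⊢
    rw [hs, Equiv.swap_apply_def]
    split_ifs <;> omega
  have hs_pos : ∀ x ∈ PP n, sgen j x = s x := by
    intro x hx
    rw [mem_PP] at hx
    exact sgen_pos j x (by omega)
  have hss : ∀ x, s (s x) = x := fun x => Equiv.swap_apply_self _ _ x
  have hjP : (j:ℤ) ∈ PP n := by rw [mem_PP]; omega
  have hj1P : (j:ℤ)+1 ∈ PP n := by rw [mem_PP]; omega
  have ej : (w * sgen j) (j:ℤ) = w ((j:ℤ)+1) := by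
    rw [Equiv.Perm.mul_apply, hs_pos _ hjP, hs, Equiv.swap_apply_left]
  have ej1 : (w * sgen j) ((j:ℤ)+1) = w (j:ℤ) := by
    rw [Equiv.Perm.mul_apply, hs_pos _ hj1P, hs, Equiv.swap_apply_right]
  -- nsum is invariant
  have hnsum : nsum n (w * sgen j) = nsum n w := by
    rw [nsum, nsum]
    apply Finset.sum_nbij' (fun x => s x) (fun x => s x) hsP hsP
      (fun a _ => hss a) (fun a _ => hss a)
    intro a ha
    rw [Equiv.Perm.mul_apply, hs_pos a ha]
  -- invB increases by 1
  set t1 := ((PP n ×ˢ PP n).filter (fun p => p.1 < p.2 ∧ (w * sgen j) p.2 < (w * sgen j) p.1)) with ht1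
  set t2 := ((PP n ×ˢ PP n).filter (fun p => p.1 < p.2 ∧ w p.2 < w p.1)) with ht2
  set x0 : ℤ × ℤ := ((j:ℤ), (j:ℤ)+1) with hx0
  have hx0t1 : x0 ∈ t1 := by
    rw [ht1, Finset.mem_filter, Finset.mem_product]
    refine ⟨⟨hjP, hj1P⟩, ?_, ?_⟩
    · show (j:ℤ) < (j:ℤ)+1
      omega
    · show (w * sgen j) ((j:ℤ)+1) < (w * sgen j) (j:ℤ)
      rw [ej, ej1]
      exact h
  have hx0t2 : x0 ∉ t2 := by
    intro hmem
    rw [ht2, Finset.mem_filter] at hmem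
    have hlt : w ((j:ℤ)+1) < w (j:ℤ) := hmem.2.2
    omega
  have hbij : (t1.erase x0).card = (t2.erase x0).card := by
    apply Finset.card_nbij' (fun p => (s p.1, s p.2)) (fun p => (s p.1, s p.2))
    · rintro ⟨p1, p2⟩ hp
      dsimp only
      rw [Finset.mem_coe, Finset.mem_erase, ht1, Finset.mem_filter, Finset.mem_product] at hp
      obtain ⟨hne, ⟨hp1, hp2⟩, hlt, hcond⟩ := hp
      rw [Equiv.Perm.mul_apply, Equiv.Perm.mul_apply, hs_pos _ hp1, hs_pos _ hp2] at hcond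
      have hne' : ¬(p1 = (j:ℤ) ∧ p2 = (j:ℤ)+1) := by
        intro ⟨a, b⟩; exact hne (by rw [hx0, a, b])
      rw [Finset.mem_coe, Finset.mem_erase, ht2, Finset.mem_filter, Finset.mem_product]
      refine ⟨?_, ⟨hsP _ hp1, hsP _ hp2⟩, ?_, hcond⟩
      · intro hq
        rw [hx0, Prod.mk.injEq] at hq
        have e1 : p1 = (j:ℤ)+1 := by rw [← hss p1, hq.1, hs, Equiv.swap_apply_left]
        have e2 : p2 = (j:ℤ) := by rw [← hss p2, hq.2, hs, Equiv.swap_apply_right]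
        omega
      · rcases not_and_or.mp hne' with h' | h' <;>
        · rw [hs, Equiv.swap_apply_def, Equiv.swap_apply_def]
          split_ifs <;> omega
    · rintro ⟨p1, p2⟩ hp
      dsimp only
      rw [Finset.mem_coe, Finset.mem_erase, ht2, Finset.mem_filter, Finset.mem_product] at hp
      obtain ⟨hne, ⟨hp1, hp2⟩, hlt, hcond⟩ := hp
      have hne' : ¬(p1 = (j:ℤ) ∧ p2 = (j:ℤ)+1) := by
        intro ⟨a, b⟩; exact hne (by rw [hx0, a, b])
      rw [Finset.mem_coe, Finset.mem_erase, ht1, Finset.mem_filter, Finset.mem_product]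
      refine ⟨?_, ⟨hsP _ hp1, hsP _ hp2⟩, ?_, ?_⟩
      · intro hq
        rw [hx0, Prod.mk.injEq] at hq
        have e1 : p1 = (j:ℤ)+1 := by rw [← hss p1, hq.1, hs, Equiv.swap_apply_left]
        have e2 : p2 = (j:ℤ) := by rw [← hss p2, hq.2, hs, Equiv.swap_apply_right]
        omega
      · rcases not_and_or.mp hne' with h' | h' <;>
        · rw [hs, Equiv.swap_apply_def, Equiv.swap_apply_def]
          split_ifs <;> omega
      · rw [Equiv.Perm.mul_apply, Equiv.Perm.mul_apply,
          hs_pos _ (hsP _ hp1), hs_pos _ (hsP _ hp2), hss, hss]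
        exact hcond
    · rintro ⟨p1, p2⟩ _
      simp [hss]
    · rintro ⟨p1, p2⟩ _
      simp [hss]
  have hinv : invB n (w * sgen j) = invB n w + 1 := by
    rw [invB, invB, ← ht1, ← ht2]
    rw [← Finset.card_erase_add_one hx0t1, hbij, Finset.erase_eq_of_notMem hx0t2]
  rw [NB, NB, hinv, hnsum]
  omega

lemma NB_mul_sgen_gt {n j : ℕ} {w : Equiv.Perm ℤ} (hj1 : 1 ≤ j) (hjn : j < n)
    (h : w ((j:ℤ)+1) < w (j:ℤ)) : NB n (w * sgen j) + 1 = NB n w := by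
  have hjP : (0:ℤ) < (j:ℤ) := by exact_mod_cast hj1
  have ej : (w * sgen j) (j:ℤ) = w ((j:ℤ)+1) := by
    rw [Equiv.Perm.mul_apply, sgen_pos j _ (by omega), Equiv.swap_apply_left]
  have ej1 : (w * sgen j) ((j:ℤ)+1) = w (j:ℤ) := by
    rw [Equiv.Perm.mul_apply, sgen_pos j _ (by omega), Equiv.swap_apply_right]
  have := NB_mul_sgen_lt hj1 hjn (w := w * sgen j) (by rw [ej, ej1]; exact h)
  rw [mul_assoc, sgen_sq j hj1, mul_one] at this
  omega

lemma eq_one_of_no_descent {n : ℕ} {w : Equiv.Perm ℤ} (hw : w ∈ Wgrp n)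
    (hd : ∀ j : ℕ, 1 ≤ j → j < n → ¬ (w ((j:ℤ)+1) < w (j:ℤ)))
    (hp : ¬ (w 1 < 0)) : w = 1 := by
  have hlt : ∀ j : ℕ, 1 ≤ j → j < n → w (j:ℤ) < w ((j:ℤ)+1) := by
    intro j hj1 hjn
    have h1 := hd j hj1 hjn
    have hne : w (j:ℤ) ≠ w ((j:ℤ)+1) := by
      intro h
      have := w.injective h
      omega
    omega
  have hchain : ∀ d p : ℕ, 1 ≤ p → p + d ≤ n → w (p:ℤ) + d ≤ w ((p:ℤ) + d) := by
    intro d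
    induction d with
    | zero => intro p _ _; simp
    | succ d ihd =>
      intro p hp1 hpd
      have h1 := ihd p hp1 (by omega)
      have h2 := hlt (p + d) (by omega) (by omega)
      push_cast at h2
      push_cast
      rw [show (p:ℤ) + ((d:ℤ) + 1) = (p:ℤ) + (d:ℤ) + 1 by ring]
      omega
  have main : ∀ m : ℕ, 1 ≤ m → m ≤ n → w (m:ℤ) = (m:ℤ) := by
    intro m hm1 hmn
    have h1P : (1:ℤ) ∈ PP n := by rw [mem_PP]; constructor <;> [omega; exact_mod_cast le_trans hm1 hmn]
    have hnP : ((n:ℕ):ℤ) ∈ PP n := by rw [mem_PP]; constructor <;> [exact_mod_cast le_trans hm1 hmn; omega]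
    have hb1 := (Wgrp.abs_bound hw h1P).1
    have hbn := (Wgrp.abs_bound hw hnP).2
    have hw1 : 1 ≤ w 1 := by
      rcases abs_cases (w 1) with ⟨hc, _⟩ | ⟨hc, _⟩ <;> omega
    have hlow := hchain (m - 1) 1 le_rfl (by omega)
    have hhigh := hchain (n - m) m hm1 (by omega)
    have hwn : w ((n:ℕ):ℤ) ≤ (n:ℤ) := by
      rcases abs_cases (w ((n:ℕ):ℤ)) with ⟨hc, _⟩ | ⟨hc, _⟩ <;> omega
    have e1 : ((1:ℕ):ℤ) + ((m - 1 : ℕ):ℤ) = (m:ℤ) := by omega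
    have e2 : ((m:ℕ):ℤ) + ((n - m : ℕ):ℤ) = ((n:ℕ):ℤ) := by omega
    rw [e1] at hlow
    rw [e2] at hhigh
    have hc1 : ((1:ℕ):ℤ) = 1 := by norm_num
    rw [hc1] at hlow
    omega
  ext i
  rw [Equiv.Perm.one_apply]
  rcases le_or_gt i (-1) with hi | hi
  · rcases le_or_gt i (-(n:ℤ) - 1) with hi2 | hi2
    · exact hw.2 i (by rcases abs_cases i with ⟨hc, _⟩ | ⟨hc, _⟩ <;> omega)
    · have hm := main (-i).toNat (by omega) (by omega)
      have e3 : (((-i).toNat : ℕ) : ℤ) = -i := by omega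
      rw [e3] at hm
      have := hw.1 (-i)
      rw [hm] at this
      simpa using this
  · rcases le_or_gt i 0 with hi2 | hi2
    · have : i = 0 := by omega
      rw [this]; exact Wgrp.zero hw
    · rcases le_or_gt i (n:ℤ) with hi3 | hi3
      · have hm := main i.toNat (by omega) (by omega)
        have e3 : ((i.toNat : ℕ) : ℤ) = i := by omega
        rwa [e3] at hm
      · exact hw.2 i (by rcases abs_cases i with ⟨hc, _⟩ | ⟨hc, _⟩ <;> omega)

abbrev IsGen (n : ℕ) (g : Equiv.Perm ℤ) : Prop :=
  (∃ j : ℕ, 1 ≤ j ∧ j < n ∧ g = sgen j) ∨ g = tgen 1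

lemma exists_word (n : ℕ) : ∀ (N : ℕ) (w : Equiv.Perm ℤ), w ∈ Wgrp n → NB n w ≤ N →
    ∃ l : List (Equiv.Perm ℤ), l.length = NB n w ∧ (∀ g ∈ l, IsGen n g) ∧ l.prod = w := by
  have key : ∀ (N : ℕ),
      (∀ (w : Equiv.Perm ℤ), w ∈ Wgrp n → NB n w ≤ N →
        ∃ l : List (Equiv.Perm ℤ), l.length = NB n w ∧ (∀ g ∈ l, IsGen n g) ∧ l.prod = w) →
      ∀ (w : Equiv.Perm ℤ), w ∈ Wgrp n → NB n w ≤ N + 1 →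
        ∃ l : List (Equiv.Perm ℤ), l.length = NB n w ∧ (∀ g ∈ l, IsGen n g) ∧ l.prod = w := by
    intro N ih w hw hN
    by_cases hdesc : ∃ j : ℕ, 1 ≤ j ∧ j < n ∧ w ((j:ℤ)+1) < w (j:ℤ)
    · obtain ⟨j, hj1, hjn, hlt⟩ := hdesc
      have hkey := NB_mul_sgen_gt hj1 hjn hlt
      have hwv : w * sgen j ∈ Wgrp n := Wgrp.mul_sgen hw hj1 hjn
      obtain ⟨l, hlen, hg, hprod⟩ := ih (w * sgen j) hwv (by omega)
      refine ⟨l ++ [sgen j], ?_, ?_, ?_⟩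
      · rw [List.length_append, hlen, List.length_singleton]; omega
      · intro g hg2
        rcases List.mem_append.mp hg2 with h | h
        · exact hg g h
        · rw [List.mem_singleton] at h
          subst h
          exact Or.inl ⟨j, hj1, hjn, rfl⟩
      · rw [List.prod_append, List.prod_singleton, hprod, mul_assoc, sgen_sq j hj1, mul_one]
    · by_cases hneg : w 1 < 0
      · have hn : 1 ≤ n := by
          by_contra hc
          have hn0 : n = 0 := by omega
          have := hw.2 1 (by rw [hn0]; norm_num)
          omega
        have hkey := NB_mul_tgen_neg hw hn hneg
        have hwv : w * tgen 1 ∈ Wgrp n := Wgrp.mul_tgen hw hn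
        obtain ⟨l, hlen, hg, hprod⟩ := ih (w * tgen 1) hwv (by omega)
        refine ⟨l ++ [tgen 1], ?_, ?_, ?_⟩
        · rw [List.length_append, hlen, List.length_singleton]; omega
        · intro g hg2
          rcases List.mem_append.mp hg2 with h | h
          · exact hg g h
          · rw [List.mem_singleton] at h
            subst h
            exact Or.inr rfl
        · rw [List.prod_append, List.prod_singleton, hprod, mul_assoc, tgen_sq, mul_one]
      · push_neg at hdesc
        have h1 : w = 1 := eq_one_of_no_descent hw (fun j hj1 hjn => by
          have := hdesc j hj1 hjn; omega) hneg
        subst h1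
        exact ⟨[], by simp [NB_one], by simp, rfl⟩
  intro N
  induction N with
  | zero =>
    intro w hw hN
    -- handle via key with the impossible-recursion trick: NB w = 0 forces base case
    apply key 0 _ w hw (by omega)
    intro v hv hv0
    -- NB n v ≤ 0 : same argument, but recursion is never needed since any
    -- descent step would make NB ≥ 1.  We inline the base case:
    by_cases hdesc : ∃ j : ℕ, 1 ≤ j ∧ j < n ∧ v ((j:ℤ)+1) < v (j:ℤ)
    · obtain ⟨j, hj1, hjn, hlt⟩ := hdesc
      have hkey := NB_mul_sgen_gt hj1 hjn hlt
      omega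
    · by_cases hneg : v 1 < 0
      · have hn : 1 ≤ n := by
          by_contra hc
          have hn0 : n = 0 := by omega
          have := hv.2 1 (by rw [hn0]; norm_num)
          omega
        have hkey := NB_mul_tgen_neg hv hn hneg
        omega
      · push_neg at hdesc
        have h1 : v = 1 := eq_one_of_no_descent hv (fun j hj1 hjn => by
          have := hdesc j hj1 hjn; omega) hneg
        subst h1
        exact ⟨[], by simp [NB_one], by simp, rfl⟩
  | succ N ih => exact key N ih

lemma NB_le_length {n : ℕ} (hn : 1 ≤ n) :
    ∀ l : List (Equiv.Perm ℤ), (∀ g ∈ l, IsGen n g) →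
      l.prod ∈ Wgrp n ∧ NB n l.prod ≤ l.length := by
  intro l
  induction l using List.reverseRecOn with
  | nil => intro _; simpa [NB_one] using Wgrp.one_mem n
  | append_singleton l g ihl =>
    intro hgen
    have hl : ∀ x ∈ l, IsGen n x := fun x hx => hgen x (List.mem_append.mpr (Or.inl hx))
    obtain ⟨hmem, hle⟩ := ihl hl
    have hgg : IsGen n g := hgen g (by simp)
    rw [List.prod_append, List.prod_singleton, List.length_append, List.length_singleton]
    rcases hgg with ⟨j, hj1, hjn, rfl⟩ | rfl
    · refine ⟨Wgrp.mul_sgen hmem hj1 hjn, ?_⟩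
      rcases lt_trichotomy (l.prod (j:ℤ)) (l.prod ((j:ℤ)+1)) with h | h | h
      · have := NB_mul_sgen_lt hj1 hjn h; omega
      · exfalso
        have := l.prod.injective h
        omega
      · have := NB_mul_sgen_gt hj1 hjn h; omega
    · refine ⟨Wgrp.mul_tgen hmem hn, ?_⟩
      have h1P : (1:ℤ) ∈ PP n := by rw [mem_PP]; exact ⟨le_refl _, by exact_mod_cast hn⟩
      have hne := (Wgrp.abs_bound hmem h1P).1
      rcases lt_trichotomy (l.prod (1:ℤ)) 0 with h | h | h
      · have := NB_mul_tgen_neg hmem hn h; omega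
      · exfalso
        rcases abs_cases (l.prod (1:ℤ)) with ⟨hc, _⟩ | ⟨hc, _⟩ <;> omega
      · have := NB_mul_tgen_pos hmem hn h; omega

lemma lenB_eq_NB {n : ℕ} (hn : 1 ≤ n) {w : Equiv.Perm ℤ} (hw : w ∈ Wgrp n) :
    lenB n w = NB n w := by
  obtain ⟨l, hlen, hg, hprod⟩ := exists_word n (NB n w) w hw le_rfl
  rw [lenB]
  apply le_antisymm
  · exact Nat.sInf_le ⟨l, hlen, fun g hg' => hg g hg', hprod⟩
  · have hne : Set.Nonempty {k | ∃ l : List (Equiv.Perm ℤ), l.length = k ∧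
        (∀ g ∈ l, (∃ j : ℕ, 1 ≤ j ∧ j < n ∧ g = sgen j) ∨ g = tgen 1) ∧ l.prod = w} :=
      ⟨NB n w, l, hlen, fun g hg' => hg g hg', hprod⟩
    obtain ⟨l2, hlen2, hg2, hprod2⟩ := Nat.sInf_mem hne
    have h2 := (NB_le_length hn l2 (fun g hg' => hg2 g hg')).2
    rw [hprod2, hlen2] at h2
    exact h2

lemma descent_iff {n j : ℕ} (hj1 : 1 ≤ j) (hjn : j < n) {w : Equiv.Perm ℤ}
    (hw : w ∈ Wgrp n) :
    (lenB n (w * sgen j) < lenB n w) ↔ w ((j:ℤ)+1) < w (j:ℤ) := by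
  have hn : 1 ≤ n := le_trans hj1 (le_of_lt hjn)
  rw [lenB_eq_NB hn hw, lenB_eq_NB hn (Wgrp.mul_sgen hw hj1 hjn)]
  rcases lt_trichotomy (w (j:ℤ)) (w ((j:ℤ)+1)) with h | h | h
  · have := NB_mul_sgen_lt hj1 hjn h
    constructor <;> intro h2 <;> omega
  · exfalso
    have := w.injective h
    omega
  · have := NB_mul_sgen_gt hj1 hjn h
    constructor <;> intro h2 <;> omega

end TabAux

open TabAux in
/-- If `w` lies in the domain of `T_{αβ}` with `{α,β} = {α_{j+1}, α_{j+2}}`, then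
exactly one of `w s_j`, `w s_{j+1}` lies in `D_{βα}(W_n)`: `T_{αβ}` is
single-valued. -/
theorem Tab_single_valued (n j : ℕ) (hj1 : 1 ≤ j) (hj2 : j + 2 ≤ n)
    (w : Equiv.Perm ℤ) (hw : w ∈ Wgrp n) :
    (Dab n j w → Xor' (Dba n j (w * sgen j)) (Dba n j (w * sgen (j + 1)))) ∧
    (Dba n j w → Xor' (Dab n j (w * sgen j)) (Dab n j (w * sgen (j + 1)))) := by
  have hj1' : 1 ≤ j + 1 := by omega
  have hjn : j < n := by omega
  have hj1n : j + 1 < n := by omega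
  have hjZ : (1:ℤ) ≤ (j:ℤ) := by exact_mod_cast hj1
  have hwa : w * sgen j ∈ Wgrp n := Wgrp.mul_sgen hw hj1 hjn
  have hwb : w * sgen (j + 1) ∈ Wgrp n := Wgrp.mul_sgen hw hj1' hj1n
  -- value computations
  have va0 : (w * sgen j) ((j:ℤ)) = w ((j:ℤ)+1) := by
    rw [Equiv.Perm.mul_apply]; congr 1; rw [sgen_eval j hj1]; split_ifs <;> omega
  have va1 : (w * sgen j) ((j:ℤ)+1) = w ((j:ℤ)) := by
    rw [Equiv.Perm.mul_apply]; congr 1; rw [sgen_eval j hj1]; split_ifs <;> omega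
  have va2 : (w * sgen j) ((j:ℤ)+2) = w ((j:ℤ)+2) := by
    rw [Equiv.Perm.mul_apply]; congr 1; rw [sgen_eval j hj1]; split_ifs <;> omega
  have vb0 : (w * sgen (j+1)) ((j:ℤ)) = w ((j:ℤ)) := by
    rw [Equiv.Perm.mul_apply]; congr 1; rw [sgen_eval (j+1) (by omega)]; split_ifs <;> omega
  have vb1 : (w * sgen (j+1)) ((j:ℤ)+1) = w ((j:ℤ)+2) := by
    rw [Equiv.Perm.mul_apply]; congr 1; rw [sgen_eval (j+1) (by omega)]; split_ifs <;> omega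
  have vb2 : (w * sgen (j+1)) ((j:ℤ)+2) = w ((j:ℤ)+1) := by
    rw [Equiv.Perm.mul_apply]; congr 1; rw [sgen_eval (j+1) (by omega)]; split_ifs <;> omega
  -- descent criteria
  have cast1 : ((j+1:ℕ):ℤ) = (j:ℤ)+1 := by push_cast; ring
  have cast2 : ((j+1:ℕ):ℤ)+1 = (j:ℤ)+2 := by push_cast; ring
  have dj : ∀ v : Equiv.Perm ℤ, v ∈ Wgrp n →
      ((lenB n (v * sgen j) < lenB n v) ↔ v ((j:ℤ)+1) < v ((j:ℤ))) :=
    fun v hv => descent_iff hj1 hjn hv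
  have dj1 : ∀ v : Equiv.Perm ℤ, v ∈ Wgrp n →
      ((lenB n (v * sgen (j+1)) < lenB n v) ↔ v ((j:ℤ)+2) < v ((j:ℤ)+1)) := by
    intro v hv
    have := descent_iff hj1' hj1n hv
    rwa [cast1, show ((j:ℤ)+1)+1 = (j:ℤ)+2 by ring] at this
  -- reduce the four D-statements to order relations
  have hDab : Dab n j w ↔ (¬ (w ((j:ℤ)+1) < w ((j:ℤ))) ∧ w ((j:ℤ)+2) < w ((j:ℤ)+1)) := by
    unfold Dab; rw [dj w hw, dj1 w hw]
  have hDba : Dba n j w ↔ (¬ (w ((j:ℤ)+2) < w ((j:ℤ)+1)) ∧ w ((j:ℤ)+1) < w ((j:ℤ))) := by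
    unfold Dba; rw [dj w hw, dj1 w hw]
  have hBa : Dba n j (w * sgen j) ↔
      (¬ (w ((j:ℤ)+2) < w ((j:ℤ))) ∧ w ((j:ℤ)) < w ((j:ℤ)+1)) := by
    unfold Dba; rw [dj _ hwa, dj1 _ hwa, va0, va1, va2]
  have hBb : Dba n j (w * sgen (j+1)) ↔
      (¬ (w ((j:ℤ)+1) < w ((j:ℤ)+2)) ∧ w ((j:ℤ)+2) < w ((j:ℤ))) := by
    unfold Dba; rw [dj _ hwb, dj1 _ hwb, vb0, vb1, vb2]
  have hAa : Dab n j (w * sgen j) ↔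
      (¬ (w ((j:ℤ)) < w ((j:ℤ)+1)) ∧ w ((j:ℤ)+2) < w ((j:ℤ))) := by
    unfold Dab; rw [dj _ hwa, dj1 _ hwa, va0, va1, va2]
  have hAb : Dab n j (w * sgen (j+1)) ↔
      (¬ (w ((j:ℤ)+2) < w ((j:ℤ))) ∧ w ((j:ℤ)+1) < w ((j:ℤ)+2)) := by
    unfold Dab; rw [dj _ hwb, dj1 _ hwb, vb0, vb1, vb2]
  -- injectivity facts
  have ne_ab : w ((j:ℤ)) ≠ w ((j:ℤ)+1) := by
    intro h; have := w.injective h; omega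
  have ne_ac : w ((j:ℤ)) ≠ w ((j:ℤ)+2) := by
    intro h; have := w.injective h; omega
  have ne_bc : w ((j:ℤ)+1) ≠ w ((j:ℤ)+2) := by
    intro h; have := w.injective h; omega
  rw [hDab, hDba, hBa, hBb, hAa, hAb]
  unfold Xor'
  constructor
  · rintro ⟨h1, h2⟩
    rcases lt_or_gt_of_ne ne_ac with h | h
    · exact Or.inl ⟨⟨by omega, by omega⟩, by omega⟩
    · exact Or.inr ⟨⟨by omega, by omega⟩, by omega⟩
  · rintro ⟨h1, h2⟩
    rcases lt_or_gt_of_ne ne_ac with h | h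
    · exact Or.inr ⟨⟨by omega, by omega⟩, by omega⟩
    · exact Or.inl ⟨⟨by omega, by omega⟩, by omega⟩
end
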